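/- arXiv:1503.08375 — 11 statements merged into one kernel-verified Lean document; each statement's English description precedes it below -/
import Mathlib

section
/- Let U be a 6-dimensional F_p-vector space with basis u₁,...,u₆, and let S² ⊆ Λ²U be the annihilator of the span of f₁ = u₁*∧u₂* + u₃*∧u₄*, f₂ = u₁*∧u₄* + u₂*∧u₅* + u₃*∧u₆*, f₃ = u₃*∧u₅* + u₄*∧u₆* under the non-degenerate pairing Λ²U × Λ²U* → F_p. Then S² is spanned by its decomposable elements, i.e. S² = span{ u∧u' ∈ S² : u, u' ∈ U }. -/
open ExteriorAlgebra

/-- The standard pairing of a `d`-tuple of dual vectors against the exterior algebra: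
on the degree-`d` component it is `w ↦ ⟨⟨w, f₁ ∧ ⋯ ∧ f_d⟩⟩ = det (fᵢ(uⱼ))`, and it
vanishes on the other graded components. -/
noncomputable def pairDual (F U : Type*) [Field F] [AddCommGroup U] [Module F U]
    (d : ℕ) (f : Fin d → Module.Dual F U) : ExteriorAlgebra F U →ₗ[F] F :=
  ExteriorAlgebra.liftAlternating
    (Pi.single d (Matrix.detRowAlternating.compLinearMap (LinearMap.pi f)))

lemma pairDual_ι_mul {F U : Type*} [Field F] [AddCommGroup U] [Module F U]
    (c d : Module.Dual F U) (a b : U) :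
    pairDual F U 2 ![c, d] (ι F a * ι F b) = c a * d b - c b * d a := by
  rw [pairDual, liftAlternating_ι_mul, liftAlternating_ι]
  simp only [Nat.succ_eq_add_one, Pi.single_eq_same, AlternatingMap.curryLeft_apply_apply,
    AlternatingMap.compLinearMap_apply]
  show Matrix.det (Matrix.of fun i => (LinearMap.pi ![c, d]) (Matrix.vecCons a ![b] i)) = _
  rw [Matrix.det_fin_two]
  simp
  ring

set_option maxHeartbeats 4000000 in
theorem aux_span {F U : Type*} [Field F] [AddCommGroup U] [Module F U]
    (h2 : (2:F) ≠ 0) (u : Module.Basis (Fin 6) F U)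
    (φ₁ φ₂ φ₃ : ExteriorAlgebra F U →ₗ[F] F)
    (hφ₁ : φ₁ = pairDual F U 2 ![u.coord 0, u.coord 1] + pairDual F U 2 ![u.coord 2, u.coord 3])
    (hφ₂ : φ₂ = pairDual F U 2 ![u.coord 0, u.coord 3] + pairDual F U 2 ![u.coord 1, u.coord 4]
      + pairDual F U 2 ![u.coord 2, u.coord 5])
    (hφ₃ : φ₃ = pairDual F U 2 ![u.coord 2, u.coord 4] + pairDual F U 2 ![u.coord 3, u.coord 5]) :
    Submodule.span F {x | x ∈ (⋀[F]^2 U ⊓ LinearMap.ker φ₁ ⊓ LinearMap.ker φ₂ ⊓ LinearMap.ker φ₃)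
        ∧ ∃ a b : U, x = ι F a * ι F b} =
      ⋀[F]^2 U ⊓ LinearMap.ker φ₁ ⊓ LinearMap.ker φ₂ ⊓ LinearMap.ker φ₃ := by
  set S : Submodule F (ExteriorAlgebra F U) :=
    ⋀[F]^2 U ⊓ LinearMap.ker φ₁ ⊓ LinearMap.ker φ₂ ⊓ LinearMap.ker φ₃ with hSdef
  set T : Set (ExteriorAlgebra F U) := {x | x ∈ S ∧ ∃ a b : U, x = ι F a * ι F b} with hTdef
  have hrepr : ∀ i j : Fin 6, u.repr (u i) j = if i = j then 1 else 0 := by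
    simp [Module.Basis.repr_self, Finsupp.single_apply]
  have hpd' : ∀ (k l : Fin 6) (a b : U),
      pairDual F U 2 ![u.coord k, u.coord l] (ι F a * ι F b)
        = u.repr a k * u.repr b l - u.repr b k * u.repr a l := by
    intro k l a b; rw [pairDual_ι_mul]; simp [Module.Basis.coord_apply]
  have hv1 : ∀ a b : U, φ₁ (ι F a * ι F b) =
      (u.repr a 0 * u.repr b 1 - u.repr b 0 * u.repr a 1)
      + (u.repr a 2 * u.repr b 3 - u.repr b 2 * u.repr a 3) := by
    intro a b; rw [hφ₁]; simp [hpd']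
  have hv2 : ∀ a b : U, φ₂ (ι F a * ι F b) =
      (u.repr a 0 * u.repr b 3 - u.repr b 0 * u.repr a 3)
      + (u.repr a 1 * u.repr b 4 - u.repr b 1 * u.repr a 4)
      + (u.repr a 2 * u.repr b 5 - u.repr b 2 * u.repr a 5) := by
    intro a b; rw [hφ₂]; simp [hpd']
  have hv3 : ∀ a b : U, φ₃ (ι F a * ι F b) =
      (u.repr a 2 * u.repr b 4 - u.repr b 2 * u.repr a 4)
      + (u.repr a 3 * u.repr b 5 - u.repr b 3 * u.repr a 5) := by
    intro a b; rw [hφ₃]; simp [hpd']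
  have hmem2 : ∀ a b : U, ι F a * ι F b ∈ ⋀[F]^2 U := by
    intro a b
    rw [show ⋀[F]^2 U = LinearMap.range (ι F (M := U)) * LinearMap.range (ι F (M := U)) from
      pow_two _]
    exact Submodule.mul_mem_mul ⟨a, rfl⟩ ⟨b, rfl⟩
  have hT : ∀ a b : U, φ₁ (ι F a * ι F b) = 0 → φ₂ (ι F a * ι F b) = 0 →
      φ₃ (ι F a * ι F b) = 0 → ι F a * ι F b ∈ Submodule.span F T := by
    intro a b h1 h2' h3
    exact Submodule.subset_span ⟨Submodule.mem_inf.mpr ⟨Submodule.mem_inf.mpr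
      ⟨Submodule.mem_inf.mpr ⟨hmem2 a b, LinearMap.mem_ker.mpr h1⟩, LinearMap.mem_ker.mpr h2'⟩,
      LinearMap.mem_ker.mpr h3⟩, a, b, rfl⟩
  have hsw : ∀ a b : U, ι F a * ι F b = -(ι F b * ι F a) :=
    fun a b => eq_neg_of_add_eq_zero_left (ι_add_mul_swap a b)
  -- free decomposable basis elements
  have t02 : ι F (u 0) * ι F (u 2) ∈ Submodule.span F T := by
    refine hT _ _ ?_ ?_ ?_ <;>
    · simp only [hv1, hv2, hv3]
      simp only [map_add, map_sub, map_neg, Finsupp.add_apply, Finsupp.sub_apply,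
        Finsupp.neg_apply, hrepr]
      simp
  have t04 : ι F (u 0) * ι F (u 4) ∈ Submodule.span F T := by
    refine hT _ _ ?_ ?_ ?_ <;>
    · simp only [hv1, hv2, hv3]
      simp only [map_add, map_sub, map_neg, Finsupp.add_apply, Finsupp.sub_apply,
        Finsupp.neg_apply, hrepr]
      simp
  have t05 : ι F (u 0) * ι F (u 5) ∈ Submodule.span F T := by
    refine hT _ _ ?_ ?_ ?_ <;>
    · simp only [hv1, hv2, hv3]
      simp only [map_add, map_sub, map_neg, Finsupp.add_apply, Finsupp.sub_apply,
        Finsupp.neg_apply, hrepr]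
      simp
  have t12 : ι F (u 1) * ι F (u 2) ∈ Submodule.span F T := by
    refine hT _ _ ?_ ?_ ?_ <;>
    · simp only [hv1, hv2, hv3]
      simp only [map_add, map_sub, map_neg, Finsupp.add_apply, Finsupp.sub_apply,
        Finsupp.neg_apply, hrepr]
      simp
  have t13 : ι F (u 1) * ι F (u 3) ∈ Submodule.span F T := by
    refine hT _ _ ?_ ?_ ?_ <;>
    · simp only [hv1, hv2, hv3]
      simp only [map_add, map_sub, map_neg, Finsupp.add_apply, Finsupp.sub_apply,
        Finsupp.neg_apply, hrepr]
      simp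
  have t15 : ι F (u 1) * ι F (u 5) ∈ Submodule.span F T := by
    refine hT _ _ ?_ ?_ ?_ <;>
    · simp only [hv1, hv2, hv3]
      simp only [map_add, map_sub, map_neg, Finsupp.add_apply, Finsupp.sub_apply,
        Finsupp.neg_apply, hrepr]
      simp
  have t34 : ι F (u 3) * ι F (u 4) ∈ Submodule.span F T := by
    refine hT _ _ ?_ ?_ ?_ <;>
    · simp only [hv1, hv2, hv3]
      simp only [map_add, map_sub, map_neg, Finsupp.add_apply, Finsupp.sub_apply,
        Finsupp.neg_apply, hrepr]
      simp
  have t45 : ι F (u 4) * ι F (u 5) ∈ Submodule.span F T := by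
    refine hT _ _ ?_ ?_ ?_ <;>
    · simp only [hv1, hv2, hv3]
      simp only [map_add, map_sub, map_neg, Finsupp.add_apply, Finsupp.sub_apply,
        Finsupp.neg_apply, hrepr]
      simp
  -- the four extra decomposables
  have tg1 : ι F (u 0 + u 3) * ι F (u 1 + u 2) ∈ Submodule.span F T := by
    refine hT _ _ ?_ ?_ ?_ <;>
    · simp only [hv1, hv2, hv3]
      simp only [map_add, map_sub, map_neg, Finsupp.add_apply, Finsupp.sub_apply,
        Finsupp.neg_apply, hrepr]
      simp
  have tg2 : ι F (u 0 - u 1) * ι F (u 3 + u 4) ∈ Submodule.span F T := by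
    refine hT _ _ ?_ ?_ ?_ <;>
    · simp only [hv1, hv2, hv3]
      simp only [map_add, map_sub, map_neg, Finsupp.add_apply, Finsupp.sub_apply,
        Finsupp.neg_apply, hrepr]
      simp
  have tg3 : ι F (u 1 - u 2 + u 3) * ι F (u 4 + u 5) ∈ Submodule.span F T := by
    refine hT _ _ ?_ ?_ ?_ <;>
    · simp only [hv1, hv2, hv3]
      simp only [map_add, map_sub, map_neg, Finsupp.add_apply, Finsupp.sub_apply,
        Finsupp.neg_apply, hrepr]
      simp
  have tg4 : ι F (u 2 + u 3) * ι F (-(u 0) + u 4 - u 5) ∈ Submodule.span F T := by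
    refine hT _ _ ?_ ?_ ?_ <;>
    · simp only [hv1, hv2, hv3]
      simp only [map_add, map_sub, map_neg, Finsupp.add_apply, Finsupp.sub_apply,
        Finsupp.neg_apply, hrepr]
      simp
  -- expansions
  have hg1 : ι F (u 0 + u 3) * ι F (u 1 + u 2)
      = ι F (u 0) * ι F (u 1) + ι F (u 0) * ι F (u 2)
        - ι F (u 1) * ι F (u 3) - ι F (u 2) * ι F (u 3) := by
    simp only [map_add, add_mul, mul_add]
    rw [hsw (u 3) (u 1), hsw (u 3) (u 2)]; abel
  have hg2 : ι F (u 0 - u 1) * ι F (u 3 + u 4)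
      = ι F (u 0) * ι F (u 3) + ι F (u 0) * ι F (u 4)
        - ι F (u 1) * ι F (u 3) - ι F (u 1) * ι F (u 4) := by
    simp only [map_add, map_sub, add_mul, mul_add, sub_mul]
    abel
  have hg3 : ι F (u 1 - u 2 + u 3) * ι F (u 4 + u 5)
      = ι F (u 1) * ι F (u 4) + ι F (u 1) * ι F (u 5)
        - ι F (u 2) * ι F (u 4) - ι F (u 2) * ι F (u 5)
        + ι F (u 3) * ι F (u 4) + ι F (u 3) * ι F (u 5) := by
    simp only [map_add, map_sub, add_mul, mul_add, sub_mul]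
    abel
  have hg4 : ι F (u 2 + u 3) * ι F (-(u 0) + u 4 - u 5)
      = ι F (u 0) * ι F (u 2) + ι F (u 0) * ι F (u 3)
        + ι F (u 2) * ι F (u 4) - ι F (u 2) * ι F (u 5)
        + ι F (u 3) * ι F (u 4) - ι F (u 3) * ι F (u 5) := by
    simp only [map_add, map_sub, map_neg, add_mul, mul_add, sub_mul, mul_sub, mul_neg, neg_mul]
    rw [hsw (u 2) (u 0), hsw (u 3) (u 0)]; abel
  -- derived memberships
  have h23 : ι F (u 2) * ι F (u 3) - ι F (u 0) * ι F (u 1) ∈ Submodule.span F T := by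
    have he : ι F (u 2) * ι F (u 3) - ι F (u 0) * ι F (u 1)
        = -(ι F (u 0 + u 3) * ι F (u 1 + u 2)) + (ι F (u 0) * ι F (u 2)
          - ι F (u 1) * ι F (u 3)) := by rw [hg1]; abel
    rw [he]; exact add_mem (neg_mem tg1) (sub_mem t02 t13)
  have h14 : ι F (u 1) * ι F (u 4) - ι F (u 0) * ι F (u 3) ∈ Submodule.span F T := by
    have he : ι F (u 1) * ι F (u 4) - ι F (u 0) * ι F (u 3)
        = -(ι F (u 0 - u 1) * ι F (u 3 + u 4)) + (ι F (u 0) * ι F (u 4)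
          - ι F (u 1) * ι F (u 3)) := by rw [hg2]; abel
    rw [he]; exact add_mem (neg_mem tg2) (sub_mem t04 t13)
  have h25 : ι F (u 2) * ι F (u 5) - ι F (u 0) * ι F (u 3) ∈ Submodule.span F T := by
    have hc : (ι F (u 0 - u 1) * ι F (u 3 + u 4)) + (ι F (u 1 - u 2 + u 3) * ι F (u 4 + u 5))
        + (ι F (u 2 + u 3) * ι F (-(u 0) + u 4 - u 5))
        - ι F (u 0) * ι F (u 2) - ι F (u 0) * ι F (u 4) + ι F (u 1) * ι F (u 3)
        - ι F (u 1) * ι F (u 5) - (2:F) • (ι F (u 3) * ι F (u 4))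
        ∈ Submodule.span F T := by
      refine sub_mem (sub_mem (add_mem (sub_mem (sub_mem (add_mem (add_mem tg2 tg3) tg4)
        t02) t04) t13) t15) (Submodule.smul_mem _ _ t34)
    have he : (ι F (u 0 - u 1) * ι F (u 3 + u 4)) + (ι F (u 1 - u 2 + u 3) * ι F (u 4 + u 5))
        + (ι F (u 2 + u 3) * ι F (-(u 0) + u 4 - u 5))
        - ι F (u 0) * ι F (u 2) - ι F (u 0) * ι F (u 4) + ι F (u 1) * ι F (u 3)
        - ι F (u 1) * ι F (u 5) - (2:F) • (ι F (u 3) * ι F (u 4))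
        = (2:F) • (ι F (u 0) * ι F (u 3) - ι F (u 2) * ι F (u 5)) := by
      rw [hg2, hg3, hg4]; module
    rw [he] at hc
    have := Submodule.smul_mem _ (-(2:F)⁻¹) hc
    rw [smul_smul, neg_mul, inv_mul_cancel₀ h2, neg_smul, one_smul, neg_sub] at this
    exact this
  have h35 : ι F (u 3) * ι F (u 5) - ι F (u 2) * ι F (u 4) ∈ Submodule.span F T := by
    have he : ι F (u 3) * ι F (u 5) - ι F (u 2) * ι F (u 4)
        = (ι F (u 1 - u 2 + u 3) * ι F (u 4 + u 5))
          - (ι F (u 1) * ι F (u 4) - ι F (u 0) * ι F (u 3))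
          + (ι F (u 2) * ι F (u 5) - ι F (u 0) * ι F (u 3))
          - ι F (u 1) * ι F (u 5) - ι F (u 3) * ι F (u 4) := by
      rw [hg3]; abel
    rw [he]
    exact sub_mem (sub_mem (add_mem (sub_mem tg3 h14) h25) t15) t34
  -- the correction map
  set L : ExteriorAlgebra F U →ₗ[F] ExteriorAlgebra F U :=
    LinearMap.id - φ₁.smulRight (ι F (u 0) * ι F (u 1)) - φ₂.smulRight (ι F (u 0) * ι F (u 3))
      - φ₃.smulRight (ι F (u 2) * ι F (u 4)) with hLdef
  have hL : ∀ x, L x = x - φ₁ x • (ι F (u 0) * ι F (u 1)) - φ₂ x • (ι F (u 0) * ι F (u 3))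
      - φ₃ x • (ι F (u 2) * ι F (u 4)) := by
    intro x; simp [hLdef]
  have key : ∀ i j : Fin 6, L (ι F (u i) * ι F (u j)) ∈ Submodule.span F T := by
    have kd : ∀ i, L (ι F (u i) * ι F (u i)) ∈ Submodule.span F T := by
      intro i; rw [ι_sq_zero, map_zero]; exact zero_mem _
    have ks : ∀ i j : Fin 6, L (ι F (u i) * ι F (u j)) ∈ Submodule.span F T →
        L (ι F (u j) * ι F (u i)) ∈ Submodule.span F T := by
      intro i j h; rw [hsw, map_neg]; exact neg_mem h
    have k01 : L (ι F (u 0) * ι F (u 1)) ∈ Submodule.span F T := by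
      rw [hL, hv1, hv2, hv3]
      simp [hrepr]
      try exact zero_mem _
    have k02 : L (ι F (u 0) * ι F (u 2)) ∈ Submodule.span F T := by
      rw [hL, hv1, hv2, hv3]
      simp [hrepr]
      exact t02
    have k03 : L (ι F (u 0) * ι F (u 3)) ∈ Submodule.span F T := by
      rw [hL, hv1, hv2, hv3]
      simp [hrepr]
      try exact zero_mem _
    have k04 : L (ι F (u 0) * ι F (u 4)) ∈ Submodule.span F T := by
      rw [hL, hv1, hv2, hv3]
      simp [hrepr]
      exact t04
    have k05 : L (ι F (u 0) * ι F (u 5)) ∈ Submodule.span F T := by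
      rw [hL, hv1, hv2, hv3]
      simp [hrepr]
      exact t05
    have k12 : L (ι F (u 1) * ι F (u 2)) ∈ Submodule.span F T := by
      rw [hL, hv1, hv2, hv3]
      simp [hrepr]
      exact t12
    have k13 : L (ι F (u 1) * ι F (u 3)) ∈ Submodule.span F T := by
      rw [hL, hv1, hv2, hv3]
      simp [hrepr]
      exact t13
    have k14 : L (ι F (u 1) * ι F (u 4)) ∈ Submodule.span F T := by
      rw [hL, hv1, hv2, hv3]
      simp [hrepr]
      exact h14
    have k15 : L (ι F (u 1) * ι F (u 5)) ∈ Submodule.span F T := by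
      rw [hL, hv1, hv2, hv3]
      simp [hrepr]
      exact t15
    have k23 : L (ι F (u 2) * ι F (u 3)) ∈ Submodule.span F T := by
      rw [hL, hv1, hv2, hv3]
      simp [hrepr]
      exact h23
    have k24 : L (ι F (u 2) * ι F (u 4)) ∈ Submodule.span F T := by
      rw [hL, hv1, hv2, hv3]
      simp [hrepr]
      try exact zero_mem _
    have k25 : L (ι F (u 2) * ι F (u 5)) ∈ Submodule.span F T := by
      rw [hL, hv1, hv2, hv3]
      simp [hrepr]
      exact h25
    have k34 : L (ι F (u 3) * ι F (u 4)) ∈ Submodule.span F T := by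
      rw [hL, hv1, hv2, hv3]
      simp [hrepr]
      exact t34
    have k35 : L (ι F (u 3) * ι F (u 5)) ∈ Submodule.span F T := by
      rw [hL, hv1, hv2, hv3]
      simp [hrepr]
      exact h35
    have k45 : L (ι F (u 4) * ι F (u 5)) ∈ Submodule.span F T := by
      rw [hL, hv1, hv2, hv3]
      simp [hrepr]
      exact t45
    intro i j
    fin_cases i <;> fin_cases j
    · exact kd _
    · exact k01
    · exact k02
    · exact k03
    · exact k04
    · exact k05
    · exact ks 0 1 k01
    · exact kd _
    · exact k12
    · exact k13
    · exact k14
    · exact k15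
    · exact ks 0 2 k02
    · exact ks 1 2 k12
    · exact kd _
    · exact k23
    · exact k24
    · exact k25
    · exact ks 0 3 k03
    · exact ks 1 3 k13
    · exact ks 2 3 k23
    · exact kd _
    · exact k34
    · exact k35
    · exact ks 0 4 k04
    · exact ks 1 4 k14
    · exact ks 2 4 k24
    · exact ks 3 4 k34
    · exact kd _
    · exact k45
    · exact ks 0 5 k05
    · exact ks 1 5 k15
    · exact ks 2 5 k25
    · exact ks 3 5 k35
    · exact ks 4 5 k45
    · exact kd _
  have hexp : ∀ a b : U, ι F a * ι F b = ∑ i : Fin 6, ∑ j : Fin 6,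
      (u.repr a i * u.repr b j) • (ι F (u i) * ι F (u j)) := by
    intro a b
    conv_lhs => rw [← u.sum_repr a, ← u.sum_repr b]
    rw [map_sum, map_sum, Finset.sum_mul_sum]
    simp only [map_smul, smul_mul_assoc, mul_smul_comm, smul_smul]
    exact Finset.sum_congr rfl fun i _ => Finset.sum_congr rfl fun j _ => by
      rw [mul_comm]
  refine le_antisymm (Submodule.span_le.mpr fun x hx => hx.1) fun x hx => ?_
  have hx' := hx
  rw [hSdef] at hx'
  simp only [Submodule.mem_inf, LinearMap.mem_ker] at hx'
  obtain ⟨⟨⟨hxA, hx1⟩, hx2⟩, hx3⟩ := hx'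
  have hxm : x ∈ LinearMap.range (ι F (M := U)) * LinearMap.range (ι F (M := U)) := by
    rw [← pow_two]; exact hxA
  have hLx : L x ∈ Submodule.span F T := by
    refine Submodule.mul_induction_on hxm ?_ ?_
    · rintro m ⟨a, rfl⟩ n ⟨b, rfl⟩
      rw [hexp a b, map_sum]
      refine Submodule.sum_mem _ fun i _ => ?_
      rw [map_sum]
      refine Submodule.sum_mem _ fun j _ => ?_
      rw [map_smul]
      exact Submodule.smul_mem _ _ (key i j)
    · intro y z hy hz; rw [map_add]; exact add_mem hy hz
  rw [hL, hx1, hx2, hx3, zero_smul, zero_smul, zero_smul, sub_zero, sub_zero, sub_zero] at hLx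
  exact hLx

/-- Let `U` be a 6-dimensional `F_p`-vector space with basis `u₁,…,u₆`, and let
`S² ⊆ Λ²U` be the annihilator of `span{f₁, f₂, f₃}` where `f₁ = u₁*∧u₂* + u₃*∧u₄*`,
`f₂ = u₁*∧u₄* + u₂*∧u₅* + u₃*∧u₆*`, `f₃ = u₃*∧u₅* + u₄*∧u₆*`.  Then `S²` is spanned by
its decomposable elements: `S² = span{ u∧u' ∈ S² : u, u' ∈ U }`. -/
theorem stmt_2 (p : ℕ) [Fact p.Prime] (hp2 : p ≠ 2) (U : Type*) [AddCommGroup U]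
    [Module (ZMod p) U] (u : Module.Basis (Fin 6) (ZMod p) U) :
    let F := ZMod p
    let φ₁ := pairDual F U 2 ![u.coord 0, u.coord 1] + pairDual F U 2 ![u.coord 2, u.coord 3]
    let φ₂ := pairDual F U 2 ![u.coord 0, u.coord 3] + pairDual F U 2 ![u.coord 1, u.coord 4]
      + pairDual F U 2 ![u.coord 2, u.coord 5]
    let φ₃ := pairDual F U 2 ![u.coord 2, u.coord 4] + pairDual F U 2 ![u.coord 3, u.coord 5]
    let S₂ : Submodule F (ExteriorAlgebra F U) :=
      ⋀[F]^2 U ⊓ LinearMap.ker φ₁ ⊓ LinearMap.ker φ₂ ⊓ LinearMap.ker φ₃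
    Submodule.span F {x | x ∈ S₂ ∧ ∃ a b : U, x = ι F a * ι F b} = S₂ := by
  intro F φ₁ φ₂ φ₃ S₂
  have h2 : (2 : ZMod p) ≠ 0 := by
    intro h
    apply hp2
    have hd : p ∣ 2 := (ZMod.natCast_eq_zero_iff 2 p).mp (by exact_mod_cast h)
    exact (Nat.prime_dvd_prime_iff_eq Fact.out Nat.prime_two).mp hd
  exact aux_span h2 u φ₁ φ₂ φ₃ rfl rfl rfl
end

section
/- Let U be a 6-dimensional F_p-vector space with basis u₁,...,u₆, set f₁ = u₁*∧u₂* + u₃*∧u₄*, f₂ = u₁*∧u₄* + u₂*∧u₅* + u₃*∧u₆*, f₃ = u₃*∧u₅* + u₄*∧u₆* in Λ²U*, and let K³ = span{ fᵢ ∧ uⱼ* : 1 ≤ i ≤ 3, 1 ≤ j ≤ 6 } ⊆ Λ³U*. Then dim K³ = 18. -/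
open ExteriorAlgebra

theorem phi_exists (F : Type*) [Field F] (U : Type*) [AddCommGroup U] [Module F U]
    (v : Fin 3 → U) :
    ∃ φ : ExteriorAlgebra F (Module.Dual F U) →ₗ[F] F,
      ∀ a b c : Module.Dual F U,
        φ (ι F a * ι F b * ι F c) =
          (Matrix.of fun i j => (![a, b, c] i) (v j)).det := by
  classical
  let ψ : (Module.Dual F U) [⋀^Fin 3]→ₗ[F] F :=
    (Matrix.detRowAlternating).compLinearMap
      (LinearMap.pi fun j => Module.Dual.eval F U (v j))
  refine ⟨liftAlternating (Pi.single 3 ψ), fun a b c => ?_⟩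
  have h1 : ι F a * ι F b * ι F c = ιMulti F 3 ![a, b, c] := by
    simp [ιMulti_apply, List.ofFn_succ, mul_assoc]
  rw [h1, liftAlternating_apply_ιMulti, Pi.single_eq_same]
  rfl

set_option maxHeartbeats 0 in
set_option synthInstance.maxHeartbeats 1000000 in
/-- Let `U` be a 6-dimensional `F_p`-vector space with basis `u₁,…,u₆`, and in `Λ²U*` set
`f₁ = u₁*∧u₂* + u₃*∧u₄*`, `f₂ = u₁*∧u₄* + u₂*∧u₅* + u₃*∧u₆*`, `f₃ = u₃*∧u₅* + u₄*∧u₆*`.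
Let `K³ = span{ fᵢ ∧ uⱼ* : 1 ≤ i ≤ 3, 1 ≤ j ≤ 6 } ⊆ Λ³U*`.  Then `dim K³ = 18`. -/
theorem stmt_3 (p : ℕ) [Fact p.Prime] (hp2 : p ≠ 2) (U : Type*) [AddCommGroup U]
    [Module (ZMod p) U] (u : Module.Basis (Fin 6) (ZMod p) U) :
    let F := ZMod p
    let ι' : Module.Dual F U → ExteriorAlgebra F (Module.Dual F U) := ι F
    let f : Fin 3 → ExteriorAlgebra F (Module.Dual F U) :=
      ![ι' (u.coord 0) * ι' (u.coord 1) + ι' (u.coord 2) * ι' (u.coord 3),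
        ι' (u.coord 0) * ι' (u.coord 3) + ι' (u.coord 1) * ι' (u.coord 4)
          + ι' (u.coord 2) * ι' (u.coord 5),
        ι' (u.coord 2) * ι' (u.coord 4) + ι' (u.coord 3) * ι' (u.coord 5)]
    let K₃ : Submodule F (ExteriorAlgebra F (Module.Dual F U)) :=
      Submodule.span F {x | ∃ i : Fin 3, ∃ j : Fin 6, x = f i * ι' (u.coord j)}
    Module.finrank F K₃ = 18 := by
  classical
  show Module.finrank (ZMod p) (Submodule.span (ZMod p)
    {x | ∃ i : Fin 3, ∃ j : Fin 6, x =
      (![ι (ZMod p) (u.coord 0) * ι (ZMod p) (u.coord 1) + ι (ZMod p) (u.coord 2) * ι (ZMod p) (u.coord 3),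
        ι (ZMod p) (u.coord 0) * ι (ZMod p) (u.coord 3) + ι (ZMod p) (u.coord 1) * ι (ZMod p) (u.coord 4)
          + ι (ZMod p) (u.coord 2) * ι (ZMod p) (u.coord 5),
        ι (ZMod p) (u.coord 2) * ι (ZMod p) (u.coord 4) + ι (ZMod p) (u.coord 3) * ι (ZMod p) (u.coord 5)] : Fin 3 → ExteriorAlgebra (ZMod p) (Module.Dual (ZMod p) U)) i * ι (ZMod p) (u.coord j)}) = 18
  set g : Fin 3 × Fin 6 → ExteriorAlgebra (ZMod p) (Module.Dual (ZMod p) U) :=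
    fun q =>
      (![ι (ZMod p) (u.coord 0) * ι (ZMod p) (u.coord 1) + ι (ZMod p) (u.coord 2) * ι (ZMod p) (u.coord 3),
        ι (ZMod p) (u.coord 0) * ι (ZMod p) (u.coord 3) + ι (ZMod p) (u.coord 1) * ι (ZMod p) (u.coord 4)
          + ι (ZMod p) (u.coord 2) * ι (ZMod p) (u.coord 5),
        ι (ZMod p) (u.coord 2) * ι (ZMod p) (u.coord 4) + ι (ZMod p) (u.coord 3) * ι (ZMod p) (u.coord 5)] : Fin 3 → ExteriorAlgebra (ZMod p) (Module.Dual (ZMod p) U)) q.1 * ι (ZMod p) (u.coord q.2) with hg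
  have hli : LinearIndependent (ZMod p) g := by
    rw [Fintype.linearIndependent_iff]
    intro c hc
    rw [hg] at hc
    obtain ⟨φ0, hφ0⟩ := phi_exists (ZMod p) U ![u 0, u 1, u 2]
    obtain ⟨φ1, hφ1⟩ := phi_exists (ZMod p) U ![u 0, u 1, u 3]
    obtain ⟨φ2, hφ2⟩ := phi_exists (ZMod p) U ![u 0, u 1, u 4]
    obtain ⟨φ3, hφ3⟩ := phi_exists (ZMod p) U ![u 0, u 1, u 5]
    obtain ⟨φ4, hφ4⟩ := phi_exists (ZMod p) U ![u 0, u 2, u 3]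
    obtain ⟨φ5, hφ5⟩ := phi_exists (ZMod p) U ![u 0, u 2, u 4]
    obtain ⟨φ6, hφ6⟩ := phi_exists (ZMod p) U ![u 0, u 2, u 5]
    obtain ⟨φ7, hφ7⟩ := phi_exists (ZMod p) U ![u 0, u 3, u 4]
    obtain ⟨φ8, hφ8⟩ := phi_exists (ZMod p) U ![u 0, u 3, u 5]
    obtain ⟨φ10, hφ10⟩ := phi_exists (ZMod p) U ![u 1, u 2, u 3]
    obtain ⟨φ11, hφ11⟩ := phi_exists (ZMod p) U ![u 1, u 2, u 4]
    obtain ⟨φ12, hφ12⟩ := phi_exists (ZMod p) U ![u 1, u 2, u 5]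
    obtain ⟨φ13, hφ13⟩ := phi_exists (ZMod p) U ![u 1, u 3, u 4]
    obtain ⟨φ14, hφ14⟩ := phi_exists (ZMod p) U ![u 1, u 3, u 5]
    obtain ⟨φ16, hφ16⟩ := phi_exists (ZMod p) U ![u 2, u 3, u 4]
    obtain ⟨φ17, hφ17⟩ := phi_exists (ZMod p) U ![u 2, u 3, u 5]
    obtain ⟨φ18, hφ18⟩ := phi_exists (ZMod p) U ![u 2, u 4, u 5]
    obtain ⟨φ19, hφ19⟩ := phi_exists (ZMod p) U ![u 3, u 4, u 5]
    have E0 := congrArg φ0 hc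
    simp [map_sum, map_smul, Fintype.sum_prod_type, Fin.sum_univ_three, Fin.sum_univ_six,
      add_mul, hφ0, Matrix.det_fin_three, Module.Basis.coord_apply,
      Module.Basis.repr_self, Finsupp.single_apply, smul_eq_mul, -Prod.mk_zero_zero, -Prod.mk_one_one] at E0
    have E1 := congrArg φ1 hc
    simp [map_sum, map_smul, Fintype.sum_prod_type, Fin.sum_univ_three, Fin.sum_univ_six,
      add_mul, hφ1, Matrix.det_fin_three, Module.Basis.coord_apply,
      Module.Basis.repr_self, Finsupp.single_apply, smul_eq_mul, -Prod.mk_zero_zero, -Prod.mk_one_one] at E1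
    have E2 := congrArg φ2 hc
    simp [map_sum, map_smul, Fintype.sum_prod_type, Fin.sum_univ_three, Fin.sum_univ_six,
      add_mul, hφ2, Matrix.det_fin_three, Module.Basis.coord_apply,
      Module.Basis.repr_self, Finsupp.single_apply, smul_eq_mul, -Prod.mk_zero_zero, -Prod.mk_one_one] at E2
    have E3 := congrArg φ3 hc
    simp [map_sum, map_smul, Fintype.sum_prod_type, Fin.sum_univ_three, Fin.sum_univ_six,
      add_mul, hφ3, Matrix.det_fin_three, Module.Basis.coord_apply,
      Module.Basis.repr_self, Finsupp.single_apply, smul_eq_mul, -Prod.mk_zero_zero, -Prod.mk_one_one] at E3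
    have E4 := congrArg φ4 hc
    simp [map_sum, map_smul, Fintype.sum_prod_type, Fin.sum_univ_three, Fin.sum_univ_six,
      add_mul, hφ4, Matrix.det_fin_three, Module.Basis.coord_apply,
      Module.Basis.repr_self, Finsupp.single_apply, smul_eq_mul, -Prod.mk_zero_zero, -Prod.mk_one_one] at E4
    have E5 := congrArg φ5 hc
    simp [map_sum, map_smul, Fintype.sum_prod_type, Fin.sum_univ_three, Fin.sum_univ_six,
      add_mul, hφ5, Matrix.det_fin_three, Module.Basis.coord_apply,
      Module.Basis.repr_self, Finsupp.single_apply, smul_eq_mul, -Prod.mk_zero_zero, -Prod.mk_one_one] at E5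
    have E6 := congrArg φ6 hc
    simp [map_sum, map_smul, Fintype.sum_prod_type, Fin.sum_univ_three, Fin.sum_univ_six,
      add_mul, hφ6, Matrix.det_fin_three, Module.Basis.coord_apply,
      Module.Basis.repr_self, Finsupp.single_apply, smul_eq_mul, -Prod.mk_zero_zero, -Prod.mk_one_one] at E6
    have E7 := congrArg φ7 hc
    simp [map_sum, map_smul, Fintype.sum_prod_type, Fin.sum_univ_three, Fin.sum_univ_six,
      add_mul, hφ7, Matrix.det_fin_three, Module.Basis.coord_apply,
      Module.Basis.repr_self, Finsupp.single_apply, smul_eq_mul, -Prod.mk_zero_zero, -Prod.mk_one_one] at E7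
    have E8 := congrArg φ8 hc
    simp [map_sum, map_smul, Fintype.sum_prod_type, Fin.sum_univ_three, Fin.sum_univ_six,
      add_mul, hφ8, Matrix.det_fin_three, Module.Basis.coord_apply,
      Module.Basis.repr_self, Finsupp.single_apply, smul_eq_mul, -Prod.mk_zero_zero, -Prod.mk_one_one] at E8
    have E10 := congrArg φ10 hc
    simp [map_sum, map_smul, Fintype.sum_prod_type, Fin.sum_univ_three, Fin.sum_univ_six,
      add_mul, hφ10, Matrix.det_fin_three, Module.Basis.coord_apply,
      Module.Basis.repr_self, Finsupp.single_apply, smul_eq_mul, -Prod.mk_zero_zero, -Prod.mk_one_one] at E10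
    have E11 := congrArg φ11 hc
    simp [map_sum, map_smul, Fintype.sum_prod_type, Fin.sum_univ_three, Fin.sum_univ_six,
      add_mul, hφ11, Matrix.det_fin_three, Module.Basis.coord_apply,
      Module.Basis.repr_self, Finsupp.single_apply, smul_eq_mul, -Prod.mk_zero_zero, -Prod.mk_one_one] at E11
    have E12 := congrArg φ12 hc
    simp [map_sum, map_smul, Fintype.sum_prod_type, Fin.sum_univ_three, Fin.sum_univ_six,
      add_mul, hφ12, Matrix.det_fin_three, Module.Basis.coord_apply,
      Module.Basis.repr_self, Finsupp.single_apply, smul_eq_mul, -Prod.mk_zero_zero, -Prod.mk_one_one] at E12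
    have E13 := congrArg φ13 hc
    simp [map_sum, map_smul, Fintype.sum_prod_type, Fin.sum_univ_three, Fin.sum_univ_six,
      add_mul, hφ13, Matrix.det_fin_three, Module.Basis.coord_apply,
      Module.Basis.repr_self, Finsupp.single_apply, smul_eq_mul, -Prod.mk_zero_zero, -Prod.mk_one_one] at E13
    have E14 := congrArg φ14 hc
    simp [map_sum, map_smul, Fintype.sum_prod_type, Fin.sum_univ_three, Fin.sum_univ_six,
      add_mul, hφ14, Matrix.det_fin_three, Module.Basis.coord_apply,
      Module.Basis.repr_self, Finsupp.single_apply, smul_eq_mul, -Prod.mk_zero_zero, -Prod.mk_one_one] at E14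
    have E16 := congrArg φ16 hc
    simp [map_sum, map_smul, Fintype.sum_prod_type, Fin.sum_univ_three, Fin.sum_univ_six,
      add_mul, hφ16, Matrix.det_fin_three, Module.Basis.coord_apply,
      Module.Basis.repr_self, Finsupp.single_apply, smul_eq_mul, -Prod.mk_zero_zero, -Prod.mk_one_one] at E16
    have E17 := congrArg φ17 hc
    simp [map_sum, map_smul, Fintype.sum_prod_type, Fin.sum_univ_three, Fin.sum_univ_six,
      add_mul, hφ17, Matrix.det_fin_three, Module.Basis.coord_apply,
      Module.Basis.repr_self, Finsupp.single_apply, smul_eq_mul, -Prod.mk_zero_zero, -Prod.mk_one_one] at E17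
    have E18 := congrArg φ18 hc
    simp [map_sum, map_smul, Fintype.sum_prod_type, Fin.sum_univ_three, Fin.sum_univ_six,
      add_mul, hφ18, Matrix.det_fin_three, Module.Basis.coord_apply,
      Module.Basis.repr_self, Finsupp.single_apply, smul_eq_mul, -Prod.mk_zero_zero, -Prod.mk_one_one] at E18
    have E19 := congrArg φ19 hc
    simp [map_sum, map_smul, Fintype.sum_prod_type, Fin.sum_univ_three, Fin.sum_univ_six,
      add_mul, hφ19, Matrix.det_fin_three, Module.Basis.coord_apply,
      Module.Basis.repr_self, Finsupp.single_apply, smul_eq_mul, -Prod.mk_zero_zero, -Prod.mk_one_one] at E19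
    intro q
    fin_cases q
    · show c (0, 0) = 0
      linear_combination E4 - E11 + E14
    · show c (0, 1) = 0
      linear_combination E10
    · show c (0, 2) = 0
      linear_combination E0
    · show c (0, 3) = 0
      linear_combination E1 + E12
    · show c (0, 4) = 0
      linear_combination E2 - E6
    · show c (0, 5) = 0
      linear_combination E3
    · show c (1, 0) = 0
      linear_combination E6
    · show c (1, 1) = 0
      linear_combination E12
    · show c (1, 2) = 0
      linear_combination -E11 + E14
    · show c (1, 3) = 0
      linear_combination E13
    · show c (1, 4) = 0
      linear_combination E7
    · show c (1, 5) = 0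
      linear_combination -E5 + E8
    · show c (2, 0) = 0
      linear_combination E5
    · show c (2, 1) = 0
      linear_combination E14
    · show c (2, 2) = 0
      linear_combination -E3 + E13 + E17
    · show c (2, 3) = 0
      linear_combination E2 - E6 - E16
    · show c (2, 4) = 0
      linear_combination E19
    · show c (2, 5) = 0
      linear_combination E7 + E18
  have hset : ({x | ∃ i : Fin 3, ∃ j : Fin 6, x =
      (![ι (ZMod p) (u.coord 0) * ι (ZMod p) (u.coord 1) + ι (ZMod p) (u.coord 2) * ι (ZMod p) (u.coord 3),
        ι (ZMod p) (u.coord 0) * ι (ZMod p) (u.coord 3) + ι (ZMod p) (u.coord 1) * ι (ZMod p) (u.coord 4)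
          + ι (ZMod p) (u.coord 2) * ι (ZMod p) (u.coord 5),
        ι (ZMod p) (u.coord 2) * ι (ZMod p) (u.coord 4) + ι (ZMod p) (u.coord 3) * ι (ZMod p) (u.coord 5)] : Fin 3 → ExteriorAlgebra (ZMod p) (Module.Dual (ZMod p) U)) i * ι (ZMod p) (u.coord j)}
      : Set (ExteriorAlgebra (ZMod p) (Module.Dual (ZMod p) U))) = Set.range g := by
    ext x
    constructor
    · rintro ⟨i, j, rfl⟩; exact ⟨(i, j), by rw [hg]⟩
    · rintro ⟨⟨i, j⟩, rfl⟩; exact ⟨i, j, by rw [hg]⟩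
  rw [hset, finrank_span_eq_card hli]
  simp
end

section
/- Let U be a 6-dimensional F_p-vector space with basis u₁,...,u₆, let K³ ⊆ Λ³U* be spanned by fᵢ ∧ uⱼ* (1 ≤ i ≤ 3, 1 ≤ j ≤ 6) where f₁ = u₁*∧u₂* + u₃*∧u₄*, f₂ = u₁*∧u₄* + u₂*∧u₅* + u₃*∧u₆*, f₃ = u₃*∧u₅* + u₄*∧u₆*, and let S³ = (K³)^⊥ ⊆ Λ³U under the non-degenerate pairing Λ³U × Λ³U* → F_p. Then S³ is the 2-dimensional space spanned by w₁ = u₁∧u₅∧u₆ and w₂ = u₁∧u₃∧u₅ − u₁∧u₄∧u₆ + u₂∧u₅∧u₆. -/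
set_option maxRecDepth 100000
set_option maxHeartbeats 1000000

open ExteriorAlgebra

namespace Stmt4Aux

def triple : Fin 20 → Fin 3 → Fin 6 :=
  ![![0, 1, 2], ![0, 1, 3], ![0, 1, 4], ![0, 1, 5], ![0, 2, 3], ![0, 2, 4], ![0, 2, 5], ![0, 3, 4], ![0, 3, 5], ![0, 4, 5], ![1, 2, 3], ![1, 2, 4], ![1, 2, 5], ![1, 3, 4], ![1, 3, 5], ![1, 4, 5], ![2, 3, 4], ![2, 3, 5], ![2, 4, 5], ![3, 4, 5]]

def cc1 : Fin 20 → ℤ := ![0, 0, 0, 0, 0, 0, 0, 0, 0, 1, 0, 0, 0, 0, 0, 0, 0, 0, 0, 0]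

def cc2 : Fin 20 → ℤ := ![0, 0, 0, 0, 0, 1, 0, 0, -1, 0, 0, 0, 0, 0, 0, 1, 0, 0, 0, 0]

def Aint : Fin 20 → Fin 3 → Fin 6 → ℤ :=
  ![![![0, 0, 1, 0, 0, 0], ![0, 0, 0, 0, 0, 0], ![0, 0, 0, 0, 0, 0]],
   ![![0, 0, 0, 1, 0, 0], ![0, 0, 0, 0, 0, 0], ![0, 0, 0, 0, 0, 0]],
   ![![0, 0, 0, 0, 1, 0], ![0, 0, 0, 0, 0, 0], ![0, 0, 0, 1, 0, 0]],
   ![![0, 0, 0, 0, 0, 1], ![0, 0, 0, 0, 0, 0], ![0, 0, -1, 0, 0, 0]],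
   ![![1, 0, 0, 0, 0, 0], ![0, 0, 0, 0, 0, 0], ![0, 0, 0, 0, 0, 0]],
   ![![0, 0, 0, 0, 0, 0], ![0, 0, 0, 0, 0, 0], ![0, 0, 0, 0, 0, 0]],
   ![![0, 0, 0, 0, -1, 0], ![1, 0, 0, 0, 0, 0], ![0, 0, 0, -1, 0, 0]],
   ![![0, 0, 0, 0, 0, 0], ![0, 0, 0, 0, 1, 0], ![0, 0, 0, 0, 0, 1]],
   ![![0, 0, 0, 0, 0, 0], ![0, 0, 0, 0, 0, 0], ![1, 0, 0, 0, 0, 0]],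
   ![![0, 0, 0, 0, 0, 0], ![0, 0, 0, 0, 0, 0], ![0, 0, 0, 0, 0, 0]],
   ![![0, 1, 0, 0, 0, 0], ![0, 0, 0, 0, 0, 0], ![0, 0, 0, 0, 0, 0]],
   ![![-1, 0, 0, 0, 0, 0], ![0, 0, -1, 0, 0, 0], ![0, 0, 0, 0, 0, 0]],
   ![![0, 0, 0, 1, 0, 0], ![0, 1, 0, 0, 0, 0], ![0, 0, 0, 0, 0, 0]],
   ![![0, 0, 0, 0, 0, 0], ![0, 0, 0, -1, 0, 0], ![0, 0, -1, 0, 0, 0]],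
   ![![1, 0, 0, 0, 0, 0], ![0, 0, 1, 0, 0, 0], ![0, 1, 0, 0, 0, 0]],
   ![![0, 0, 0, 0, 0, 0], ![0, 0, 0, 0, 0, 1], ![-1, 0, 0, 0, 0, 0]],
   ![![0, 0, 0, 0, 0, 0], ![0, 0, 0, 0, 0, 0], ![0, 0, 0, -1, 0, 0]],
   ![![0, 0, 0, 0, 0, 0], ![0, 0, 0, 0, 0, 0], ![0, 0, 1, 0, 0, 0]],
   ![![0, 0, 0, 0, 0, 0], ![0, 0, 0, 0, 0, 0], ![0, 0, 0, 0, 0, 1]],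
   ![![0, 0, 0, 0, 0, 0], ![0, 0, 0, 0, 0, 0], ![0, 0, 0, 0, -1, 0]]]

def dd (a x : Fin 6) : ℤ := if x = a then 1 else 0

def D (a b c x y z : Fin 6) : ℤ :=
  dd a x * (dd b y * dd c z) - dd a x * (dd c y * dd b z) - dd b x * (dd a y * dd c z)
    + dd b x * (dd c y * dd a z) + dd c x * (dd a y * dd b z) - dd c x * (dd b y * dd a z)

def Mint : Fin 3 → Fin 6 → Fin 20 → ℤ := fun i j s =>
  ![D 0 1 j (triple s 0) (triple s 1) (triple s 2) + D 2 3 j (triple s 0) (triple s 1) (triple s 2),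
    D 0 3 j (triple s 0) (triple s 1) (triple s 2) + D 1 4 j (triple s 0) (triple s 1) (triple s 2)
      + D 2 5 j (triple s 0) (triple s 1) (triple s 2),
    D 2 4 j (triple s 0) (triple s 1) (triple s 2) + D 3 5 j (triple s 0) (triple s 1) (triple s 2)] i

theorem certificate : ∀ s t : Fin 20,
    (∑ i : Fin 3, ∑ j : Fin 6, Aint s i j * Mint i j t)
      = (if s = t then 1 else 0) - cc1 s * (if t = 9 then 1 else 0)
        - cc2 s * (if t = 5 then 1 else 0) := by decide

theorem sorting : ∀ r : Fin 3 → Fin 6, Function.Injective r →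
    ∃ s : Fin 20, ∃ σ : Equiv.Perm (Fin 3), ∀ i, r (σ i) = triple s i := by decide

section

variable {p : ℕ} [Fact p.Prime] {U : Type*} [AddCommGroup U] [Module (ZMod p) U]
  (u : Module.Basis (Fin 6) (ZMod p) U)

lemma ιMulti_three (v : Fin 3 → U) :
    ιMulti (ZMod p) 3 v = ι (ZMod p) (v 0) * ι (ZMod p) (v 1) * ι (ZMod p) (v 2) := by
  rw [ιMulti_apply]
  simp [List.ofFn_succ, mul_assoc]

lemma pair_eval (a b c x y z : Fin 6) :
    pairDual (ZMod p) U 3 ![u.coord a, u.coord b, u.coord c]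
      (ι (ZMod p) (u x) * ι (ZMod p) (u y) * ι (ZMod p) (u z))
      = ((D a b c x y z : ℤ) : ZMod p) := by
  have h3 := ιMulti_three (p := p) ![u x, u y, u z]
  simp only [Matrix.cons_val_zero, Matrix.cons_val_one, Matrix.head_cons,
    Matrix.cons_val_two, Matrix.tail_cons, Matrix.head_fin_const] at h3
  rw [← h3]
  rw [pairDual, liftAlternating_apply_ιMulti, Pi.single_eq_same,
    AlternatingMap.compLinearMap_apply]
  show Matrix.det (Matrix.of fun i =>
    (LinearMap.pi ![u.coord a, u.coord b, u.coord c]) (![u x, u y, u z] i)) = _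
  rw [Matrix.det_fin_three]
  simp only [Matrix.of_apply, LinearMap.pi_apply, Matrix.cons_val_zero, Matrix.cons_val_one,
    Matrix.head_cons, Matrix.cons_val_two, Matrix.tail_cons, Module.Basis.coord_apply,
    Module.Basis.repr_self, Finsupp.single_apply]
  simp only [D, dd]
  push_cast [apply_ite (fun (n : ℤ) => (n : ZMod p))]
  ring

/-- The 20 standard generators of `⋀³ U`. -/
noncomputable def Bgen : Fin 20 → ExteriorAlgebra (ZMod p) U := fun s =>
  ιMulti (ZMod p) 3 fun i => u (triple s i)

lemma Bgen_eq (s : Fin 20) :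
    Bgen u s = ι (ZMod p) (u (triple s 0)) * ι (ZMod p) (u (triple s 1))
      * ι (ZMod p) (u (triple s 2)) :=
  ιMulti_three _

lemma Bgen_mem (s : Fin 20) : Bgen u s ∈ ⋀[ZMod p]^3 U :=
  ExteriorAlgebra.ιMulti_range (ZMod p) 3 ⟨_, rfl⟩

lemma mem_span_Bgen (r : Fin 3 → Fin 6) :
    ιMulti (ZMod p) 3 (fun i => u (r i)) ∈ Submodule.span (ZMod p) (Set.range (Bgen u)) := by
  by_cases hr : Function.Injective r
  · obtain ⟨s, σ, hσ⟩ := sorting r hr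
    have hcomp : (fun i => u (r i)) ∘ σ = fun i => u (triple s i) := by
      funext i; simp [hσ i]
    have hperm := AlternatingMap.map_perm (ιMulti (ZMod p) 3) (fun i => u (r i)) σ
    rw [hcomp] at hperm
    have hB : Bgen u s = ((Equiv.Perm.sign σ : ℤˣ) : ℤ) • ιMulti (ZMod p) 3 (fun i => u (r i)) := by
      rw [Bgen, hperm, Units.smul_def]
    rcases Int.units_eq_one_or (Equiv.Perm.sign σ) with h | h <;> rw [h] at hB
    · simp only [Units.val_one, one_smul] at hB
      rw [← hB]; exact Submodule.subset_span ⟨s, rfl⟩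
    · simp only [Units.val_neg, Units.val_one, neg_smul, one_smul] at hB
      have : ιMulti (ZMod p) 3 (fun i => u (r i)) = -Bgen u s := by rw [hB, neg_neg]
      rw [this]
      exact Submodule.neg_mem _ (Submodule.subset_span ⟨s, rfl⟩)
  · rw [AlternatingMap.map_eq_zero_of_not_injective]
    · exact Submodule.zero_mem _
    · intro hinj
      exact hr fun a b hab => hinj (congrArg u hab)

lemma span_Bgen : (⋀[ZMod p]^3 U : Submodule (ZMod p) (ExteriorAlgebra (ZMod p) U))
    ≤ Submodule.span (ZMod p) (Set.range (Bgen u)) := by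
  rw [← ExteriorAlgebra.ιMulti_span_fixedDegree]
  rw [Submodule.span_le]
  rintro _ ⟨v, rfl⟩
  have hv : v = fun i => ∑ j : Fin 6, u.repr (v i) j • u j := by
    funext i; exact (u.sum_repr (v i)).symm
  rw [hv, show (ιMulti (ZMod p) 3 : AlternatingMap (ZMod p) U (ExteriorAlgebra (ZMod p) U) (Fin 3))
      (fun i => ∑ j : Fin 6, u.repr (v i) j • u j)
      = ((ιMulti (ZMod p) 3).toMultilinearMap) (fun i => ∑ j : Fin 6, u.repr (v i) j • u j)
      from rfl,
    MultilinearMap.map_sum]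
  refine Submodule.sum_mem _ fun r _ => ?_
  have : ((ιMulti (ZMod p) 3).toMultilinearMap) (fun i => u.repr (v i) (r i) • u (r i))
      = (∏ i : Fin 3, u.repr (v i) (r i)) • (ιMulti (ZMod p) 3) (fun i => u (r i)) :=
    MultilinearMap.map_smul_univ _ _ _
  rw [this]
  exact Submodule.smul_mem _ _ (mem_span_Bgen u r)

end

end Stmt4Aux

open Stmt4Aux

/-- With `f₁ = u₁*∧u₂* + u₃*∧u₄*`, `f₂ = u₁*∧u₄* + u₂*∧u₅* + u₃*∧u₆*`,
`f₃ = u₃*∧u₅* + u₄*∧u₆*` and `K³ = span{fᵢ∧uⱼ*} ⊆ Λ³U*`, the annihilator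
`S³ = (K³)^⊥ ⊆ Λ³U` (the common kernel in `Λ³U` of the functionals `⟨⟨·, fᵢ∧uⱼ*⟩⟩`)
is the 2-dimensional space spanned by `w₁ = u₁∧u₅∧u₆` and
`w₂ = u₁∧u₃∧u₅ − u₁∧u₄∧u₆ + u₂∧u₅∧u₆`. -/
theorem stmt_4 (p : ℕ) [Fact p.Prime] (hp2 : p ≠ 2) (U : Type*) [AddCommGroup U]
    [Module (ZMod p) U] (u : Module.Basis (Fin 6) (ZMod p) U) :
    let F := ZMod p
    let φ : Fin 3 → Fin 6 → (ExteriorAlgebra F U →ₗ[F] F) := fun i j =>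
      ![pairDual F U 3 ![u.coord 0, u.coord 1, u.coord j]
          + pairDual F U 3 ![u.coord 2, u.coord 3, u.coord j],
        pairDual F U 3 ![u.coord 0, u.coord 3, u.coord j]
          + pairDual F U 3 ![u.coord 1, u.coord 4, u.coord j]
          + pairDual F U 3 ![u.coord 2, u.coord 5, u.coord j],
        pairDual F U 3 ![u.coord 2, u.coord 4, u.coord j]
          + pairDual F U 3 ![u.coord 3, u.coord 5, u.coord j]] i
    let S₃ : Submodule F (ExteriorAlgebra F U) :=
      ⋀[F]^3 U ⊓ ⨅ i : Fin 3, ⨅ j : Fin 6, LinearMap.ker (φ i j)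
    let e : Fin 6 → ExteriorAlgebra F U := fun i => ι F (u i)
    let w₁ := e 0 * e 4 * e 5
    let w₂ := e 0 * e 2 * e 4 - e 0 * e 3 * e 5 + e 1 * e 4 * e 5
    S₃ = Submodule.span F {w₁, w₂} ∧ Module.finrank F S₃ = 2 := by
  intro F φ S₃ e w₁ w₂
  -- evaluation of the functionals on the generators
  have hφB : ∀ (i : Fin 3) (j : Fin 6) (s : Fin 20),
      φ i j (Bgen u s) = ((Mint i j s : ℤ) : F) := by
    intro i j s
    have hi : ∀ k : Fin 3, k = 0 ∨ k = 1 ∨ k = 2 := by decide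
    rcases hi i with rfl | rfl | rfl <;>
      simp only [φ, F, Mint, Bgen_eq, Matrix.cons_val_zero,
        Matrix.cons_val_one, Matrix.head_cons, Matrix.cons_val_two, Matrix.tail_cons,
        LinearMap.add_apply, pair_eval] <;> push_cast <;> ring
  have hw1 : w₁ = Bgen u 9 := by
    have h0 : triple 9 0 = 0 := by decide
    have h1 : triple 9 1 = 4 := by decide
    have h2 : triple 9 2 = 5 := by decide
    rw [Bgen_eq, h0, h1, h2]
  have hw2 : w₂ = Bgen u 5 - Bgen u 8 + Bgen u 15 := by
    have e5 : Bgen u 5 = e 0 * e 2 * e 4 := by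
      rw [Bgen_eq, show triple 5 0 = 0 from by decide, show triple 5 1 = 2 from by decide,
        show triple 5 2 = 4 from by decide]
    have e8 : Bgen u 8 = e 0 * e 3 * e 5 := by
      rw [Bgen_eq, show triple 8 0 = 0 from by decide, show triple 8 1 = 3 from by decide,
        show triple 8 2 = 5 from by decide]
    have e15 : Bgen u 15 = e 1 * e 4 * e 5 := by
      rw [Bgen_eq, show triple 15 0 = 1 from by decide, show triple 15 1 = 4 from by decide,
        show triple 15 2 = 5 from by decide]
    rw [e5, e8, e15]
  have hmain : S₃ = Submodule.span F {w₁, w₂} := by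
    apply le_antisymm
    · -- S₃ ≤ span
      intro x hx
      rw [Submodule.mem_inf] at hx
      obtain ⟨h3, hk⟩ := hx
      simp only [Submodule.mem_iInf, LinearMap.mem_ker] at hk
      obtain ⟨c, hc⟩ := (Submodule.mem_span_range_iff_exists_fun F).1 (span_Bgen u h3)
      have hM : ∀ (i : Fin 3) (j : Fin 6), ∑ t : Fin 20, c t * ((Mint i j t : ℤ) : F) = 0 := by
        intro i j
        have h := hk i j
        rw [← hc, map_sum] at h
        simpa [hφB, smul_eq_mul] using h
      have key : ∀ s : Fin 20, c s = ((cc1 s : ℤ) : F) * c 9 + ((cc2 s : ℤ) : F) * c 5 := by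
        intro s
        have main : ∑ t : Fin 20, c t * ((∑ i : Fin 3, ∑ j : Fin 6,
            Aint s i j * Mint i j t : ℤ) : F) = 0 := by
          have step : ∀ t : Fin 20, c t * ((∑ i : Fin 3, ∑ j : Fin 6,
              Aint s i j * Mint i j t : ℤ) : F)
              = ∑ i : Fin 3, ∑ j : Fin 6,
                  ((Aint s i j : ℤ) : F) * (c t * ((Mint i j t : ℤ) : F)) := by
            intro t
            push_cast [F, Finset.mul_sum]
            exact Finset.sum_congr rfl fun i _ => Finset.sum_congr rfl fun j _ => by ring
          rw [Finset.sum_congr rfl fun t _ => step t, Finset.sum_comm]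
          refine Finset.sum_eq_zero fun i _ => ?_
          rw [Finset.sum_comm]
          refine Finset.sum_eq_zero fun j _ => ?_
          rw [← Finset.mul_sum, hM i j, mul_zero]
        have cert : ∀ t : Fin 20, ((∑ i : Fin 3, ∑ j : Fin 6,
            Aint s i j * Mint i j t : ℤ) : F)
            = (if s = t then (1 : F) else 0)
              - ((cc1 s : ℤ) : F) * (if t = 9 then (1 : F) else 0)
              - ((cc2 s : ℤ) : F) * (if t = 5 then (1 : F) else 0) := by
          intro t
          rw [certificate s t]
          push_cast [F, apply_ite (fun (n : ℤ) => (n : F))]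
          ring
        rw [Finset.sum_congr rfl fun t _ => by rw [cert t]] at main
        simp only [mul_sub, Finset.sum_sub_distrib, mul_ite, mul_one, mul_zero,
          Finset.sum_ite_eq, Finset.sum_ite_eq', Finset.mem_univ, if_true] at main
        linear_combination main
      have wsum1 : ∑ s : Fin 20, ((cc1 s : ℤ) : F) • Bgen u s = Bgen u 9 := by
        have hz : ∀ s : Fin 20, s ∉ ({9} : Finset (Fin 20)) → cc1 s = 0 := by decide
        rw [← Finset.sum_subset (Finset.subset_univ ({9} : Finset (Fin 20)))
          (fun s _ hs => by rw [hz s hs]; simp)]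
        rw [Finset.sum_singleton, show cc1 9 = 1 from by decide]
        simp
      have wsum2 : ∑ s : Fin 20, ((cc2 s : ℤ) : F) • Bgen u s
          = Bgen u 5 - Bgen u 8 + Bgen u 15 := by
        have hz : ∀ s : Fin 20, s ∉ ({5, 8, 15} : Finset (Fin 20)) → cc2 s = 0 := by decide
        rw [← Finset.sum_subset (Finset.subset_univ ({5, 8, 15} : Finset (Fin 20)))
          (fun s _ hs => by rw [hz s hs]; simp)]
        rw [show ({5, 8, 15} : Finset (Fin 20)) = {5} ∪ {8} ∪ {15} from by decide,
          Finset.sum_union (by decide), Finset.sum_union (by decide),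
          Finset.sum_singleton, Finset.sum_singleton, Finset.sum_singleton,
          show cc2 5 = 1 from by decide, show cc2 8 = -1 from by decide,
          show cc2 15 = 1 from by decide]
        push_cast
        module
      have hx : x = c 9 • w₁ + c 5 • w₂ := by
        rw [← hc, hw1, hw2, ← wsum1, ← wsum2, Finset.smul_sum, Finset.smul_sum,
          ← Finset.sum_add_distrib]
        refine Finset.sum_congr rfl fun s _ => ?_
        rw [key s, add_smul, smul_smul, smul_smul, mul_comm (c 9), mul_comm (c 5)]
      rw [hx]
      exact Submodule.add_mem _
        (Submodule.smul_mem _ _ (Submodule.subset_span (Set.mem_insert _ _)))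
        (Submodule.smul_mem _ _ (Submodule.subset_span (Set.mem_insert_of_mem _ rfl)))
    · -- span ≤ S₃
      rw [Submodule.span_le]
      intro y hy
      simp only [Set.mem_insert_iff, Set.mem_singleton_iff] at hy
      rcases hy with rfl | rfl
      all_goals rw [SetLike.mem_coe, Submodule.mem_inf]
      · constructor
        · rw [hw1]; exact Bgen_mem u 9
        · simp only [Submodule.mem_iInf, LinearMap.mem_ker]
          intro i j
          rw [hw1, hφB]
          rw [show Mint i j 9 = 0 from by revert i j; decide]
          exact Int.cast_zero
      · constructor
        · rw [hw2]
          exact Submodule.add_mem _ (Submodule.sub_mem _ (Bgen_mem u 5) (Bgen_mem u 8))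
            (Bgen_mem u 15)
        · simp only [Submodule.mem_iInf, LinearMap.mem_ker]
          intro i j
          rw [hw2, map_add, map_sub, hφB, hφB, hφB]
          have hzero : ∀ (i : Fin 3) (j : Fin 6),
              Mint i j 5 - Mint i j 8 + Mint i j 15 = 0 := by decide
          have h0 := congrArg (fun n : ℤ => (n : F)) (hzero i j)
          push_cast at h0
          exact h0
  refine ⟨hmain, ?_⟩
  have hA1 : pairDual (ZMod p) U 3 ![u.coord 0, u.coord 4, u.coord 5] w₁ = 1 := by
    simp only [w₁, e, F]
    rw [pair_eval]
    rw [show D 0 4 5 0 4 5 = 1 from by decide]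
    exact Int.cast_one
  have hA2 : pairDual (ZMod p) U 3 ![u.coord 0, u.coord 4, u.coord 5] w₂ = 0 := by
    simp only [w₂, e, F]
    rw [map_add, map_sub, pair_eval, pair_eval, pair_eval,
      show D 0 4 5 0 2 4 = 0 from by decide, show D 0 4 5 0 3 5 = 0 from by decide,
      show D 0 4 5 1 4 5 = 0 from by decide]
    simp
  have hB2 : pairDual (ZMod p) U 3 ![u.coord 0, u.coord 2, u.coord 4] w₂ = 1 := by
    simp only [w₂, e, F]
    rw [map_add, map_sub, pair_eval, pair_eval, pair_eval,
      show D 0 2 4 0 2 4 = 1 from by decide, show D 0 2 4 0 3 5 = 0 from by decide,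
      show D 0 2 4 1 4 5 = 0 from by decide]
    simp
  have hw2ne : w₂ ≠ 0 := fun h => one_ne_zero (α := F) (by rw [← hB2, h, map_zero])
  have hli : LinearIndependent F ![w₁, w₂] := by
    rw [linearIndependent_fin2]
    constructor
    · simpa only [Matrix.cons_val_one, Matrix.head_cons, Matrix.cons_val_zero] using hw2ne
    · intro a h
      simp only [Matrix.cons_val_one, Matrix.head_cons, Matrix.cons_val_zero] at h
      have h' := congrArg (pairDual (ZMod p) U 3 ![u.coord 0, u.coord 4, u.coord 5]) h
      rw [map_smul, hA2, smul_zero, hA1] at h'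
      exact one_ne_zero (α := F) h'.symm
  have hr : Set.range ![w₁, w₂] = ({w₁, w₂} : Set (ExteriorAlgebra F U)) := by
    ext y
    simp only [Set.mem_range, Fin.exists_fin_two, Matrix.cons_val_zero, Matrix.cons_val_one,
      Matrix.head_cons, Set.mem_insert_iff, Set.mem_singleton_iff]
    tauto
  rw [hmain, ← hr, finrank_span_eq_card hli, Fintype.card_fin]
end

section
/- Let U be a 6-dimensional F_p-vector space with basis u₁,...,u₆, and let S³ ⊆ Λ³U be the span of w₁ = u₁∧u₅∧u₆ and w₂ = u₁∧u₃∧u₅ − u₁∧u₄∧u₆ + u₂∧u₅∧u₆. Then the subspace of S³ spanned by elements of S³ of the form u'∧u (u' ∈ Λ²U, u ∈ U) equals span{w₁}; in particular, it is a proper 1-codimensional subspace of S³. -/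
open ExteriorAlgebra
set_option maxHeartbeats 1000000

open Finset Function in
private theorem stmt5_det4 {R : Type*} [CommRing R] (M : Matrix (Fin 4) (Fin 4) R) : M.det =
    M 0 0*M 1 1*M 2 2*M 3 3 - M 0 0*M 1 1*M 2 3*M 3 2 - M 0 0*M 1 2*M 2 1*M 3 3 + M 0 0*M 1 2*M 2 3*M 3 1 + M 0 0*M 1 3*M 2 1*M 3 2 - M 0 0*M 1 3*M 2 2*M 3 1 - M 0 1*M 1 0*M 2 2*M 3 3 + M 0 1*M 1 0*M 2 3*M 3 2 + M 0 1*M 1 2*M 2 0*M 3 3 - M 0 1*M 1 2*M 2 3*M 3 0 - M 0 1*M 1 3*M 2 0*M 3 2 + M 0 1*M 1 3*M 2 2*M 3 0 + M 0 2*M 1 0*M 2 1*M 3 3 - M 0 2*M 1 0*M 2 3*M 3 1 - M 0 2*M 1 1*M 2 0*M 3 3 + M 0 2*M 1 1*M 2 3*M 3 0 + M 0 2*M 1 3*M 2 0*M 3 1 - M 0 2*M 1 3*M 2 1*M 3 0 - M 0 3*M 1 0*M 2 1*M 3 2 + M 0 3*M 1 0*M 2 2*M 3 1 + M 0 3*M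 1 1*M 2 0*M 3 2 - M 0 3*M 1 1*M 2 2*M 3 0 - M 0 3*M 1 2*M 2 0*M 3 1 + M 0 3*M 1 2*M 2 1*M 3 0 := by
  rw [Matrix.det_succ_row_zero]
  simp only [Fin.sum_univ_succ, Fin.sum_univ_zero, Matrix.det_fin_three,
    Matrix.submatrix_apply, Fin.succ_zero_eq_one, Fin.succ_one_eq_two,
    Fin.zero_succAbove, Fin.succ_succAbove_zero, Fin.succ_succAbove_one,
    Fin.val_zero, Fin.val_succ, Fin.val_eq_zero, pow_succ, pow_zero]
  norm_num
  have h1 : (Fin.succ 2 : Fin 4) = 3 := rfl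
  have h2 : ((2 : Fin 4).succAbove 2 : Fin 4) = 3 := rfl
  have h3 : ((1 : Fin 4).succAbove 2 : Fin 4) = 3 := rfl
  have h4 : (Fin.castSucc (2 : Fin 3) : Fin 4) = 2 := rfl
  have h5 : ((3 : Fin 4).succAbove 2 : Fin 4) = 2 := rfl
  simp only [h1, h2, h3, h4, h5]
  ring

section Aux

variable (p : ℕ) [Fact p.Prime] (U : Type*) [AddCommGroup U]
    [Module (ZMod p) U] (u : Module.Basis (Fin 6) (ZMod p) U)

set_option linter.unusedSectionVars false

/-- The alternating map picking out the coordinates `s` of the arguments. -/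
private noncomputable def coordAlt (n : ℕ) (s : Fin n → Fin 6) :
    U [⋀^Fin n]→ₗ[ZMod p] ZMod p :=
  ((Pi.basisFun (ZMod p) (Fin n)).det).compLinearMap
    (LinearMap.pi fun m => u.coord (s m))

private theorem coordAlt_apply (n : ℕ) (s : Fin n → Fin 6) (v : Fin n → U) :
    coordAlt p U u n s v = Matrix.det (Matrix.of fun i m => u.repr (v i) (s m)) := by
  simp [coordAlt, Module.Basis.det_apply, Module.Basis.toMatrix, Matrix.det]
  rfl

private noncomputable def fam (n : ℕ) (s : Fin n → Fin 6) :
    ∀ i, U [⋀^Fin i]→ₗ[ZMod p] ZMod p :=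
  fun i => if h : i = n then h ▸ coordAlt p U u n s else 0

private theorem fam_self (n : ℕ) (s : Fin n → Fin 6) :
    fam p U u n s n = coordAlt p U u n s := by
  simp [fam]

/-- Linear functional on the exterior algebra extracting a degree-`n` coordinate. -/
private noncomputable def φ (n : ℕ) (s : Fin n → Fin 6) :
    ExteriorAlgebra (ZMod p) U →ₗ[ZMod p] ZMod p :=
  liftAlternating (fam p U u n s)

private theorem prod4 (a b c d : U) :
    ι (ZMod p) a * ι (ZMod p) b * ι (ZMod p) c * ι (ZMod p) d
      = ιMulti (ZMod p) 4 ![a, b, c, d] := by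
  simp [ιMulti_apply, List.ofFn_succ, mul_assoc]

private theorem prod3 (a b c : U) :
    ι (ZMod p) a * ι (ZMod p) b * ι (ZMod p) c = ιMulti (ZMod p) 3 ![a, b, c] := by
  simp [ιMulti_apply, List.ofFn_succ, mul_assoc]

private theorem φ4 (s : Fin 4 → Fin 6) (v : Fin 4 → U) :
    φ p U u 4 s (ιMulti (ZMod p) 4 v) = Matrix.det (Matrix.of fun i m => u.repr (v i) (s m)) := by
  rw [φ, liftAlternating_apply_ιMulti, fam_self, coordAlt_apply]

private theorem φ3 (s : Fin 3 → Fin 6) (v : Fin 3 → U) :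
    φ p U u 3 s (ιMulti (ZMod p) 3 v) = Matrix.det (Matrix.of fun i m => u.repr (v i) (s m)) := by
  rw [φ, liftAlternating_apply_ιMulti, fam_self, coordAlt_apply]

private noncomputable def W₁ : ExteriorAlgebra (ZMod p) U :=
  ι (ZMod p) (u 0) * ι (ZMod p) (u 4) * ι (ZMod p) (u 5)

private noncomputable def W₂ : ExteriorAlgebra (ZMod p) U :=
  ι (ZMod p) (u 0) * ι (ZMod p) (u 2) * ι (ZMod p) (u 4)
  - ι (ZMod p) (u 0) * ι (ZMod p) (u 3) * ι (ZMod p) (u 5)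
  + ι (ZMod p) (u 1) * ι (ZMod p) (u 4) * ι (ZMod p) (u 5)

private theorem φW₁ (v : U) (s : Fin 4 → Fin 6) :
    φ p U u 4 s (W₁ p U u * ι (ZMod p) v) =
      Matrix.det (Matrix.of fun i m => u.repr (![u 0, u 4, u 5, v] i) (s m)) := by
  rw [W₁, prod4, φ4]

private theorem φW₂ (v : U) (s : Fin 4 → Fin 6) :
    φ p U u 4 s (W₂ p U u * ι (ZMod p) v) =
        Matrix.det (Matrix.of fun i m => u.repr (![u 0, u 2, u 4, v] i) (s m))
      - Matrix.det (Matrix.of fun i m => u.repr (![u 0, u 3, u 5, v] i) (s m))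
      + Matrix.det (Matrix.of fun i m => u.repr (![u 1, u 4, u 5, v] i) (s m)) := by
  rw [W₂, add_mul, sub_mul, prod4, prod4, prod4, map_add, map_sub, φ4, φ4, φ4]

private theorem ψ₁W₁ : φ p U u 3 ![0, 4, 5] (W₁ p U u) = 1 := by
  rw [W₁, prod3, φ3]
  simp [Matrix.det_fin_three, Module.Basis.repr_self, Finsupp.single_apply]

private theorem ψ₁W₂ : φ p U u 3 ![0, 4, 5] (W₂ p U u) = 0 := by
  rw [W₂, prod3, prod3, prod3, map_add, map_sub, φ3, φ3, φ3]
  simp [Matrix.det_fin_three, Module.Basis.repr_self, Finsupp.single_apply]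

private theorem ψ₂W₁ : φ p U u 3 ![0, 2, 4] (W₁ p U u) = 0 := by
  rw [W₁, prod3, φ3]
  simp [Matrix.det_fin_three, Module.Basis.repr_self, Finsupp.single_apply]

private theorem ψ₂W₂ : φ p U u 3 ![0, 2, 4] (W₂ p U u) = 1 := by
  rw [W₂, prod3, prod3, prod3, map_add, map_sub, φ3, φ3, φ3]
  simp [Matrix.det_fin_three, Module.Basis.repr_self, Finsupp.single_apply]

/-- The key computation: if `(a•W₁ + b•W₂) * ι v = 0` and `b ≠ 0` then `v = 0`. -/
private theorem key (a b : ZMod p) (v : U)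
    (h : (a • W₁ p U u + b • W₂ p U u) * ι (ZMod p) v = 0) (hb : b ≠ 0) : v = 0 := by
  have key : ∀ s : Fin 4 → Fin 6,
      a * φ p U u 4 s (W₁ p U u * ι (ZMod p) v)
        + b * φ p U u 4 s (W₂ p U u * ι (ZMod p) v) = 0 := by
    intro s
    have := congrArg (φ p U u 4 s) h
    rwa [add_mul, smul_mul_assoc, smul_mul_assoc, map_add, map_smul, map_smul,
      smul_eq_mul, smul_eq_mul, map_zero] at this
  have e1 := key ![0, 1, 2, 4]
  have e2 := key ![0, 2, 3, 4]
  have e3 := key ![0, 2, 3, 5]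
  have e4 := key ![0, 1, 4, 5]
  have e5 := key ![0, 2, 4, 5]
  have e6 := key ![0, 3, 4, 5]
  rw [φW₁, φW₂] at e1 e2 e3 e4 e5 e6
  simp only [stmt5_det4] at e1 e2 e3 e4 e5 e6
  simp [Module.Basis.repr_self, Finsupp.single_apply] at e1
  simp [Module.Basis.repr_self, Finsupp.single_apply] at e2
  simp [Module.Basis.repr_self, Finsupp.single_apply] at e3
  simp [Module.Basis.repr_self, Finsupp.single_apply] at e4
  simp [Module.Basis.repr_self, Finsupp.single_apply] at e5
  simp [Module.Basis.repr_self, Finsupp.single_apply] at e6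
  have c1 : u.repr v 1 = 0 := e1.resolve_left hb
  have c3 : u.repr v 3 = 0 := e2.resolve_left hb
  have c2 : u.repr v 2 = 0 := e3.resolve_left hb
  have c0 : u.repr v 0 = 0 := by
    have hb' : b * u.repr v 0 = 0 := by linear_combination a * c1 - e4
    exact (mul_eq_zero.mp hb').resolve_left hb
  have c5 : u.repr v 5 = 0 := by
    have hb' : b * u.repr v 5 = 0 := by linear_combination e5 - a * c2
    exact (mul_eq_zero.mp hb').resolve_left hb
  have c4 : u.repr v 4 = 0 := by
    have hb' : b * u.repr v 4 = 0 := by linear_combination e6 - a * c3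
    exact (mul_eq_zero.mp hb').resolve_left hb
  rw [← u.forall_coord_eq_zero_iff]
  intro i
  fin_cases i <;> simpa [Module.Basis.coord_apply] using (by assumption : _)

end Aux

/-- Let `U` be a 6-dimensional `F_p`-vector space with basis `u₁,…,u₆`, and
`S³ = span{w₁, w₂}` with `w₁ = u₁∧u₅∧u₆`, `w₂ = u₁∧u₃∧u₅ − u₁∧u₄∧u₆ + u₂∧u₅∧u₆`.
Then the span of the elements of `S³` of the form `u' ∧ u` (`u' ∈ Λ²U`, `u ∈ U`)
equals `span{w₁}`; in particular it is a proper subspace of codimension 1 in `S³`. -/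
theorem stmt_5 (p : ℕ) [Fact p.Prime] (hp2 : p ≠ 2) (U : Type*) [AddCommGroup U]
    [Module (ZMod p) U] (u : Module.Basis (Fin 6) (ZMod p) U) :
    let e : Fin 6 → ExteriorAlgebra (ZMod p) U := fun i => ι (ZMod p) (u i)
    let w₁ := e 0 * e 4 * e 5
    let w₂ := e 0 * e 2 * e 4 - e 0 * e 3 * e 5 + e 1 * e 4 * e 5
    let S₃ : Submodule (ZMod p) (ExteriorAlgebra (ZMod p) U) :=
      Submodule.span (ZMod p) {w₁, w₂}
    let S₃dec : Submodule (ZMod p) (ExteriorAlgebra (ZMod p) U) :=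
      Submodule.span (ZMod p)
        {x | x ∈ S₃ ∧ ∃ u' ∈ ⋀[ZMod p]^2 U, ∃ v : U, x = u' * ι (ZMod p) v}
    S₃dec = Submodule.span (ZMod p) {w₁} ∧ S₃dec < S₃ ∧
      Module.finrank (ZMod p) S₃ = Module.finrank (ZMod p) S₃dec + 1 := by
  intro e w₁ w₂ S₃ S₃dec
  have hw₁ : w₁ = W₁ p U u := rfl
  have hw₂ : w₂ = W₂ p U u := rfl
  -- every eligible element of S₃ lies in span {w₁}
  have hsub : {x | x ∈ S₃ ∧ ∃ u' ∈ ⋀[ZMod p]^2 U, ∃ v : U, x = u' * ι (ZMod p) v}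
      ⊆ (Submodule.span (ZMod p) {w₁} : Set (ExteriorAlgebra (ZMod p) U)) := by
    rintro x ⟨hxS, u', -, v, rfl⟩
    obtain ⟨a, b, hab⟩ := Submodule.mem_span_pair.mp hxS
    by_cases hb : b = 0
    · subst hb
      rw [SetLike.mem_coe, Submodule.mem_span_singleton]
      exact ⟨a, by rw [← hab, zero_smul, add_zero]⟩
    · have hzero : (a • W₁ p U u + b • W₂ p U u) * ι (ZMod p) v = 0 := by
        rw [← hw₁, ← hw₂, hab, mul_assoc, ι_sq_zero, mul_zero]
      have hv := key p U u a b v hzero hb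
      subst hv
      simp only [map_zero, mul_zero]
      exact Submodule.zero_mem _
  -- the equality
  have heq : S₃dec = Submodule.span (ZMod p) {w₁} := by
    apply le_antisymm
    · exact Submodule.span_le.mpr hsub
    · apply Submodule.span_le.mpr
      rintro x rfl
      apply Submodule.subset_span
      refine ⟨Submodule.subset_span (Set.mem_insert _ _), ι (ZMod p) (u 0) * ι (ZMod p) (u 4),
        ?_, u 5, rfl⟩
      have hsq : (⋀[ZMod p]^2 U)
          = LinearMap.range (ι (ZMod p) : U →ₗ[ZMod p] ExteriorAlgebra (ZMod p) U)
            * LinearMap.range (ι (ZMod p) : U →ₗ[ZMod p] ExteriorAlgebra (ZMod p) U) := sq _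
      rw [hsq]
      exact Submodule.mul_mem_mul (LinearMap.mem_range_self _ _) (LinearMap.mem_range_self _ _)
  -- linear independence of w₁, w₂
  have hind : LinearIndependent (ZMod p) ![w₁, w₂] := by
    rw [LinearIndependent.pair_iff]
    intro s t hst
    have h1 := congrArg (φ p U u 3 ![0, 4, 5]) hst
    have h2 := congrArg (φ p U u 3 ![0, 2, 4]) hst
    rw [map_add, map_smul, map_smul, hw₁, hw₂, ψ₁W₁, ψ₁W₂, map_zero] at h1
    rw [map_add, map_smul, map_smul, hw₁, hw₂, ψ₂W₁, ψ₂W₂, map_zero] at h2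
    constructor
    · simpa using h1
    · simpa using h2
  have hw₁0 : w₁ ≠ 0 := by
    intro h
    have := congrArg (φ p U u 3 ![0, 4, 5]) h
    rw [hw₁, ψ₁W₁, map_zero] at this
    exact one_ne_zero this
  have hw₂mem : w₂ ∉ Submodule.span (ZMod p) {w₁} := by
    intro hmem
    obtain ⟨c, hc⟩ := Submodule.mem_span_singleton.mp hmem
    have := congrArg (φ p U u 3 ![0, 2, 4]) hc
    rw [map_smul, hw₁, hw₂, ψ₂W₁, ψ₂W₂, smul_zero] at this
    exact one_ne_zero this.symm
  have hrange : ({w₁, w₂} : Set (ExteriorAlgebra (ZMod p) U)) = Set.range ![w₁, w₂] := by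
    rw [Matrix.range_cons_cons_empty]
  refine ⟨heq, ?_, ?_⟩
  · rw [heq]
    refine lt_of_le_of_ne (Submodule.span_mono (by simp)) ?_
    intro h
    exact hw₂mem (h ▸ Submodule.subset_span (Set.mem_insert_of_mem _ rfl))
  · rw [heq]
    have h2 : Module.finrank (ZMod p) S₃ = 2 := by
      show Module.finrank (ZMod p) (Submodule.span (ZMod p) {w₁, w₂}) = 2
      rw [hrange, finrank_span_eq_card hind]
      simp
    have h1 : Module.finrank (ZMod p) (Submodule.span (ZMod p) ({w₁} :
        Set (ExteriorAlgebra (ZMod p) U))) = 1 := by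
      simpa using finrank_span_singleton hw₁0
    rw [h2, h1]
end

section
/- Let p be an odd prime and t ∈ F_p a nonzero element that is not a square. Let U be a 6-dimensional F_p-vector space with basis u₁,...,u₆, and set w₁ = u₁∧u₂∧u₃ + u₁∧u₅∧u₆ − t·u₂∧u₄∧u₆ + u₃∧u₄∧u₅ and w₂ = t·u₁∧u₂∧u₆ + t·u₂∧u₃∧u₄ + t·u₄∧u₅∧u₆ − u₁∧u₃∧u₅ in Λ³U. If a₁, a₂ ∈ F_p and u₀ ∈ U satisfy (a₁w₁ + a₂w₂) ∧ u₀ = 0 with a₁w₁ + a₂w₂ ≠ 0 and u₀ ≠ 0, then a contradiction follows; i.e., no nonzero element of span{w₁, w₂} is of the form u'∧u with u' ∈ Λ²U and u ∈ U. -/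
open ExteriorAlgebra

noncomputable def phi7 {p : ℕ} [Fact p.Prime] {U : Type*} [AddCommGroup U] [Module (ZMod p) U]
    (u : Module.Basis (Fin 6) (ZMod p) U) (s : Fin 4 → Fin 6) :
    ExteriorAlgebra (ZMod p) U →ₗ[ZMod p] ZMod p :=
  ExteriorAlgebra.liftAlternating fun i => match i with
    | 4 => (Matrix.detRowAlternating : (Fin 4 → ZMod p) [⋀^Fin 4]→ₗ[ZMod p] ZMod p).compLinearMap
        (LinearMap.pi fun b => u.coord (s b))
    | _ => 0

theorem phi7_apply {p : ℕ} [Fact p.Prime] {U : Type*} [AddCommGroup U] [Module (ZMod p) U]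
    (u : Module.Basis (Fin 6) (ZMod p) U) (s : Fin 4 → Fin 6) (i j k : Fin 6) (v : U) :
    phi7 u s (ι (ZMod p) (u i) * ι (ZMod p) (u j) * ι (ZMod p) (u k) * ι (ZMod p) v) =
      Matrix.det (Matrix.of ![fun b => if i = s b then (1 : ZMod p) else 0,
        fun b => if j = s b then 1 else 0,
        fun b => if k = s b then 1 else 0,
        fun b => u.repr v (s b)]) := by
  have h : ι (ZMod p) (u i) * ι (ZMod p) (u j) * ι (ZMod p) (u k) * ι (ZMod p) v =
      ιMulti (ZMod p) 4 ![u i, u j, u k, v] := by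
    simp [ιMulti_apply, List.ofFn_succ, mul_assoc]
  rw [h, phi7, liftAlternating_apply_ιMulti]
  show Matrix.detRowAlternating
      (fun a => (LinearMap.pi fun b => u.coord (s b)) (![u i, u j, u k, v] a)) = _
  congr 1
  ext a b
  fin_cases a <;>
    simp [Matrix.of_apply, Module.Basis.coord_apply, Module.Basis.repr_self, Finsupp.single_apply]

set_option maxHeartbeats 1000000 in

/-- Let `p` be odd, `t ∈ F_p` nonzero and not a square, `U` a 6-dimensional
`F_p`-vector space, `w₁ = u₁∧u₂∧u₃ + u₁∧u₅∧u₆ − t u₂∧u₄∧u₆ + u₃∧u₄∧u₅`,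
`w₂ = t u₁∧u₂∧u₆ + t u₂∧u₃∧u₄ + t u₄∧u₅∧u₆ − u₁∧u₃∧u₅`.  If `(a₁w₁ + a₂w₂) ∧ u₀ = 0`
with `a₁w₁ + a₂w₂ ≠ 0` and `u₀ ≠ 0`, a contradiction follows; i.e. no nonzero element of
`span{w₁, w₂}` has the form `u' ∧ u`. -/
theorem stmt_7 (p : ℕ) [Fact p.Prime] (hp2 : p ≠ 2) (t : ZMod p) (ht : t ≠ 0)
    (hts : ¬ IsSquare t) (U : Type*) [AddCommGroup U]
    [Module (ZMod p) U] (u : Module.Basis (Fin 6) (ZMod p) U)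
    (a₁ a₂ : ZMod p) (u₀ : U) :
    let e : Fin 6 → ExteriorAlgebra (ZMod p) U := fun i => ι (ZMod p) (u i)
    let w₁ := e 0 * e 1 * e 2 + e 0 * e 4 * e 5 - t • (e 1 * e 3 * e 5) + e 2 * e 3 * e 4
    let w₂ := t • (e 0 * e 1 * e 5) + t • (e 1 * e 2 * e 3) + t • (e 3 * e 4 * e 5)
      - e 0 * e 2 * e 4
    (a₁ • w₁ + a₂ • w₂) * ι (ZMod p) u₀ = 0 →
    a₁ • w₁ + a₂ • w₂ ≠ 0 → u₀ ≠ 0 → False := by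
  intro e w₁ w₂ hmul hw hu0
  simp only [w₁, w₂, e] at hmul hw
  have key : ∀ (s : Fin 4 → Fin 6), phi7 u s ((a₁ •
      (ι (ZMod p) (u 0) * ι (ZMod p) (u 1) * ι (ZMod p) (u 2) +
        ι (ZMod p) (u 0) * ι (ZMod p) (u 4) * ι (ZMod p) (u 5) -
        t • (ι (ZMod p) (u 1) * ι (ZMod p) (u 3) * ι (ZMod p) (u 5)) +
        ι (ZMod p) (u 2) * ι (ZMod p) (u 3) * ι (ZMod p) (u 4)) +
      a₂ • (t • (ι (ZMod p) (u 0) * ι (ZMod p) (u 1) * ι (ZMod p) (u 5)) +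
        t • (ι (ZMod p) (u 1) * ι (ZMod p) (u 2) * ι (ZMod p) (u 3)) +
        t • (ι (ZMod p) (u 3) * ι (ZMod p) (u 4) * ι (ZMod p) (u 5)) -
        ι (ZMod p) (u 0) * ι (ZMod p) (u 2) * ι (ZMod p) (u 4))) * ι (ZMod p) u₀) = 0 := by
    intro s; rw [hmul, map_zero]
  have h1 : a₁ * u.repr u₀ 3 - a₂ * (t * u.repr u₀ 0) = 0 := by
    have h := key ![0, 1, 2, 3]
    simp only [add_mul, sub_mul, smul_mul_assoc, map_add, map_sub, map_smul,
      phi7_apply] at h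
    simp [Matrix.det_succ_row_zero, Fin.sum_univ_succ, Matrix.det_fin_three,
      show ((1:Fin 4)).succAbove 2 = 3 from by decide] at h
    linear_combination h
  have h2 : a₁ * u.repr u₀ 0 - a₂ * u.repr u₀ 3 = 0 := by
    have h := key ![0, 2, 3, 4]
    simp only [add_mul, sub_mul, smul_mul_assoc, map_add, map_sub, map_smul,
      phi7_apply] at h
    simp [Matrix.det_succ_row_zero, Fin.sum_univ_succ, Matrix.det_fin_three,
      show ((1:Fin 4)).succAbove 2 = 3 from by decide] at h
    linear_combination -h
  have h3 : a₁ * u.repr u₀ 4 - a₂ * u.repr u₀ 1 = 0 := by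
    have h := key ![0, 1, 2, 4]
    simp only [add_mul, sub_mul, smul_mul_assoc, map_add, map_sub, map_smul,
      phi7_apply] at h
    simp [Matrix.det_succ_row_zero, Fin.sum_univ_succ, Matrix.det_fin_three,
      show ((1:Fin 4)).succAbove 2 = 3 from by decide] at h
    linear_combination h
  have h4 : a₁ * u.repr u₀ 1 - a₂ * (t * u.repr u₀ 4) = 0 := by
    have h := key ![0, 1, 4, 5]
    simp only [add_mul, sub_mul, smul_mul_assoc, map_add, map_sub, map_smul,
      phi7_apply] at h
    simp [Matrix.det_succ_row_zero, Fin.sum_univ_succ, Matrix.det_fin_three,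
      show ((1:Fin 4)).succAbove 2 = 3 from by decide] at h
    linear_combination h
  have h5 : a₁ * u.repr u₀ 5 - a₂ * (t * u.repr u₀ 2) = 0 := by
    have h := key ![0, 1, 2, 5]
    simp only [add_mul, sub_mul, smul_mul_assoc, map_add, map_sub, map_smul,
      phi7_apply] at h
    simp [Matrix.det_succ_row_zero, Fin.sum_univ_succ, Matrix.det_fin_three,
      show ((1:Fin 4)).succAbove 2 = 3 from by decide] at h
    linear_combination h
  have h6 : a₁ * u.repr u₀ 2 - a₂ * u.repr u₀ 5 = 0 := by
    have h := key ![0, 2, 4, 5]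
    simp only [add_mul, sub_mul, smul_mul_assoc, map_add, map_sub, map_smul,
      phi7_apply] at h
    simp [Matrix.det_succ_row_zero, Fin.sum_univ_succ, Matrix.det_fin_three,
      show ((1:Fin 4)).succAbove 2 = 3 from by decide] at h
    linear_combination h
  set d : ZMod p := a₁ * a₁ - t * (a₂ * a₂) with hd
  have dc : ∀ i, d * u.repr u₀ i = 0 := by
    intro i
    fin_cases i
    · show d * u.repr u₀ 0 = 0; linear_combination a₁ * h2 + a₂ * h1
    · show d * u.repr u₀ 1 = 0; linear_combination a₁ * h4 + t * a₂ * h3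
    · show d * u.repr u₀ 2 = 0; linear_combination a₁ * h6 + a₂ * h5
    · show d * u.repr u₀ 3 = 0; linear_combination a₁ * h1 + t * a₂ * h2
    · show d * u.repr u₀ 4 = 0; linear_combination a₁ * h3 + a₂ * h4
    · show d * u.repr u₀ 5 = 0; linear_combination a₁ * h5 + t * a₂ * h6
  rcases eq_or_ne d 0 with hd0 | hd0
  · rcases eq_or_ne a₂ 0 with ha2 | ha2
    · have ha1 : a₁ = 0 := by
        have : a₁ * a₁ = 0 := by rw [hd, ha2] at hd0; linear_combination hd0
        exact mul_self_eq_zero.mp this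
      exact hw (by simp [ha1, ha2])
    · exact hts ⟨a₁ * a₂⁻¹, by
        field_simp
        linear_combination -hd0⟩
  · have hci : ∀ i, u.repr u₀ i = 0 := fun i => (mul_eq_zero.mp (dc i)).resolve_left hd0
    apply hu0
    have : u.repr u₀ = 0 := by
      ext i; exact hci i
    exact (LinearEquiv.map_eq_zero_iff u.repr).mp this
end

section
/- Let p be an odd prime and t = 1/c² for some nonzero c ∈ F_p. Let U be a 6-dimensional F_p-vector space with basis u₁,...,u₆, and set w₁ = u₁∧u₂∧u₃ + u₁∧u₅∧u₆ − t·u₂∧u₄∧u₆ + u₃∧u₄∧u₅ and w₂ = t·u₁∧u₂∧u₆ + t·u₂∧u₃∧u₄ + t·u₄∧u₅∧u₆ − u₁∧u₃∧u₅. Then the span of the elements of span{w₁, w₂} that can be written as u'∧u (u' ∈ Λ²U, u ∈ U) equals span{w₁, w₂}; explicitly, w₁ + c·w₂ and w₁ − c·w₂ are each of the form u'∧u. -/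
open ExteriorAlgebra

private lemma key_factor {R : Type*} [CommRing R] {U : Type*} [AddCommGroup U]
    [Module R U] (u : Fin 6 → U) (t s : R) (hst : s ^ 2 * t = 1) :
    ∃ u' ∈ ⋀[R]^2 U, ∃ v : U,
      (ι R (u 0) * ι R (u 1) * ι R (u 2) + ι R (u 0) * ι R (u 4) * ι R (u 5)
        - t • (ι R (u 1) * ι R (u 3) * ι R (u 5)) + ι R (u 2) * ι R (u 3) * ι R (u 4))
      + s • (t • (ι R (u 0) * ι R (u 1) * ι R (u 5)) + t • (ι R (u 1) * ι R (u 2) * ι R (u 3))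
        + t • (ι R (u 3) * ι R (u 4) * ι R (u 5)) - ι R (u 0) * ι R (u 2) * ι R (u 4))
      = u' * ι R v := by
  have hmem : ∀ i j : Fin 6, ι R (u i) * ι R (u j) ∈ ⋀[R]^2 U := fun i j => by
    rw [exteriorPower, pow_two]
    exact Submodule.mul_mem_mul (LinearMap.mem_range_self _ _) (LinearMap.mem_range_self _ _)
  refine ⟨(s * t) • (ι R (u 0) * ι R (u 1)) + ι R (u 0) * ι R (u 4)
      - t • (ι R (u 1) * ι R (u 3)) + (s * t) • (ι R (u 3) * ι R (u 4)), ?_, s • u 2 + u 5, ?_⟩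
  · exact Submodule.add_mem _ (Submodule.sub_mem _
      (Submodule.add_mem _ (Submodule.smul_mem _ _ (hmem 0 1)) (hmem 0 4))
      (Submodule.smul_mem _ _ (hmem 1 3))) (Submodule.smul_mem _ _ (hmem 3 4))
  · have swap : ∀ x y : U, ι R y * ι R x = -(ι R x * ι R y) := fun x y =>
      eq_neg_of_add_eq_zero_left (ι_add_mul_swap y x)
    have h042 : ι R (u 0) * ι R (u 4) * ι R (u 2) = -(ι R (u 0) * ι R (u 2) * ι R (u 4)) := by
      rw [mul_assoc, swap (u 2) (u 4), mul_neg, ← mul_assoc]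
    have h132 : ι R (u 1) * ι R (u 3) * ι R (u 2) = -(ι R (u 1) * ι R (u 2) * ι R (u 3)) := by
      rw [mul_assoc, swap (u 2) (u 3), mul_neg, ← mul_assoc]
    have h342 : ι R (u 3) * ι R (u 4) * ι R (u 2) = ι R (u 2) * ι R (u 3) * ι R (u 4) := by
      rw [mul_assoc, swap (u 2) (u 4), mul_neg, ← mul_assoc, swap (u 2) (u 3), neg_mul, neg_neg]
    simp only [map_add, map_smul, mul_add, add_mul, sub_mul, smul_mul_assoc, mul_smul_comm,
      h042, h132, h342]
    match_scalars <;>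
      first
        | ring1
        | linear_combination hst
        | linear_combination -hst

/-- Let `p` be odd, `c ∈ F_p` nonzero, `t = 1/c²`, `U` a 6-dimensional `F_p`-vector space,
`w₁ = u₁∧u₂∧u₃ + u₁∧u₅∧u₆ − t u₂∧u₄∧u₆ + u₃∧u₄∧u₅`,
`w₂ = t u₁∧u₂∧u₆ + t u₂∧u₃∧u₄ + t u₄∧u₅∧u₆ − u₁∧u₃∧u₅`.  Then the span of the elements
of `span{w₁, w₂}` of the form `u' ∧ u` equals `span{w₁, w₂}`; explicitly `w₁ + c·w₂` and
`w₁ − c·w₂` are each of the form `u' ∧ u`. -/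
theorem stmt_8 (p : ℕ) [Fact p.Prime] (hp2 : p ≠ 2) (c t : ZMod p) (hc : c ≠ 0)
    (htc : t = 1 / c ^ 2) (U : Type*) [AddCommGroup U]
    [Module (ZMod p) U] (u : Module.Basis (Fin 6) (ZMod p) U) :
    let e : Fin 6 → ExteriorAlgebra (ZMod p) U := fun i => ι (ZMod p) (u i)
    let w₁ := e 0 * e 1 * e 2 + e 0 * e 4 * e 5 - t • (e 1 * e 3 * e 5) + e 2 * e 3 * e 4
    let w₂ := t • (e 0 * e 1 * e 5) + t • (e 1 * e 2 * e 3) + t • (e 3 * e 4 * e 5)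
      - e 0 * e 2 * e 4
    let S₃ : Submodule (ZMod p) (ExteriorAlgebra (ZMod p) U) :=
      Submodule.span (ZMod p) {w₁, w₂}
    Submodule.span (ZMod p)
        {x | x ∈ S₃ ∧ ∃ u' ∈ ⋀[ZMod p]^2 U, ∃ v : U, x = u' * ι (ZMod p) v} = S₃ ∧
      (∃ u' ∈ ⋀[ZMod p]^2 U, ∃ v : U, w₁ + c • w₂ = u' * ι (ZMod p) v) ∧
      (∃ u' ∈ ⋀[ZMod p]^2 U, ∃ v : U, w₁ - c • w₂ = u' * ι (ZMod p) v) := by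
  intro e w₁ w₂ S₃
  have hct : c ^ 2 * t = 1 := by
    rw [htc]; field_simp
  have hnct : (-c) ^ 2 * t = 1 := by rwa [neg_sq]
  have hplus : ∃ u' ∈ ⋀[ZMod p]^2 U, ∃ v : U, w₁ + c • w₂ = u' * ι (ZMod p) v :=
    key_factor (fun i => u i) t c hct
  have hminus : ∃ u' ∈ ⋀[ZMod p]^2 U, ∃ v : U, w₁ - c • w₂ = u' * ι (ZMod p) v := by
    have h := key_factor (R := ZMod p) (fun i => u i) t (-c) hnct
    rw [sub_eq_add_neg, ← neg_smul]
    exact h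
  refine ⟨?_, hplus, hminus⟩
  have h2 : (2 : ZMod p) ≠ 0 := by
    intro h
    have hdvd : (p : ℕ) ∣ 2 := (ZMod.natCast_eq_zero_iff 2 p).mp (by exact_mod_cast h)
    exact hp2 ((Nat.prime_dvd_prime_iff_eq (Fact.out : p.Prime) Nat.prime_two).mp hdvd)
  apply le_antisymm
  · exact Submodule.span_le.mpr fun x hx => hx.1
  · have hw1S3 : w₁ ∈ S₃ := Submodule.subset_span (Set.mem_insert _ _)
    have hw2S3 : w₂ ∈ S₃ := Submodule.subset_span (Set.mem_insert_of_mem _ rfl)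
    set S : Set (ExteriorAlgebra (ZMod p) U) :=
      {x | x ∈ S₃ ∧ ∃ u' ∈ ⋀[ZMod p]^2 U, ∃ v : U, x = u' * ι (ZMod p) v} with hS
    have hpS : w₁ + c • w₂ ∈ Submodule.span (ZMod p) S := by
      apply Submodule.subset_span
      refine ⟨S₃.add_mem hw1S3 (S₃.smul_mem c hw2S3), ?_⟩
      obtain ⟨u', hu', v, hv⟩ := hplus
      exact ⟨u', hu', v, hv⟩
    have hmS : w₁ - c • w₂ ∈ Submodule.span (ZMod p) S := by
      apply Submodule.subset_span
      refine ⟨S₃.sub_mem hw1S3 (S₃.smul_mem c hw2S3), ?_⟩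
      obtain ⟨u', hu', v, hv⟩ := hminus
      exact ⟨u', hu', v, hv⟩
    have hw1 : w₁ ∈ Submodule.span (ZMod p) S := by
      have : w₁ = (2 : ZMod p)⁻¹ • ((w₁ + c • w₂) + (w₁ - c • w₂)) := by
        match_scalars <;> first | ring1 | (field_simp; ring)
      rw [this]
      exact Submodule.smul_mem _ _ (Submodule.add_mem _ hpS hmS)
    have hw2 : w₂ ∈ Submodule.span (ZMod p) S := by
      have : w₂ = (2 * c)⁻¹ • ((w₁ + c • w₂) - (w₁ - c • w₂)) := by
        have h2c : 2 * c ≠ 0 := mul_ne_zero h2 hc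
        match_scalars <;> first | ring1 | (field_simp; ring)
      rw [this]
      exact Submodule.smul_mem _ _ (Submodule.sub_mem _ hpS hmS)
    exact Submodule.span_le.mpr (by rintro x (rfl | rfl) <;> assumption)
end

section
/- Let p be an odd prime and t ∈ F_p \ {0}. Let U be a 6-dimensional F_p-vector space and let S² ⊆ Λ²U be the annihilator of span{f₁, f₂, f₃} where f₁ = u₁*∧u₂* − u₄*∧u₅*, f₂ = u₂*∧u₃* − u₅*∧u₆* + u₁*∧u₄*, f₃ = u₃*∧u₆* − t·u₁*∧u₅* − u₂*∧u₄*, under the standard pairing Λ²U × Λ²U* → F_p. Then S² is spanned by its decomposable elements u∧u' (u, u' ∈ U). -/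
open ExteriorAlgebra

theorem pairDual_ι_mul_ι {F U : Type*} [Field F] [AddCommGroup U] [Module F U]
    (f g : Module.Dual F U) (a b : U) :
    pairDual F U 2 ![f, g] (ι F a * ι F b) = f a * g b - g a * f b := by
  have h : ι F a * ι F b = ιMulti F 2 ![a, b] := by
    simp [ιMulti_apply, List.ofFn_succ]
  rw [h, pairDual, liftAlternating_apply_ιMulti, Pi.single_eq_same,
    AlternatingMap.compLinearMap_apply]
  show Matrix.det (Matrix.of fun i j => (LinearMap.pi ![f, g]) (![a, b] i) j) = _
  rw [Matrix.det_fin_two]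
  simp [LinearMap.pi_apply]

set_option maxHeartbeats 4000000 in
/-- Let `p` be odd, `t ∈ F_p` nonzero, `U` a 6-dimensional `F_p`-vector space, and
`S² ⊆ Λ²U` the annihilator of `span{f₁, f₂, f₃}` where `f₁ = u₁*∧u₂* − u₄*∧u₅*`,
`f₂ = u₂*∧u₃* − u₅*∧u₆* + u₁*∧u₄*`, `f₃ = u₃*∧u₆* − t·u₁*∧u₅* − u₂*∧u₄*`.
Then `S²` is spanned by its decomposable elements `u∧u'`. -/
theorem stmt_10 (p : ℕ) [Fact p.Prime] (hp2 : p ≠ 2) (t : ZMod p) (ht : t ≠ 0)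
    (U : Type*) [AddCommGroup U] [Module (ZMod p) U] (u : Module.Basis (Fin 6) (ZMod p) U) :
    let F := ZMod p
    let φ₁ := pairDual F U 2 ![u.coord 0, u.coord 1] - pairDual F U 2 ![u.coord 3, u.coord 4]
    let φ₂ := pairDual F U 2 ![u.coord 1, u.coord 2] - pairDual F U 2 ![u.coord 4, u.coord 5]
      + pairDual F U 2 ![u.coord 0, u.coord 3]
    let φ₃ := pairDual F U 2 ![u.coord 2, u.coord 5] - t • pairDual F U 2 ![u.coord 0, u.coord 4]
      - pairDual F U 2 ![u.coord 1, u.coord 3]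
    let S₂ : Submodule F (ExteriorAlgebra F U) :=
      ⋀[F]^2 U ⊓ LinearMap.ker φ₁ ⊓ LinearMap.ker φ₂ ⊓ LinearMap.ker φ₃
    Submodule.span F {x | x ∈ S₂ ∧ ∃ a b : U, x = ι F a * ι F b} = S₂ := by
  intro F φ₁ φ₂ φ₃ S₂
  have hp : p.Prime := Fact.out
  have h2 : (2 : F) ≠ 0 := by
    have h : ((2 : ℕ) : ZMod p) ≠ 0 := by
      rw [Ne, ZMod.natCast_eq_zero_iff]
      exact fun hdvd => hp2 ((Nat.prime_dvd_prime_iff_eq hp Nat.prime_two).mp hdvd)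
    simpa using h
  have hco : ∀ i j : Fin 6, u.coord i (u j) = if j = i then 1 else 0 := by
    intro i j; simp [Module.Basis.coord_apply, Module.Basis.repr_self, Finsupp.single_apply]
  have hsw : ∀ a b : U, ι F b * ι F a = -(ι F a * ι F b) := fun a b =>
    eq_neg_of_add_eq_zero_left (ι_add_mul_swap b a)
  have hpow : (⋀[F]^2 U : Submodule F (ExteriorAlgebra F U))
      = LinearMap.range (ι F) * LinearMap.range (ι F) := pow_two _
  have hdec : ∀ a b : U, ι F a * ι F b ∈ ⋀[F]^2 U := fun a b => by
    rw [hpow]; exact Submodule.mul_mem_mul ⟨a, rfl⟩ ⟨b, rfl⟩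
  have hmemS : ∀ x : ExteriorAlgebra F U, x ∈ ⋀[F]^2 U → φ₁ x = 0 → φ₂ x = 0 → φ₃ x = 0 →
      x ∈ S₂ := fun x h0 hk1 hk2 hk3 =>
    ⟨⟨⟨h0, LinearMap.mem_ker.mpr hk1⟩, LinearMap.mem_ker.mpr hk2⟩, LinearMap.mem_ker.mpr hk3⟩
  set A : Set (ExteriorAlgebra F U) := {ι F (u 0 + u 4) * ι F (u 1 - u 3 - u 5), ι F (u 1 + u 4) * ι F (u 2 + u 5), ι F (u 1 + u 3) * ι F (u 0 + u 2 - u 4), ι F (u 1 + u 2) * ι F (u 3 + u 5), ι F (u 0 + u 2) * ι F (u 4 + t • u 5), ι F (u 0) * ι F (u 2), ι F (u 0) * ι F (u 5), ι F (u 1) * ι F (u 4), ι F (u 1) * ι F (u 5), ι F (u 2) * ι F (u 3), ι F (u 2) * ι F (u 4), ι F (u 3) * ι F (u 5)} with hA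
  set W : Set (ExteriorAlgebra F U) := {ι F (u 0) * ι F (u 1), ι F (u 1) * ι F (u 2), ι F (u 2) * ι F (u 5)} with hW
  have hS1 : (ι F (u 0 + u 4) * ι F (u 1 - u 3 - u 5)) ∈ S₂ := by
    refine hmemS _ (hdec _ _) ?_ ?_ ?_ <;>
    · simp only [φ₁, φ₂, φ₃, LinearMap.sub_apply, LinearMap.add_apply, LinearMap.smul_apply,
        smul_eq_mul, pairDual_ι_mul_ι]
      simp only [map_add, map_sub, map_smul, hco]
      simp
  have hS2 : (ι F (u 1 + u 4) * ι F (u 2 + u 5)) ∈ S₂ := by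
    refine hmemS _ (hdec _ _) ?_ ?_ ?_ <;>
    · simp only [φ₁, φ₂, φ₃, LinearMap.sub_apply, LinearMap.add_apply, LinearMap.smul_apply,
        smul_eq_mul, pairDual_ι_mul_ι]
      simp only [map_add, map_sub, map_smul, hco]
      simp
  have hS3 : (ι F (u 1 + u 3) * ι F (u 0 + u 2 - u 4)) ∈ S₂ := by
    refine hmemS _ (hdec _ _) ?_ ?_ ?_ <;>
    · simp only [φ₁, φ₂, φ₃, LinearMap.sub_apply, LinearMap.add_apply, LinearMap.smul_apply,
        smul_eq_mul, pairDual_ι_mul_ι]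
      simp only [map_add, map_sub, map_smul, hco]
      simp
  have hS4 : (ι F (u 1 + u 2) * ι F (u 3 + u 5)) ∈ S₂ := by
    refine hmemS _ (hdec _ _) ?_ ?_ ?_ <;>
    · simp only [φ₁, φ₂, φ₃, LinearMap.sub_apply, LinearMap.add_apply, LinearMap.smul_apply,
        smul_eq_mul, pairDual_ι_mul_ι]
      simp only [map_add, map_sub, map_smul, hco]
      simp
  have hS5 : (ι F (u 0 + u 2) * ι F (u 4 + t • u 5)) ∈ S₂ := by
    refine hmemS _ (hdec _ _) ?_ ?_ ?_ <;>
    · simp only [φ₁, φ₂, φ₃, LinearMap.sub_apply, LinearMap.add_apply, LinearMap.smul_apply,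
        smul_eq_mul, pairDual_ι_mul_ι]
      simp only [map_add, map_sub, map_smul, hco]
      simp
  have hS6 : (ι F (u 0) * ι F (u 2)) ∈ S₂ := by
    refine hmemS _ (hdec _ _) ?_ ?_ ?_ <;>
    · simp only [φ₁, φ₂, φ₃, LinearMap.sub_apply, LinearMap.add_apply, LinearMap.smul_apply,
        smul_eq_mul, pairDual_ι_mul_ι]
      simp only [map_add, map_sub, map_smul, hco]
      simp
  have hS7 : (ι F (u 0) * ι F (u 5)) ∈ S₂ := by
    refine hmemS _ (hdec _ _) ?_ ?_ ?_ <;>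
    · simp only [φ₁, φ₂, φ₃, LinearMap.sub_apply, LinearMap.add_apply, LinearMap.smul_apply,
        smul_eq_mul, pairDual_ι_mul_ι]
      simp only [map_add, map_sub, map_smul, hco]
      simp
  have hS8 : (ι F (u 1) * ι F (u 4)) ∈ S₂ := by
    refine hmemS _ (hdec _ _) ?_ ?_ ?_ <;>
    · simp only [φ₁, φ₂, φ₃, LinearMap.sub_apply, LinearMap.add_apply, LinearMap.smul_apply,
        smul_eq_mul, pairDual_ι_mul_ι]
      simp only [map_add, map_sub, map_smul, hco]
      simp
  have hS9 : (ι F (u 1) * ι F (u 5)) ∈ S₂ := by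
    refine hmemS _ (hdec _ _) ?_ ?_ ?_ <;>
    · simp only [φ₁, φ₂, φ₃, LinearMap.sub_apply, LinearMap.add_apply, LinearMap.smul_apply,
        smul_eq_mul, pairDual_ι_mul_ι]
      simp only [map_add, map_sub, map_smul, hco]
      simp
  have hS10 : (ι F (u 2) * ι F (u 3)) ∈ S₂ := by
    refine hmemS _ (hdec _ _) ?_ ?_ ?_ <;>
    · simp only [φ₁, φ₂, φ₃, LinearMap.sub_apply, LinearMap.add_apply, LinearMap.smul_apply,
        smul_eq_mul, pairDual_ι_mul_ι]
      simp only [map_add, map_sub, map_smul, hco]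
      simp
  have hS11 : (ι F (u 2) * ι F (u 4)) ∈ S₂ := by
    refine hmemS _ (hdec _ _) ?_ ?_ ?_ <;>
    · simp only [φ₁, φ₂, φ₃, LinearMap.sub_apply, LinearMap.add_apply, LinearMap.smul_apply,
        smul_eq_mul, pairDual_ι_mul_ι]
      simp only [map_add, map_sub, map_smul, hco]
      simp
  have hS12 : (ι F (u 3) * ι F (u 5)) ∈ S₂ := by
    refine hmemS _ (hdec _ _) ?_ ?_ ?_ <;>
    · simp only [φ₁, φ₂, φ₃, LinearMap.sub_apply, LinearMap.add_apply, LinearMap.smul_apply,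
        smul_eq_mul, pairDual_ι_mul_ι]
      simp only [map_add, map_sub, map_smul, hco]
      simp
  have hw11 : φ₁ (ι F (u 0) * ι F (u 1)) = 1 := by
    simp only [φ₁, φ₂, φ₃, LinearMap.sub_apply, LinearMap.add_apply, LinearMap.smul_apply,
      smul_eq_mul, pairDual_ι_mul_ι]
    simp only [hco]
    simp
  have hw12 : φ₁ (ι F (u 1) * ι F (u 2)) = 0 := by
    simp only [φ₁, φ₂, φ₃, LinearMap.sub_apply, LinearMap.add_apply, LinearMap.smul_apply,
      smul_eq_mul, pairDual_ι_mul_ι]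
    simp only [hco]
    simp
  have hw13 : φ₁ (ι F (u 2) * ι F (u 5)) = 0 := by
    simp only [φ₁, φ₂, φ₃, LinearMap.sub_apply, LinearMap.add_apply, LinearMap.smul_apply,
      smul_eq_mul, pairDual_ι_mul_ι]
    simp only [hco]
    simp
  have hw21 : φ₂ (ι F (u 0) * ι F (u 1)) = 0 := by
    simp only [φ₁, φ₂, φ₃, LinearMap.sub_apply, LinearMap.add_apply, LinearMap.smul_apply,
      smul_eq_mul, pairDual_ι_mul_ι]
    simp only [hco]
    simp
  have hw22 : φ₂ (ι F (u 1) * ι F (u 2)) = 1 := by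
    simp only [φ₁, φ₂, φ₃, LinearMap.sub_apply, LinearMap.add_apply, LinearMap.smul_apply,
      smul_eq_mul, pairDual_ι_mul_ι]
    simp only [hco]
    simp
  have hw23 : φ₂ (ι F (u 2) * ι F (u 5)) = 0 := by
    simp only [φ₁, φ₂, φ₃, LinearMap.sub_apply, LinearMap.add_apply, LinearMap.smul_apply,
      smul_eq_mul, pairDual_ι_mul_ι]
    simp only [hco]
    simp
  have hw31 : φ₃ (ι F (u 0) * ι F (u 1)) = 0 := by
    simp only [φ₁, φ₂, φ₃, LinearMap.sub_apply, LinearMap.add_apply, LinearMap.smul_apply,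
      smul_eq_mul, pairDual_ι_mul_ι]
    simp only [hco]
    simp
  have hw32 : φ₃ (ι F (u 1) * ι F (u 2)) = 0 := by
    simp only [φ₁, φ₂, φ₃, LinearMap.sub_apply, LinearMap.add_apply, LinearMap.smul_apply,
      smul_eq_mul, pairDual_ι_mul_ι]
    simp only [hco]
    simp
  have hw33 : φ₃ (ι F (u 2) * ι F (u 5)) = 1 := by
    simp only [φ₁, φ₂, φ₃, LinearMap.sub_apply, LinearMap.add_apply, LinearMap.smul_apply,
      smul_eq_mul, pairDual_ι_mul_ι]
    simp only [hco]
    simp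
  have kg1 : (ι F (u 0 + u 4) * ι F (u 1 - u 3 - u 5)) ∈ Submodule.span F A ⊔ Submodule.span F W :=
    Submodule.mem_sup_left (Submodule.subset_span (by rw [hA]; exact Set.mem_insert _ _))
  have kg2 : (ι F (u 1 + u 4) * ι F (u 2 + u 5)) ∈ Submodule.span F A ⊔ Submodule.span F W :=
    Submodule.mem_sup_left (Submodule.subset_span (by rw [hA]; exact Set.mem_insert_of_mem _ (Set.mem_insert _ _)))
  have kg3 : (ι F (u 1 + u 3) * ι F (u 0 + u 2 - u 4)) ∈ Submodule.span F A ⊔ Submodule.span F W :=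
    Submodule.mem_sup_left (Submodule.subset_span (by rw [hA]; exact Set.mem_insert_of_mem _ (Set.mem_insert_of_mem _ (Set.mem_insert _ _))))
  have kg4 : (ι F (u 1 + u 2) * ι F (u 3 + u 5)) ∈ Submodule.span F A ⊔ Submodule.span F W :=
    Submodule.mem_sup_left (Submodule.subset_span (by rw [hA]; exact Set.mem_insert_of_mem _ (Set.mem_insert_of_mem _ (Set.mem_insert_of_mem _ (Set.mem_insert _ _)))))
  have kg5 : (ι F (u 0 + u 2) * ι F (u 4 + t • u 5)) ∈ Submodule.span F A ⊔ Submodule.span F W :=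
    Submodule.mem_sup_left (Submodule.subset_span (by rw [hA]; exact Set.mem_insert_of_mem _ (Set.mem_insert_of_mem _ (Set.mem_insert_of_mem _ (Set.mem_insert_of_mem _ (Set.mem_insert _ _))))))
  have kg6 : (ι F (u 0) * ι F (u 2)) ∈ Submodule.span F A ⊔ Submodule.span F W :=
    Submodule.mem_sup_left (Submodule.subset_span (by rw [hA]; exact Set.mem_insert_of_mem _ (Set.mem_insert_of_mem _ (Set.mem_insert_of_mem _ (Set.mem_insert_of_mem _ (Set.mem_insert_of_mem _ (Set.mem_insert _ _)))))))
  have kg7 : (ι F (u 0) * ι F (u 5)) ∈ Submodule.span F A ⊔ Submodule.span F W :=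
    Submodule.mem_sup_left (Submodule.subset_span (by rw [hA]; exact Set.mem_insert_of_mem _ (Set.mem_insert_of_mem _ (Set.mem_insert_of_mem _ (Set.mem_insert_of_mem _ (Set.mem_insert_of_mem _ (Set.mem_insert_of_mem _ (Set.mem_insert _ _))))))))
  have kg8 : (ι F (u 1) * ι F (u 4)) ∈ Submodule.span F A ⊔ Submodule.span F W :=
    Submodule.mem_sup_left (Submodule.subset_span (by rw [hA]; exact Set.mem_insert_of_mem _ (Set.mem_insert_of_mem _ (Set.mem_insert_of_mem _ (Set.mem_insert_of_mem _ (Set.mem_insert_of_mem _ (Set.mem_insert_of_mem _ (Set.mem_insert_of_mem _ (Set.mem_insert _ _)))))))))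
  have kg9 : (ι F (u 1) * ι F (u 5)) ∈ Submodule.span F A ⊔ Submodule.span F W :=
    Submodule.mem_sup_left (Submodule.subset_span (by rw [hA]; exact Set.mem_insert_of_mem _ (Set.mem_insert_of_mem _ (Set.mem_insert_of_mem _ (Set.mem_insert_of_mem _ (Set.mem_insert_of_mem _ (Set.mem_insert_of_mem _ (Set.mem_insert_of_mem _ (Set.mem_insert_of_mem _ (Set.mem_insert _ _))))))))))
  have kg10 : (ι F (u 2) * ι F (u 3)) ∈ Submodule.span F A ⊔ Submodule.span F W :=
    Submodule.mem_sup_left (Submodule.subset_span (by rw [hA]; exact Set.mem_insert_of_mem _ (Set.mem_insert_of_mem _ (Set.mem_insert_of_mem _ (Set.mem_insert_of_mem _ (Set.mem_insert_of_mem _ (Set.mem_insert_of_mem _ (Set.mem_insert_of_mem _ (Set.mem_insert_of_mem _ (Set.mem_insert_of_mem _ (Set.mem_insert _ _)))))))))))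
  have kg11 : (ι F (u 2) * ι F (u 4)) ∈ Submodule.span F A ⊔ Submodule.span F W :=
    Submodule.mem_sup_left (Submodule.subset_span (by rw [hA]; exact Set.mem_insert_of_mem _ (Set.mem_insert_of_mem _ (Set.mem_insert_of_mem _ (Set.mem_insert_of_mem _ (Set.mem_insert_of_mem _ (Set.mem_insert_of_mem _ (Set.mem_insert_of_mem _ (Set.mem_insert_of_mem _ (Set.mem_insert_of_mem _ (Set.mem_insert_of_mem _ (Set.mem_insert _ _))))))))))))
  have kg12 : (ι F (u 3) * ι F (u 5)) ∈ Submodule.span F A ⊔ Submodule.span F W :=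
    Submodule.mem_sup_left (Submodule.subset_span (by rw [hA]; exact Set.mem_insert_of_mem _ (Set.mem_insert_of_mem _ (Set.mem_insert_of_mem _ (Set.mem_insert_of_mem _ (Set.mem_insert_of_mem _ (Set.mem_insert_of_mem _ (Set.mem_insert_of_mem _ (Set.mem_insert_of_mem _ (Set.mem_insert_of_mem _ (Set.mem_insert_of_mem _ (Set.mem_insert_of_mem _ (Set.mem_singleton _)))))))))))))
  have kw1 : (ι F (u 0) * ι F (u 1)) ∈ Submodule.span F A ⊔ Submodule.span F W :=
    Submodule.mem_sup_right (Submodule.subset_span (by rw [hW]; exact Set.mem_insert _ _))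
  have kw2 : (ι F (u 1) * ι F (u 2)) ∈ Submodule.span F A ⊔ Submodule.span F W :=
    Submodule.mem_sup_right (Submodule.subset_span (by rw [hW]; exact Set.mem_insert_of_mem _ (Set.mem_insert _ _)))
  have kw3 : (ι F (u 2) * ι F (u 5)) ∈ Submodule.span F A ⊔ Submodule.span F W :=
    Submodule.mem_sup_right (Submodule.subset_span (by rw [hW]; exact Set.mem_insert_of_mem _ (Set.mem_insert_of_mem _ (Set.mem_singleton _))))
  have m45 : ι F (u 4) * ι F (u 5) ∈ Submodule.span F A ⊔ Submodule.span F W := by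
    have e : ι F (u 4) * ι F (u 5) = (ι F (u 1 + u 4) * ι F (u 2 + u 5)) - ι F (u 1) * ι F (u 2) - ι F (u 1) * ι F (u 5) + ι F (u 2) * ι F (u 4) := by
      simp only [map_add, add_mul, mul_add, hsw (u 2) (u 4)]
      abel
    rw [e]
    exact add_mem (sub_mem (sub_mem kg2 kw2) kg9) kg11
  have m13 : ι F (u 1) * ι F (u 3) ∈ Submodule.span F A ⊔ Submodule.span F W := by
    have e : ι F (u 1) * ι F (u 3) = (ι F (u 1 + u 2) * ι F (u 3 + u 5)) - ι F (u 1) * ι F (u 5) - ι F (u 2) * ι F (u 3) - ι F (u 2) * ι F (u 5) := by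
      simp only [map_add, add_mul, mul_add]
      abel
    rw [e]
    exact sub_mem (sub_mem (sub_mem kg4 kg9) kg10) kw3
  have m04 : ι F (u 0) * ι F (u 4) ∈ Submodule.span F A ⊔ Submodule.span F W := by
    have e : ι F (u 0) * ι F (u 4) = (ι F (u 0 + u 2) * ι F (u 4 + t • u 5)) - t • (ι F (u 0) * ι F (u 5)) - ι F (u 2) * ι F (u 4) - t • (ι F (u 2) * ι F (u 5)) := by
      simp only [map_add, map_smul, add_mul, mul_add, mul_smul_comm]
      module
    rw [e]
    exact sub_mem (sub_mem (sub_mem kg5 (Submodule.smul_mem _ t kg7)) kg11)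
      (Submodule.smul_mem _ t kw3)
  have m34 : ι F (u 3) * ι F (u 4) ∈ Submodule.span F A ⊔ Submodule.span F W := by
    have e : (2 : F) • (ι F (u 3) * ι F (u 4)) = (ι F (u 0 + u 4) * ι F (u 1 - u 3 - u 5)) + (ι F (u 1 + u 4) * ι F (u 2 + u 5)) - (ι F (u 1 + u 3) * ι F (u 0 + u 2 - u 4))
        - (2 : F) • (ι F (u 0) * ι F (u 1)) + ι F (u 0) * ι F (u 5) - ι F (u 1) * ι F (u 5) - ι F (u 2) * ι F (u 3) + ι F (u 2) * ι F (u 4) := by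
      simp only [map_add, map_sub, add_mul, mul_add, sub_mul, mul_sub,
        hsw (u 1) (u 4), hsw (u 3) (u 4), hsw (u 2) (u 4), hsw (u 0) (u 1),
        hsw (u 0) (u 3), hsw (u 2) (u 3)]
      module
    have e2 : ι F (u 3) * ι F (u 4) = (2 : F)⁻¹ • ((2 : F) • (ι F (u 3) * ι F (u 4))) := (inv_smul_smul₀ h2 _).symm
    rw [e2, e]
    exact Submodule.smul_mem _ _ (add_mem (sub_mem (sub_mem (add_mem (sub_mem (sub_mem
      (add_mem kg1 kg2) kg3) (Submodule.smul_mem _ _ kw1)) kg7) kg9) kg10) kg11)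
  have m03 : ι F (u 0) * ι F (u 3) ∈ Submodule.span F A ⊔ Submodule.span F W := by
    have e : (2 : F) • (ι F (u 0) * ι F (u 3)) = (2 : F) • (ι F (u 1) * ι F (u 2)) - (2 : F) • (ι F (u 1) * ι F (u 4))
        - ι F (u 0) * ι F (u 5) + ι F (u 1) * ι F (u 5) - ι F (u 2) * ι F (u 3) - ι F (u 2) * ι F (u 4)
        - (ι F (u 0 + u 4) * ι F (u 1 - u 3 - u 5)) - (ι F (u 1 + u 4) * ι F (u 2 + u 5)) - (ι F (u 1 + u 3) * ι F (u 0 + u 2 - u 4)) := by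
      simp only [map_add, map_sub, add_mul, mul_add, sub_mul, mul_sub,
        hsw (u 1) (u 4), hsw (u 3) (u 4), hsw (u 2) (u 4), hsw (u 0) (u 1),
        hsw (u 0) (u 3), hsw (u 2) (u 3)]
      module
    have e2 : ι F (u 0) * ι F (u 3) = (2 : F)⁻¹ • ((2 : F) • (ι F (u 0) * ι F (u 3))) := (inv_smul_smul₀ h2 _).symm
    rw [e2, e]
    exact Submodule.smul_mem _ _ (sub_mem (sub_mem (sub_mem (sub_mem (sub_mem (add_mem
      (sub_mem (sub_mem (Submodule.smul_mem _ _ kw2) (Submodule.smul_mem _ _ kg8)) kg7)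
      kg9) kg10) kg11) kg1) kg2) kg3)
  have hEmem : ∀ i j : Fin 6, ι F (u i) * ι F (u j) ∈
      Submodule.span F A ⊔ Submodule.span F W := by
    intro i j
    fin_cases i <;> fin_cases j <;>
      first
        | (rw [ι_sq_zero]; exact zero_mem _)
        | exact kw1 | exact kg6 | exact m03 | exact m04 | exact kg7 | exact kw2 | exact m13 | exact kg8 | exact kg9 | exact kg10 | exact kg11 | exact kw3 | exact m34 | exact kg12 | exact m45
        | (rw [hsw]; first | exact neg_mem kw1 | exact neg_mem kg6 | exact neg_mem m03 | exact neg_mem m04 | exact neg_mem kg7 | exact neg_mem kw2 | exact neg_mem m13 | exact neg_mem kg8 | exact neg_mem kg9 | exact neg_mem kg10 | exact neg_mem kg11 | exact neg_mem kw3 | exact neg_mem m34 | exact neg_mem kg12 | exact neg_mem m45)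
  have hrng : LinearMap.range (ι F : U →ₗ[F] ExteriorAlgebra F U)
      = Submodule.span F (ι F '' Set.range u) := by
    rw [← Submodule.map_top, ← u.span_eq, Submodule.map_span]
  have hT : (⋀[F]^2 U : Submodule F (ExteriorAlgebra F U))
      ≤ Submodule.span F A ⊔ Submodule.span F W := by
    rw [hpow, hrng, Submodule.span_mul_span]
    refine Submodule.span_le.mpr ?_
    rintro x hx
    rw [Set.mem_mul] at hx
    obtain ⟨a, ha, b, hb, rfl⟩ := hx
    obtain ⟨a', ⟨i, rfl⟩, rfl⟩ := ha
    obtain ⟨b', ⟨j, rfl⟩, rfl⟩ := hb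
    exact hEmem i j
  have hAS : ∀ x ∈ A, x ∈ S₂ := by
    intro x hx
    rw [hA] at hx
    simp only [Set.mem_insert_iff, Set.mem_singleton_iff] at hx
    rcases hx with rfl|rfl|rfl|rfl|rfl|rfl|rfl|rfl|rfl|rfl|rfl|rfl
    · exact hS1
    · exact hS2
    · exact hS3
    · exact hS4
    · exact hS5
    · exact hS6
    · exact hS7
    · exact hS8
    · exact hS9
    · exact hS10
    · exact hS11
    · exact hS12
  have hAD : A ⊆ {x | x ∈ S₂ ∧ ∃ a b : U, x = ι F a * ι F b} := by
    intro x hx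
    rw [hA] at hx
    simp only [Set.mem_insert_iff, Set.mem_singleton_iff] at hx
    rcases hx with rfl|rfl|rfl|rfl|rfl|rfl|rfl|rfl|rfl|rfl|rfl|rfl
    · exact ⟨hS1, u 0 + u 4, u 1 - u 3 - u 5, rfl⟩
    · exact ⟨hS2, u 1 + u 4, u 2 + u 5, rfl⟩
    · exact ⟨hS3, u 1 + u 3, u 0 + u 2 - u 4, rfl⟩
    · exact ⟨hS4, u 1 + u 2, u 3 + u 5, rfl⟩
    · exact ⟨hS5, u 0 + u 2, u 4 + t • u 5, rfl⟩
    · exact ⟨hS6, u 0, u 2, rfl⟩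
    · exact ⟨hS7, u 0, u 5, rfl⟩
    · exact ⟨hS8, u 1, u 4, rfl⟩
    · exact ⟨hS9, u 1, u 5, rfl⟩
    · exact ⟨hS10, u 2, u 3, rfl⟩
    · exact ⟨hS11, u 2, u 4, rfl⟩
    · exact ⟨hS12, u 3, u 5, rfl⟩
  refine le_antisymm (Submodule.span_le.mpr fun x hx => hx.1) ?_
  intro x hx
  obtain ⟨⟨⟨hx2, hk1⟩, hk2⟩, hk3⟩ := hx
  have hk1 : φ₁ x = 0 := hk1
  have hk2 : φ₂ x = 0 := hk2
  have hk3 : φ₃ x = 0 := hk3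
  have hxK := hT hx2
  rw [Submodule.mem_sup] at hxK
  obtain ⟨y, hy, z, hz, rfl⟩ := hxK
  rw [hW, Submodule.mem_span_insert] at hz
  obtain ⟨c1, z1, hz1, rfl⟩ := hz
  rw [Submodule.mem_span_insert] at hz1
  obtain ⟨c2, z2, hz2, rfl⟩ := hz1
  rw [Submodule.mem_span_singleton] at hz2
  obtain ⟨c3, rfl⟩ := hz2
  have hyS : y ∈ S₂ := Submodule.span_le.mpr hAS hy
  obtain ⟨⟨⟨hy2, hy1k⟩, hy2k⟩, hy3k⟩ := hyS
  have hy1 : φ₁ y = 0 := hy1k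
  have hy2' : φ₂ y = 0 := hy2k
  have hy3 : φ₃ y = 0 := hy3k
  have hc1 : c1 = 0 := by
    have h := hk1
    rw [map_add, hy1, map_add, map_smul, map_add, map_smul, map_smul,
      hw11, hw12, hw13] at h
    simpa using h
  have hc2 : c2 = 0 := by
    have h := hk2
    rw [map_add, hy2', map_add, map_smul, map_add, map_smul, map_smul,
      hw21, hw22, hw23] at h
    simpa using h
  have hc3 : c3 = 0 := by
    have h := hk3
    rw [map_add, hy3, map_add, map_smul, map_add, map_smul, map_smul,
      hw31, hw32, hw33] at h
    simpa using h
  rw [hc1, hc2, hc3]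
  simpa using Submodule.span_le.mpr (fun g hg => Submodule.subset_span (hAD hg)) hy
end

section
/- Let p be an odd prime. Let U be a 6-dimensional F_p-vector space with basis u₁,...,u₆, set f₁ = u₁*∧u₂* − u₄*∧u₅*, f₂ = u₂*∧u₃* − u₅*∧u₆* + u₁*∧u₄*, f₃ = u₃*∧u₆* − u₂*∧u₄* in Λ²U*, and K³ = span{fᵢ∧uⱼ*} ⊆ Λ³U*. Then S³ = (K³)^⊥ ⊆ Λ³U equals span{w₁, w₂} where w₁ = u₁∧u₂∧u₃ + u₁∧u₅∧u₆ + u₃∧u₄∧u₅ and w₂ = u₁∧u₃∧u₅, and the span of elements of S³ of the form u'∧u (u' ∈ Λ²U, u ∈ U) equals span{w₂}. -/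
open ExteriorAlgebra

set_option maxHeartbeats 1000000

namespace Stmt11Aux

def TT : Fin 20 → Fin 3 → Fin 6 :=
  ![![0,1,2],![0,1,3],![0,1,4],![0,1,5],![0,2,3],![0,2,4],![0,2,5],![0,3,4],![0,3,5],![0,4,5],
    ![1,2,3],![1,2,4],![1,2,5],![1,3,4],![1,3,5],![1,4,5],![2,3,4],![2,3,5],![2,4,5],![3,4,5]]

set_option maxRecDepth 10000 in
lemma TT_inj : ∀ k, Function.Injective (TT k) := by decide

set_option maxRecDepth 10000 in
lemma TT_ne : ∀ l k : Fin 20, l ≠ k → ∃ i, ∀ j, TT k i ≠ TT l j := by decide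

set_option maxRecDepth 10000 in
lemma TT_mem : ∀ s : Fin 3 → Fin 6, StrictMono s → ∃ k, s = TT k := by decide

lemma TT_cover : ∀ r : Fin 3 → Fin 6, Function.Injective r →
    ∃ k, ∃ σ : Equiv.Perm (Fin 3), r = TT k ∘ σ := by
  intro r hr
  have hm : Monotone (r ∘ Tuple.sort r) := Tuple.monotone_sort r
  have hsm : StrictMono (r ∘ Tuple.sort r) :=
    hm.strictMono_of_injective (hr.comp (Tuple.sort r).injective)
  obtain ⟨k, hk⟩ := TT_mem _ hsm
  refine ⟨k, (Tuple.sort r)⁻¹, ?_⟩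
  funext i
  have := congrFun hk ((Tuple.sort r)⁻¹ i)
  simpa using this

variable {F U : Type*} [Field F] [AddCommGroup U] [Module F U]

lemma pairDual_ιMulti (d : ℕ) (f : Fin d → Module.Dual F U) (v : Fin d → U) :
    pairDual F U d f (ιMulti F d v) = Matrix.det (Matrix.of fun i j => f j (v i)) := by
  rw [pairDual, ExteriorAlgebra.liftAlternating_apply_ιMulti, Pi.single_eq_same,
    Matrix.detRowAlternating.compLinearMap_apply]
  rfl

lemma pairDual_eq_smul {d : ℕ} (f g : Fin d → Module.Dual F U) (c : F)
    (h : ∀ v : Fin d → U, Matrix.det (Matrix.of fun i j => f j (v i))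
        = c * Matrix.det (Matrix.of fun i j => g j (v i))) :
    pairDual F U d f = c • pairDual F U d g := by
  unfold pairDual
  rw [← map_smul]
  congr 1
  have : (Matrix.detRowAlternating.compLinearMap (LinearMap.pi f) : U [⋀^Fin d]→ₗ[F] F)
      = c • Matrix.detRowAlternating.compLinearMap (LinearMap.pi g) := by
    ext v
    exact h v
  rw [this, Pi.single_smul]

lemma ιMulti_two (a b : U) :
    ιMulti F 2 ![a, b] = ι F a * ι F b := by
  simp [ExteriorAlgebra.ιMulti_apply, List.ofFn_succ]

lemma ιMulti_three (a b c : U) :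
    ιMulti F 3 ![a, b, c] = ι F a * ι F b * ι F c := by
  simp [ExteriorAlgebra.ιMulti_apply, List.ofFn_succ, mul_assoc]

lemma ιMulti_four (a b c d : U) :
    ιMulti F 4 ![a, b, c, d] = ι F a * ι F b * ι F c * ι F d := by
  simp [ExteriorAlgebra.ιMulti_apply, List.ofFn_succ, mul_assoc]

variable (u : Module.Basis (Fin 6) F U)

noncomputable def mB (k : Fin 20) : ExteriorAlgebra F U := ιMulti F 3 fun i => u (TT k i)

noncomputable def πB (k : Fin 20) : ExteriorAlgebra F U →ₗ[F] F :=
  pairDual F U 3 fun i => u.coord (TT k i)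

lemma coord_basis (i j : Fin 6) : u.coord i (u j) = if j = i then (1:F) else 0 := by
  simp [Module.Basis.coord_apply, Finsupp.single_apply]

lemma πB_mB (l k : Fin 20) : πB u l (mB u k) = if l = k then (1:F) else 0 := by
  rw [mB, πB, pairDual_ιMulti]
  by_cases h : l = k
  · subst h
    rw [if_pos rfl]
    have h1 : (Matrix.of fun i j => u.coord (TT l j) (u (TT l i)))
        = (1 : Matrix (Fin 3) (Fin 3) F) := by
      ext i j
      rw [Matrix.of_apply, coord_basis, Matrix.one_apply]
      simp [(TT_inj l).eq_iff, eq_comm]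
    rw [h1, Matrix.det_one]
  · rw [if_neg h]
    obtain ⟨i, hi⟩ := TT_ne l k h
    exact Matrix.det_eq_zero_of_row_eq_zero i fun j => by
      rw [Matrix.of_apply, coord_basis, if_neg (hi j)]

lemma mem_span_mB {x : ExteriorAlgebra F U} (hx : x ∈ ⋀[F]^3 U) :
    x ∈ Submodule.span F (Set.range (mB u)) := by
  have hsub : Set.range (ιMulti F 3 (M := U)) ⊆ ↑(Submodule.span F (Set.range (mB u))) := by
    rintro _ ⟨v, rfl⟩
    have hv : (fun i => ∑ j, u.repr (v i) j • u j) = v := by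
      funext i; exact u.sum_repr (v i)
    have expand : (ιMulti F 3 (M := U)) (fun i => ∑ j, u.repr (v i) j • u j)
        = ∑ r : Fin 3 → Fin 6, (ιMulti F 3) fun i => u.repr (v i) (r i) • u (r i) :=
      (ιMulti F 3).toMultilinearMap.map_sum (g := fun i j => u.repr (v i) j • u j)
    rw [← hv, expand]
    refine Submodule.sum_mem _ fun r _ => ?_
    have : (ιMulti F 3 fun i => u.repr (v i) (r i) • u (r i))
        = (∏ i, u.repr (v i) (r i)) • ιMulti F 3 fun i => u (r i) :=
      (ιMulti F 3).toMultilinearMap.map_smul_univ _ _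
    rw [this]
    refine Submodule.smul_mem _ _ ?_
    by_cases hr : Function.Injective r
    · obtain ⟨k, σ, hk⟩ := TT_cover r hr
      have : (fun i => u (r i)) = (fun i => u (TT k i)) ∘ σ := by
        funext i; simp [hk, Function.comp]
      rw [this, AlternatingMap.map_perm, Units.smul_def]
      exact zsmul_mem (Submodule.subset_span (Set.mem_range_self k)) _
    · obtain ⟨i, j, hij, hne⟩ := Function.not_injective_iff.mp hr
      rw [(ιMulti F 3).map_eq_zero_of_eq _ (by rw [hij]) hne]
      exact Submodule.zero_mem _
  rw [← ExteriorAlgebra.ιMulti_span_fixedDegree] at hx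
  exact Submodule.span_le.mpr hsub hx

lemma eq_zero_of_forall_πB {y : ExteriorAlgebra F U} (hy : y ∈ ⋀[F]^3 U)
    (h : ∀ l, πB u l y = 0) : y = 0 := by
  obtain ⟨c, hc⟩ := (Submodule.mem_span_range_iff_exists_fun F).mp (mem_span_mB u hy)
  have hcl : ∀ l, c l = 0 := by
    intro l
    rw [← h l, ← hc]
    rw [map_sum]
    simp [πB_mB, Finset.sum_ite_eq]
  rw [← hc]
  simp [hcl]

lemma πB_explicit (k : Fin 20) (a b c : Fin 6) (hk : TT k = ![a, b, c]) :
    pairDual F U 3 ![u.coord a, u.coord b, u.coord c] = πB u k := by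
  rw [πB]
  congr 1
  funext i
  fin_cases i <;> simp [hk]

lemma norm3 (a b c : Fin 6) (k : Fin 20) (ε : F) (a' b' c' : Fin 6)
    (hk : TT k = ![a', b', c'])
    (h : ∀ w : Fin 3 → Fin 6 → F,
      Matrix.det (Matrix.of fun i j => w i ((![a, b, c] : Fin 3 → Fin 6) j))
        = ε * Matrix.det (Matrix.of fun i j => w i ((![a', b', c'] : Fin 3 → Fin 6) j))) :
    pairDual F U 3 ![u.coord a, u.coord b, u.coord c] = ε • πB u k := by
  rw [← πB_explicit u k a' b' c' hk]
  apply pairDual_eq_smul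
  intro v
  have e : ∀ x y z : Fin 6,
      (Matrix.of fun i j => (![u.coord x, u.coord y, u.coord z] : Fin 3 → Module.Dual F U) j (v i))
        = Matrix.of fun i j => (fun i y => u.coord y (v i)) i ((![x, y, z] : Fin 3 → Fin 6) j) := by
    intro x y z
    ext i j
    fin_cases j <;> rfl
  rw [e, e]
  exact h _

lemma zero3 (a b c : Fin 6)
    (h : ∀ w : Fin 3 → Fin 6 → F,
      Matrix.det (Matrix.of fun i j => w i ((![a, b, c] : Fin 3 → Fin 6) j)) = 0) :
    pairDual F U 3 ![u.coord a, u.coord b, u.coord c] = 0 := by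
  have := pairDual_eq_smul (![u.coord a, u.coord b, u.coord c])
      (![u.coord a, u.coord b, u.coord c]) (0 : F) ?_
  · simpa using this
  intro v
  have e : (Matrix.of fun i j => (![u.coord a, u.coord b, u.coord c] : Fin 3 → Module.Dual F U) j (v i))
      = Matrix.of fun i j => (fun i y => u.coord y (v i)) i ((![a, b, c] : Fin 3 → Fin 6) j) := by
    ext i j
    fin_cases j <;> rfl
  rw [e, zero_mul]
  exact h _

lemma z010 : pairDual F U 3 ![u.coord 0, u.coord 1, u.coord 0] = 0 := by
  apply zero3
  intro w
  simp [Matrix.det_fin_three]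
  try ring

lemma z011 : pairDual F U 3 ![u.coord 0, u.coord 1, u.coord 1] = 0 := by
  apply zero3
  intro w
  simp [Matrix.det_fin_three]
  try ring

lemma z343 : pairDual F U 3 ![u.coord 3, u.coord 4, u.coord 3] = 0 := by
  apply zero3
  intro w
  simp [Matrix.det_fin_three]
  try ring

lemma z344 : pairDual F U 3 ![u.coord 3, u.coord 4, u.coord 4] = 0 := by
  apply zero3
  intro w
  simp [Matrix.det_fin_three]
  try ring

lemma z121 : pairDual F U 3 ![u.coord 1, u.coord 2, u.coord 1] = 0 := by
  apply zero3
  intro w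
  simp [Matrix.det_fin_three]
  try ring

lemma z122 : pairDual F U 3 ![u.coord 1, u.coord 2, u.coord 2] = 0 := by
  apply zero3
  intro w
  simp [Matrix.det_fin_three]
  try ring

lemma z454 : pairDual F U 3 ![u.coord 4, u.coord 5, u.coord 4] = 0 := by
  apply zero3
  intro w
  simp [Matrix.det_fin_three]
  try ring

lemma z455 : pairDual F U 3 ![u.coord 4, u.coord 5, u.coord 5] = 0 := by
  apply zero3
  intro w
  simp [Matrix.det_fin_three]
  try ring

lemma z030 : pairDual F U 3 ![u.coord 0, u.coord 3, u.coord 0] = 0 := by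
  apply zero3
  intro w
  simp [Matrix.det_fin_three]
  try ring

lemma z033 : pairDual F U 3 ![u.coord 0, u.coord 3, u.coord 3] = 0 := by
  apply zero3
  intro w
  simp [Matrix.det_fin_three]
  try ring

lemma z252 : pairDual F U 3 ![u.coord 2, u.coord 5, u.coord 2] = 0 := by
  apply zero3
  intro w
  simp [Matrix.det_fin_three]
  try ring

lemma z255 : pairDual F U 3 ![u.coord 2, u.coord 5, u.coord 5] = 0 := by
  apply zero3
  intro w
  simp [Matrix.det_fin_three]
  try ring

lemma z131 : pairDual F U 3 ![u.coord 1, u.coord 3, u.coord 1] = 0 := by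
  apply zero3
  intro w
  simp [Matrix.det_fin_three]
  try ring

lemma z133 : pairDual F U 3 ![u.coord 1, u.coord 3, u.coord 3] = 0 := by
  apply zero3
  intro w
  simp [Matrix.det_fin_three]
  try ring

lemma n012 : pairDual F U 3 ![u.coord 0, u.coord 1, u.coord 2] = πB u 0 := by
  have h := norm3 u 0 1 2 0 (1 : F) 0 1 2 (by decide) ?_
  · rw [h]; module
  intro w
  simp [Matrix.det_fin_three]
  try ring

lemma n013 : pairDual F U 3 ![u.coord 0, u.coord 1, u.coord 3] = πB u 1 := by
  have h := norm3 u 0 1 3 1 (1 : F) 0 1 3 (by decide) ?_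
  · rw [h]; module
  intro w
  simp [Matrix.det_fin_three]
  try ring

lemma n014 : pairDual F U 3 ![u.coord 0, u.coord 1, u.coord 4] = πB u 2 := by
  have h := norm3 u 0 1 4 2 (1 : F) 0 1 4 (by decide) ?_
  · rw [h]; module
  intro w
  simp [Matrix.det_fin_three]
  try ring

lemma n015 : pairDual F U 3 ![u.coord 0, u.coord 1, u.coord 5] = πB u 3 := by
  have h := norm3 u 0 1 5 3 (1 : F) 0 1 5 (by decide) ?_
  · rw [h]; module
  intro w
  simp [Matrix.det_fin_three]
  try ring

lemma n340 : pairDual F U 3 ![u.coord 3, u.coord 4, u.coord 0] = πB u 7 := by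
  have h := norm3 u 3 4 0 7 (1 : F) 0 3 4 (by decide) ?_
  · rw [h]; module
  intro w
  simp [Matrix.det_fin_three]
  try ring

lemma n341 : pairDual F U 3 ![u.coord 3, u.coord 4, u.coord 1] = πB u 13 := by
  have h := norm3 u 3 4 1 13 (1 : F) 1 3 4 (by decide) ?_
  · rw [h]; module
  intro w
  simp [Matrix.det_fin_three]
  try ring

lemma n342 : pairDual F U 3 ![u.coord 3, u.coord 4, u.coord 2] = πB u 16 := by
  have h := norm3 u 3 4 2 16 (1 : F) 2 3 4 (by decide) ?_
  · rw [h]; module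
  intro w
  simp [Matrix.det_fin_three]
  try ring

lemma n345 : pairDual F U 3 ![u.coord 3, u.coord 4, u.coord 5] = πB u 19 := by
  have h := norm3 u 3 4 5 19 (1 : F) 3 4 5 (by decide) ?_
  · rw [h]; module
  intro w
  simp [Matrix.det_fin_three]
  try ring

lemma n120 : pairDual F U 3 ![u.coord 1, u.coord 2, u.coord 0] = πB u 0 := by
  have h := norm3 u 1 2 0 0 (1 : F) 0 1 2 (by decide) ?_
  · rw [h]; module
  intro w
  simp [Matrix.det_fin_three]
  try ring

lemma n123 : pairDual F U 3 ![u.coord 1, u.coord 2, u.coord 3] = πB u 10 := by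
  have h := norm3 u 1 2 3 10 (1 : F) 1 2 3 (by decide) ?_
  · rw [h]; module
  intro w
  simp [Matrix.det_fin_three]
  try ring

lemma n124 : pairDual F U 3 ![u.coord 1, u.coord 2, u.coord 4] = πB u 11 := by
  have h := norm3 u 1 2 4 11 (1 : F) 1 2 4 (by decide) ?_
  · rw [h]; module
  intro w
  simp [Matrix.det_fin_three]
  try ring

lemma n125 : pairDual F U 3 ![u.coord 1, u.coord 2, u.coord 5] = πB u 12 := by
  have h := norm3 u 1 2 5 12 (1 : F) 1 2 5 (by decide) ?_
  · rw [h]; module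
  intro w
  simp [Matrix.det_fin_three]
  try ring

lemma n450 : pairDual F U 3 ![u.coord 4, u.coord 5, u.coord 0] = πB u 9 := by
  have h := norm3 u 4 5 0 9 (1 : F) 0 4 5 (by decide) ?_
  · rw [h]; module
  intro w
  simp [Matrix.det_fin_three]
  try ring

lemma n451 : pairDual F U 3 ![u.coord 4, u.coord 5, u.coord 1] = πB u 15 := by
  have h := norm3 u 4 5 1 15 (1 : F) 1 4 5 (by decide) ?_
  · rw [h]; module
  intro w
  simp [Matrix.det_fin_three]
  try ring

lemma n452 : pairDual F U 3 ![u.coord 4, u.coord 5, u.coord 2] = πB u 18 := by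
  have h := norm3 u 4 5 2 18 (1 : F) 2 4 5 (by decide) ?_
  · rw [h]; module
  intro w
  simp [Matrix.det_fin_three]
  try ring

lemma n453 : pairDual F U 3 ![u.coord 4, u.coord 5, u.coord 3] = πB u 19 := by
  have h := norm3 u 4 5 3 19 (1 : F) 3 4 5 (by decide) ?_
  · rw [h]; module
  intro w
  simp [Matrix.det_fin_three]
  try ring

lemma n031 : pairDual F U 3 ![u.coord 0, u.coord 3, u.coord 1] = -πB u 1 := by
  have h := norm3 u 0 3 1 1 (-1 : F) 0 1 3 (by decide) ?_
  · rw [h]; module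
  intro w
  simp [Matrix.det_fin_three]
  try ring

lemma n032 : pairDual F U 3 ![u.coord 0, u.coord 3, u.coord 2] = -πB u 4 := by
  have h := norm3 u 0 3 2 4 (-1 : F) 0 2 3 (by decide) ?_
  · rw [h]; module
  intro w
  simp [Matrix.det_fin_three]
  try ring

lemma n034 : pairDual F U 3 ![u.coord 0, u.coord 3, u.coord 4] = πB u 7 := by
  have h := norm3 u 0 3 4 7 (1 : F) 0 3 4 (by decide) ?_
  · rw [h]; module
  intro w
  simp [Matrix.det_fin_three]
  try ring

lemma n035 : pairDual F U 3 ![u.coord 0, u.coord 3, u.coord 5] = πB u 8 := by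
  have h := norm3 u 0 3 5 8 (1 : F) 0 3 5 (by decide) ?_
  · rw [h]; module
  intro w
  simp [Matrix.det_fin_three]
  try ring

lemma n250 : pairDual F U 3 ![u.coord 2, u.coord 5, u.coord 0] = πB u 6 := by
  have h := norm3 u 2 5 0 6 (1 : F) 0 2 5 (by decide) ?_
  · rw [h]; module
  intro w
  simp [Matrix.det_fin_three]
  try ring

lemma n251 : pairDual F U 3 ![u.coord 2, u.coord 5, u.coord 1] = πB u 12 := by
  have h := norm3 u 2 5 1 12 (1 : F) 1 2 5 (by decide) ?_
  · rw [h]; module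
  intro w
  simp [Matrix.det_fin_three]
  try ring

lemma n253 : pairDual F U 3 ![u.coord 2, u.coord 5, u.coord 3] = -πB u 17 := by
  have h := norm3 u 2 5 3 17 (-1 : F) 2 3 5 (by decide) ?_
  · rw [h]; module
  intro w
  simp [Matrix.det_fin_three]
  try ring

lemma n254 : pairDual F U 3 ![u.coord 2, u.coord 5, u.coord 4] = -πB u 18 := by
  have h := norm3 u 2 5 4 18 (-1 : F) 2 4 5 (by decide) ?_
  · rw [h]; module
  intro w
  simp [Matrix.det_fin_three]
  try ring

lemma n130 : pairDual F U 3 ![u.coord 1, u.coord 3, u.coord 0] = πB u 1 := by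
  have h := norm3 u 1 3 0 1 (1 : F) 0 1 3 (by decide) ?_
  · rw [h]; module
  intro w
  simp [Matrix.det_fin_three]
  try ring

lemma n132 : pairDual F U 3 ![u.coord 1, u.coord 3, u.coord 2] = -πB u 10 := by
  have h := norm3 u 1 3 2 10 (-1 : F) 1 2 3 (by decide) ?_
  · rw [h]; module
  intro w
  simp [Matrix.det_fin_three]
  try ring

lemma n134 : pairDual F U 3 ![u.coord 1, u.coord 3, u.coord 4] = πB u 13 := by
  have h := norm3 u 1 3 4 13 (1 : F) 1 3 4 (by decide) ?_
  · rw [h]; module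
  intro w
  simp [Matrix.det_fin_three]
  try ring

lemma n135 : pairDual F U 3 ![u.coord 1, u.coord 3, u.coord 5] = πB u 14 := by
  have h := norm3 u 1 3 5 14 (1 : F) 1 3 5 (by decide) ?_
  · rw [h]; module
  intro w
  simp [Matrix.det_fin_three]
  try ring

lemma sa4 : ∀ (i : Fin 4) (j : Fin 3), Fin.succAbove i j = ![![1,2,3],![0,2,3],![0,1,3],![0,1,2]] i j := by decide

lemma sa3 : ∀ (i : Fin 3) (j : Fin 2), Fin.succAbove i j = ![![1,2],![0,2],![0,1]] i j := by decide

lemma sa2 : ∀ (i : Fin 2) (j : Fin 1), Fin.succAbove i j = ![![1],![0]] i j := by decide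

noncomputable def W1e : ExteriorAlgebra F U :=
  ι F (u 0) * ι F (u 1) * ι F (u 2) + ι F (u 0) * ι F (u 4) * ι F (u 5)
    + ι F (u 2) * ι F (u 3) * ι F (u 4)

noncomputable def W2e : ExteriorAlgebra F U := ι F (u 0) * ι F (u 2) * ι F (u 4)

lemma mB_eq (k : Fin 20) (a b c : Fin 6) (h : TT k = ![a, b, c]) :
    mB u k = ι F (u a) * ι F (u b) * ι F (u c) := by
  rw [mB]
  have h2 : (fun i => u (TT k i)) = ![u a, u b, u c] := by
    funext i
    fin_cases i <;> simp [h]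
  rw [h2, ιMulti_three]

lemma W1e_eq : W1e u = mB u 0 + mB u 9 + mB u 16 := by
  rw [W1e, mB_eq u 0 0 1 2 (by decide), mB_eq u 9 0 4 5 (by decide),
    mB_eq u 16 2 3 4 (by decide)]

lemma W2e_eq : W2e u = mB u 5 := by
  rw [W2e, mB_eq u 5 0 2 4 (by decide)]

lemma W1e_mem : W1e u ∈ ⋀[F]^3 U := by
  rw [W1e_eq]
  refine add_mem (add_mem ?_ ?_) ?_ <;>
    exact ExteriorAlgebra.ιMulti_range F 3 (Set.mem_range_self _)

lemma W2e_mem : W2e u ∈ ⋀[F]^3 U := by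
  rw [W2e_eq]
  exact ExteriorAlgebra.ιMulti_range F 3 (Set.mem_range_self _)

noncomputable def S3 : Submodule F (ExteriorAlgebra F U) :=
  ⋀[F]^3 U ⊓ ⨅ i : Fin 3, ⨅ j : Fin 6, LinearMap.ker
    ((![pairDual F U 3 ![u.coord 0, u.coord 1, u.coord j]
          - pairDual F U 3 ![u.coord 3, u.coord 4, u.coord j],
        pairDual F U 3 ![u.coord 1, u.coord 2, u.coord j]
          - pairDual F U 3 ![u.coord 4, u.coord 5, u.coord j]
          + pairDual F U 3 ![u.coord 0, u.coord 3, u.coord j],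
        pairDual F U 3 ![u.coord 2, u.coord 5, u.coord j]
          - pairDual F U 3 ![u.coord 1, u.coord 3, u.coord j]] : Fin 3 → _) i)

lemma mem_S3_iff (x : ExteriorAlgebra F U) :
    x ∈ S3 u ↔ x ∈ ⋀[F]^3 U ∧ ∀ i : Fin 3, ∀ j : Fin 6,
      ((![pairDual F U 3 ![u.coord 0, u.coord 1, u.coord j]
          - pairDual F U 3 ![u.coord 3, u.coord 4, u.coord j],
        pairDual F U 3 ![u.coord 1, u.coord 2, u.coord j]
          - pairDual F U 3 ![u.coord 4, u.coord 5, u.coord j]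
          + pairDual F U 3 ![u.coord 0, u.coord 3, u.coord j],
        pairDual F U 3 ![u.coord 2, u.coord 5, u.coord j]
          - pairDual F U 3 ![u.coord 1, u.coord 3, u.coord j]] : Fin 3 → _) i) x = 0 := by
  rw [S3, Submodule.mem_inf]
  simp [Submodule.mem_iInf, LinearMap.mem_ker]

lemma W1e_memS3 : W1e u ∈ S3 u := by
  rw [mem_S3_iff]
  refine ⟨W1e_mem u, ?_⟩
  intro i j
  fin_cases i <;> fin_cases j <;>
    simp [z010, z011, z343, z344, z121, z122, z454, z455, z030, z033, z252, z255, z131, z133, n012, n013, n014, n015, n340, n341, n342, n345, n120, n123, n124, n125, n450, n451, n452, n453, n031, n032, n034, n035, n250, n251, n253, n254, n130, n132, n134, n135, LinearMap.sub_apply, LinearMap.add_apply, LinearMap.neg_apply, LinearMap.zero_apply, Matrix.cons_val_zero, Matrix.cons_val_one, Matrix.head_cons, Matrix.cons_val_two, Matrix.tail_cons, W1e_eq, πB_mB]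

lemma W2e_memS3 : W2e u ∈ S3 u := by
  rw [mem_S3_iff]
  refine ⟨W2e_mem u, ?_⟩
  intro i j
  fin_cases i <;> fin_cases j <;>
    simp [z010, z011, z343, z344, z121, z122, z454, z455, z030, z033, z252, z255, z131, z133, n012, n013, n014, n015, n340, n341, n342, n345, n120, n123, n124, n125, n450, n451, n452, n453, n031, n032, n034, n035, n250, n251, n253, n254, n130, n132, n134, n135, LinearMap.sub_apply, LinearMap.add_apply, LinearMap.neg_apply, LinearMap.zero_apply, Matrix.cons_val_zero, Matrix.cons_val_one, Matrix.head_cons, Matrix.cons_val_two, Matrix.tail_cons, W2e_eq, πB_mB]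

lemma master1 : S3 u = Submodule.span F {W1e u, W2e u} := by
  refine le_antisymm ?_ ?_
  · intro x hx
    obtain ⟨hx3, hk⟩ := (mem_S3_iff u x).mp hx
    have E00 := hk 0 0
    have E01 := hk 0 1
    have E02 := hk 0 2
    have E03 := hk 0 3
    have E04 := hk 0 4
    have E05 := hk 0 5
    have E10 := hk 1 0
    have E11 := hk 1 1
    have E12 := hk 1 2
    have E13 := hk 1 3
    have E14 := hk 1 4
    have E15 := hk 1 5
    have E20 := hk 2 0
    have E21 := hk 2 1
    have E22 := hk 2 2
    have E23 := hk 2 3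
    have E24 := hk 2 4
    have E25 := hk 2 5
    simp only [z010, z011, z343, z344, z121, z122, z454, z455, z030, z033, z252, z255, z131, z133, n012, n013, n014, n015, n340, n341, n342, n345, n120, n123, n124, n125, n450, n451, n452, n453, n031, n032, n034, n035, n250, n251, n253, n254, n130, n132, n134, n135, LinearMap.sub_apply, LinearMap.add_apply, LinearMap.neg_apply, LinearMap.zero_apply, Matrix.cons_val_zero, Matrix.cons_val_one, Matrix.head_cons, Matrix.cons_val_two, Matrix.tail_cons] at E00 E01 E02 E03 E04 E05 E10 E11 E12 E13 E14 E15 E20 E21 E22 E23 E24 E25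
    have P7 : πB u 7 x = 0 := by linear_combination -E00
    have P13 : πB u 13 x = 0 := by linear_combination -E01
    have P1 : πB u 1 x = 0 := by linear_combination E03
    have P2 : πB u 2 x = 0 := by linear_combination E04
    have P15 : πB u 15 x = 0 := by linear_combination -E11 - P1
    have P12 : πB u 12 x = 0 := by linear_combination E21
    have P10 : πB u 10 x = 0 := by linear_combination E22
    have P19 : πB u 19 x = 0 := by linear_combination P10 - E13
    have P3 : πB u 3 x = 0 := by linear_combination E05 + P19
    have P17 : πB u 17 x = 0 := by linear_combination -E23
    have P14 : πB u 14 x = 0 := by linear_combination -E25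
    have P18 : πB u 18 x = 0 := by linear_combination -E24 - P13
    have P4 : πB u 4 x = 0 := by linear_combination -E12 - P18
    have P6 : πB u 6 x = 0 := by linear_combination E20 + P1
    have P11 : πB u 11 x = 0 := by linear_combination E14 - P7
    have P8 : πB u 8 x = 0 := by linear_combination E15 - P12
    have P16 : πB u 16 x = πB u 0 x := by linear_combination -E02
    have P9 : πB u 9 x = πB u 0 x := by linear_combination -E10
    have hmem : x - πB u 0 x • W1e u - πB u 5 x • W2e u = 0 := by
      refine eq_zero_of_forall_πB u
        (sub_mem (sub_mem hx3 (Submodule.smul_mem _ _ (W1e_mem u)))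
          (Submodule.smul_mem _ _ (W2e_mem u))) ?_
      intro l
      fin_cases l
      · simp [map_sub, map_smul, map_add, πB_mB, W1e_eq, W2e_eq]
      · simp [map_sub, map_smul, map_add, πB_mB, W1e_eq, W2e_eq]
        linear_combination P1
      · simp [map_sub, map_smul, map_add, πB_mB, W1e_eq, W2e_eq]
        linear_combination P2
      · simp [map_sub, map_smul, map_add, πB_mB, W1e_eq, W2e_eq]
        linear_combination P3
      · simp [map_sub, map_smul, map_add, πB_mB, W1e_eq, W2e_eq]
        linear_combination P4
      · simp [map_sub, map_smul, map_add, πB_mB, W1e_eq, W2e_eq]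
      · simp [map_sub, map_smul, map_add, πB_mB, W1e_eq, W2e_eq]
        linear_combination P6
      · simp [map_sub, map_smul, map_add, πB_mB, W1e_eq, W2e_eq]
        linear_combination P7
      · simp [map_sub, map_smul, map_add, πB_mB, W1e_eq, W2e_eq]
        linear_combination P8
      · simp [map_sub, map_smul, map_add, πB_mB, W1e_eq, W2e_eq]
        linear_combination P9
      · simp [map_sub, map_smul, map_add, πB_mB, W1e_eq, W2e_eq]
        linear_combination P10
      · simp [map_sub, map_smul, map_add, πB_mB, W1e_eq, W2e_eq]
        linear_combination P11
      · simp [map_sub, map_smul, map_add, πB_mB, W1e_eq, W2e_eq]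
        linear_combination P12
      · simp [map_sub, map_smul, map_add, πB_mB, W1e_eq, W2e_eq]
        linear_combination P13
      · simp [map_sub, map_smul, map_add, πB_mB, W1e_eq, W2e_eq]
        linear_combination P14
      · simp [map_sub, map_smul, map_add, πB_mB, W1e_eq, W2e_eq]
        linear_combination P15
      · simp [map_sub, map_smul, map_add, πB_mB, W1e_eq, W2e_eq]
        linear_combination P16
      · simp [map_sub, map_smul, map_add, πB_mB, W1e_eq, W2e_eq]
        linear_combination P17
      · simp [map_sub, map_smul, map_add, πB_mB, W1e_eq, W2e_eq]
        linear_combination P18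
      · simp [map_sub, map_smul, map_add, πB_mB, W1e_eq, W2e_eq]
        linear_combination P19

    rw [sub_sub, sub_eq_zero] at hmem
    rw [Submodule.mem_span_pair]
    exact ⟨πB u 0 x, πB u 5 x, hmem.symm⟩
  · rw [Submodule.span_le]
    rintro y (rfl | rfl)
    · exact W1e_memS3 u
    · exact W2e_memS3 u

lemma master2 :
    Submodule.span F
        {x | x ∈ S3 u ∧ ∃ u' ∈ ⋀[F]^2 U, ∃ v : U, x = u' * ι F v} =
      Submodule.span F {W2e u} := by
  refine le_antisymm ?_ ?_
  · rw [Submodule.span_le]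
    rintro x ⟨hxS, u', hu', v, rfl⟩
    rw [master1 u, Submodule.mem_span_pair] at hxS
    obtain ⟨a, b, hab⟩ := hxS
    have hzero : (a • W1e u + b • W2e u) * ι F v = 0 := by
      rw [hab, mul_assoc, ι_sq_zero, mul_zero]
    have hzero4 : a • (W1e u * ι F v) + b • (W2e u * ι F v) = 0 := by
      rw [← smul_mul_assoc, ← smul_mul_assoc, ← add_mul]
      exact hzero
    have hW1v : W1e u * ι F v = ιMulti F 4 ![u 0, u 1, u 2, v]
        + ιMulti F 4 ![u 0, u 4, u 5, v] + ιMulti F 4 ![u 2, u 3, u 4, v] := by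
      simp only [W1e, add_mul, ιMulti_four]
    have hW2v : W2e u * ι F v = ιMulti F 4 ![u 0, u 2, u 4, v] := by
      simp only [W2e, ιMulti_four]
    rw [hW1v, hW2v] at hzero4
    have q1 : a * u.repr v 3 = 0 := by
      have h := congrArg (pairDual F U 4 ![u.coord 0, u.coord 1, u.coord 2, u.coord 3]) hzero4
      simp only [map_add, map_smul, pairDual_ιMulti, smul_eq_mul, map_zero] at h
      simp [Matrix.det_succ_row_zero, Fin.sum_univ_succ, coord_basis, sa4, sa3, sa2, -mul_eq_zero] at h
      linear_combination h
    have q2 : a * u.repr v 1 = 0 := by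
      have h := congrArg (pairDual F U 4 ![u.coord 0, u.coord 1, u.coord 4, u.coord 5]) hzero4
      simp only [map_add, map_smul, pairDual_ιMulti, smul_eq_mul, map_zero] at h
      simp [Matrix.det_succ_row_zero, Fin.sum_univ_succ, coord_basis, sa4, sa3, sa2, -mul_eq_zero] at h
      linear_combination h
    have q3 : a * u.repr v 5 = 0 := by
      have h := congrArg (pairDual F U 4 ![u.coord 0, u.coord 1, u.coord 2, u.coord 5]) hzero4
      simp only [map_add, map_smul, pairDual_ιMulti, smul_eq_mul, map_zero] at h
      simp [Matrix.det_succ_row_zero, Fin.sum_univ_succ, coord_basis, sa4, sa3, sa2, -mul_eq_zero] at h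
      linear_combination h
    have q4 : a * u.repr v 4 + b * u.repr v 1 = 0 := by
      have h := congrArg (pairDual F U 4 ![u.coord 0, u.coord 1, u.coord 2, u.coord 4]) hzero4
      simp only [map_add, map_smul, pairDual_ιMulti, smul_eq_mul, map_zero] at h
      simp [Matrix.det_succ_row_zero, Fin.sum_univ_succ, coord_basis, sa4, sa3, sa2, -mul_eq_zero] at h
      linear_combination h
    have q5 : a * u.repr v 2 + b * u.repr v 5 = 0 := by
      have h := congrArg (pairDual F U 4 ![u.coord 0, u.coord 2, u.coord 4, u.coord 5]) hzero4
      simp only [map_add, map_smul, pairDual_ιMulti, smul_eq_mul, map_zero] at h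
      simp [Matrix.det_succ_row_zero, Fin.sum_univ_succ, coord_basis, sa4, sa3, sa2, -mul_eq_zero] at h
      linear_combination h
    have q6 : a * u.repr v 0 + b * u.repr v 3 = 0 := by
      have h := congrArg (pairDual F U 4 ![u.coord 0, u.coord 2, u.coord 3, u.coord 4]) hzero4
      simp only [map_add, map_smul, pairDual_ιMulti, smul_eq_mul, map_zero] at h
      simp [Matrix.det_succ_row_zero, Fin.sum_univ_succ, coord_basis, sa4, sa3, sa2, -mul_eq_zero] at h
      linear_combination -h
    by_cases ha : a = 0
    · rw [← hab, ha, zero_smul, zero_add]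
      exact Submodule.smul_mem _ _ (Submodule.subset_span rfl)
    · have hc0 : a * a * u.repr v 0 = 0 := by linear_combination a * q6 - b * q1
      have hc1 : a * a * u.repr v 1 = 0 := by linear_combination a * q2
      have hc2 : a * a * u.repr v 2 = 0 := by linear_combination a * q5 - b * q3
      have hc3 : a * a * u.repr v 3 = 0 := by linear_combination a * q1
      have hc4 : a * a * u.repr v 4 = 0 := by linear_combination a * q4 - b * q2
      have hc5 : a * a * u.repr v 5 = 0 := by linear_combination a * q3
      have hv : (a * a) • v = 0 := by
        rw [← (u.forall_coord_eq_zero_iff (x := (a * a) • v))]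
        intro i
        simp only [map_smul, Module.Basis.coord_apply, smul_eq_mul]
        fin_cases i
        · exact hc0
        · exact hc1
        · exact hc2
        · exact hc3
        · exact hc4
        · exact hc5
      have hv0 : v = 0 := by
        rcases smul_eq_zero.mp hv with h | h
        · exact absurd (mul_self_eq_zero.mp h) ha
        · exact h
      rw [hv0, map_zero, mul_zero]
      exact Submodule.zero_mem _
  · rw [Submodule.span_le]
    rintro y rfl
    refine Submodule.subset_span ?_
    refine ⟨?_, ι F (u 0) * ι F (u 2), ?_, u 4, ?_⟩
    · exact W2e_memS3 u
    · rw [← ιMulti_two]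
      exact ExteriorAlgebra.ιMulti_range F 2 (Set.mem_range_self _)
    · rw [W2e]

end Stmt11Aux

/-- Let `p` be odd, `U` a 6-dimensional `F_p`-vector space, `f₁ = u₁*∧u₂* − u₄*∧u₅*`,
`f₂ = u₂*∧u₃* − u₅*∧u₆* + u₁*∧u₄*`, `f₃ = u₃*∧u₆* − u₂*∧u₄*`, and
`K³ = span{fᵢ∧uⱼ*} ⊆ Λ³U*`.  Then `S³ = (K³)^⊥` equals `span{w₁, w₂}` where
`w₁ = u₁∧u₂∧u₃ + u₁∧u₅∧u₆ + u₃∧u₄∧u₅` and `w₂ = u₁∧u₃∧u₅`, and the span of the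
elements of `S³` of the form `u'∧u` equals `span{w₂}`. -/
theorem stmt_11 (p : ℕ) [Fact p.Prime] (hp2 : p ≠ 2)
    (U : Type*) [AddCommGroup U] [Module (ZMod p) U] (u : Module.Basis (Fin 6) (ZMod p) U) :
    let F := ZMod p
    let φ : Fin 3 → Fin 6 → (ExteriorAlgebra F U →ₗ[F] F) := fun i j =>
      ![pairDual F U 3 ![u.coord 0, u.coord 1, u.coord j]
          - pairDual F U 3 ![u.coord 3, u.coord 4, u.coord j],
        pairDual F U 3 ![u.coord 1, u.coord 2, u.coord j]
          - pairDual F U 3 ![u.coord 4, u.coord 5, u.coord j]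
          + pairDual F U 3 ![u.coord 0, u.coord 3, u.coord j],
        pairDual F U 3 ![u.coord 2, u.coord 5, u.coord j]
          - pairDual F U 3 ![u.coord 1, u.coord 3, u.coord j]] i
    let S₃ : Submodule F (ExteriorAlgebra F U) :=
      ⋀[F]^3 U ⊓ ⨅ i : Fin 3, ⨅ j : Fin 6, LinearMap.ker (φ i j)
    let e : Fin 6 → ExteriorAlgebra F U := fun i => ι F (u i)
    let w₁ := e 0 * e 1 * e 2 + e 0 * e 4 * e 5 + e 2 * e 3 * e 4
    let w₂ := e 0 * e 2 * e 4
    S₃ = Submodule.span F {w₁, w₂} ∧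
      Submodule.span F
          {x | x ∈ S₃ ∧ ∃ u' ∈ ⋀[F]^2 U, ∃ v : U, x = u' * ι F v} =
        Submodule.span F {w₂} := by
  intro F φ S₃ e w₁ w₂
  exact ⟨Stmt11Aux.master1 u, Stmt11Aux.master2 u⟩
end

section
/- Let U be a 4-dimensional F_p-vector space (p an odd prime) with basis u₁,...,u₄, and let S² ⊆ Λ²U be the annihilator of span{f₁, f₂, f₃} where f₁ = u₁*∧u₂*, f₂ = u₁*∧u₃* + u₂*∧u₄*, f₃ = u₁*∧u₄*, under the standard pairing Λ²U × Λ²U* → F_p. Then S² = span{u₂∧u₃, u₃∧u₄, u₁∧u₃ − u₂∧u₄}, the span of decomposable elements of S² equals span{u₂∧u₃, u₃∧u₄}, and hence S²_dec has codimension 1 in S². -/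
open ExteriorAlgebra

section aux
variable {F U : Type*} [Field F] [AddCommGroup U] [Module F U]

lemma aux_ιMulti_two (v : Fin 2 → U) : ιMulti F 2 v = ι F (v 0) * ι F (v 1) := by
  simp [ιMulti_apply, List.ofFn_succ, Matrix.vecTail]

lemma aux_pairDual_two (f g : Module.Dual F U) (a b : U) :
    pairDual F U 2 ![f, g] (ι F a * ι F b) = f a * g b - f b * g a := by
  rw [show ι F a * ι F b = ιMulti F 2 ![a, b] from (aux_ιMulti_two ![a,b]).symm,
    pairDual, liftAlternating_apply_ιMulti]
  simp only [Pi.single_eq_same, AlternatingMap.compLinearMap_apply]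
  show (Matrix.of fun j i => ![f, g] i (![a, b] j)).det = _
  rw [Matrix.det_fin_two]
  simp
  ring

lemma aux_expand (u : Module.Basis (Fin 4) F U) (a b : U) :
    ι F a * ι F b =
      (u.coord 0 a * u.coord 1 b - u.coord 1 a * u.coord 0 b) • (ι F (u 0) * ι F (u 1)) +
      (u.coord 0 a * u.coord 2 b - u.coord 2 a * u.coord 0 b) • (ι F (u 0) * ι F (u 2)) +
      (u.coord 0 a * u.coord 3 b - u.coord 3 a * u.coord 0 b) • (ι F (u 0) * ι F (u 3)) +
      (u.coord 1 a * u.coord 2 b - u.coord 2 a * u.coord 1 b) • (ι F (u 1) * ι F (u 2)) +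
      (u.coord 1 a * u.coord 3 b - u.coord 3 a * u.coord 1 b) • (ι F (u 1) * ι F (u 3)) +
      (u.coord 2 a * u.coord 3 b - u.coord 3 a * u.coord 2 b) • (ι F (u 2) * ι F (u 3)) := by
  have hswap : ∀ i j : Fin 4, ι F (u j) * ι F (u i) = -(ι F (u i) * ι F (u j)) := by
    intro i j
    have := ι_add_mul_swap (R := F) (u i) (u j)
    linear_combination (norm := module) this
  conv_lhs => rw [← u.sum_repr a, ← u.sum_repr b]
  rw [map_sum, map_sum, Finset.sum_mul_sum]
  simp only [map_smul, smul_mul_smul_comm, Fin.sum_univ_four]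
  rw [hswap 0 1, hswap 0 2, hswap 0 3, hswap 1 2, hswap 1 3, hswap 2 3,
    ι_sq_zero, ι_sq_zero, ι_sq_zero, ι_sq_zero]
  simp only [Module.Basis.coord_apply]
  module

lemma aux_coordval (u : Module.Basis (Fin 4) F U) (i j : Fin 4) :
    u.coord i (u j) = if j = i then 1 else 0 := by
  simp [Module.Basis.coord_apply, Module.Basis.repr_self, Finsupp.single_apply, eq_comm]

lemma aux_pd (u : Module.Basis (Fin 4) F U) (i j k l : Fin 4) :
    pairDual F U 2 ![u.coord i, u.coord j] (ι F (u k) * ι F (u l)) =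
      (if k = i then 1 else 0) * (if l = j then 1 else 0) -
      (if l = i then 1 else 0) * (if k = j then 1 else 0) := by
  rw [aux_pairDual_two, aux_coordval, aux_coordval, aux_coordval, aux_coordval]

end aux

set_option maxHeartbeats 1000000 in
/-- Let `U` be a 4-dimensional `F_p`-vector space (`p` odd) and `S² ⊆ Λ²U` the annihilator
of `span{f₁, f₂, f₃}` where `f₁ = u₁*∧u₂*`, `f₂ = u₁*∧u₃* + u₂*∧u₄*`, `f₃ = u₁*∧u₄*`.
Then `S² = span{u₂∧u₃, u₃∧u₄, u₁∧u₃ − u₂∧u₄}`, the span of the decomposable elements of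
`S²` equals `span{u₂∧u₃, u₃∧u₄}`, and `S²_dec` has codimension 1 in `S²`. -/
theorem stmt_15 (p : ℕ) [Fact p.Prime] (hp2 : p ≠ 2)
    (U : Type*) [AddCommGroup U] [Module (ZMod p) U] (u : Module.Basis (Fin 4) (ZMod p) U) :
    let F := ZMod p
    let φ₁ := pairDual F U 2 ![u.coord 0, u.coord 1]
    let φ₂ := pairDual F U 2 ![u.coord 0, u.coord 2] + pairDual F U 2 ![u.coord 1, u.coord 3]
    let φ₃ := pairDual F U 2 ![u.coord 0, u.coord 3]
    let S₂ : Submodule F (ExteriorAlgebra F U) :=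
      ⋀[F]^2 U ⊓ LinearMap.ker φ₁ ⊓ LinearMap.ker φ₂ ⊓ LinearMap.ker φ₃
    let e : Fin 4 → ExteriorAlgebra F U := fun i => ι F (u i)
    let S₂dec : Submodule F (ExteriorAlgebra F U) :=
      Submodule.span F {x | x ∈ S₂ ∧ ∃ a b : U, x = ι F a * ι F b}
    S₂ = Submodule.span F {e 1 * e 2, e 2 * e 3, e 0 * e 2 - e 1 * e 3} ∧
      S₂dec = Submodule.span F {e 1 * e 2, e 2 * e 3} ∧
      Module.finrank F S₂ = Module.finrank F S₂dec + 1 := by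
  intro F φ₁ φ₂ φ₃ S₂ e S₂dec
  have hee : ∀ i : Fin 4, e i = ι F (u i) := fun i => rfl
  -- membership of products in the exterior power
  have hpow : ∀ i j : Fin 4, e i * e j ∈ ⋀[F]^2 U := by
    intro i j
    have := ιMulti_range F 2 (M := U) ⟨![u i, u j], rfl⟩
    rwa [aux_ιMulti_two] at this
  -- values of the functionals on basis products
  have hφ₁ : ∀ k l : Fin 4, φ₁ (e k * e l) =
      (if k = (0:Fin 4) then 1 else 0) * (if l = (1:Fin 4) then 1 else 0) -
      (if l = (0:Fin 4) then 1 else 0) * (if k = (1:Fin 4) then 1 else 0) := fun k l => aux_pd u 0 1 k l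
  have hφ₃ : ∀ k l : Fin 4, φ₃ (e k * e l) =
      (if k = (0:Fin 4) then 1 else 0) * (if l = (3:Fin 4) then 1 else 0) -
      (if l = (0:Fin 4) then 1 else 0) * (if k = (3:Fin 4) then 1 else 0) := fun k l => aux_pd u 0 3 k l
  have hφ₂ : ∀ k l : Fin 4, φ₂ (e k * e l) =
      ((if k = (0:Fin 4) then 1 else 0) * (if l = (2:Fin 4) then 1 else 0) -
       (if l = (0:Fin 4) then 1 else 0) * (if k = (2:Fin 4) then 1 else 0)) +
      ((if k = (1:Fin 4) then 1 else 0) * (if l = (3:Fin 4) then 1 else 0) -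
       (if l = (1:Fin 4) then 1 else 0) * (if k = (3:Fin 4) then 1 else 0)) := by
    intro k l
    show pairDual F U 2 ![u.coord 0, u.coord 2] (e k * e l) +
      pairDual F U 2 ![u.coord 1, u.coord 3] (e k * e l) = _
    rw [aux_pd u 0 2 k l, aux_pd u 1 3 k l]
  -- the three generators lie in S₂
  have hg1 : e 1 * e 2 ∈ S₂ := by
    refine ⟨⟨⟨hpow 1 2, ?_⟩, ?_⟩, ?_⟩ <;>
      simp [LinearMap.mem_ker, hφ₁, hφ₂, hφ₃]
  have hg2 : e 2 * e 3 ∈ S₂ := by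
    refine ⟨⟨⟨hpow 2 3, ?_⟩, ?_⟩, ?_⟩ <;>
      simp [LinearMap.mem_ker, hφ₁, hφ₂, hφ₃]
  have hg3 : e 0 * e 2 - e 1 * e 3 ∈ S₂ := by
    refine ⟨⟨⟨sub_mem (hpow 0 2) (hpow 1 3), ?_⟩, ?_⟩, ?_⟩ <;>
      simp [LinearMap.mem_ker, map_sub, hφ₁, hφ₂, hφ₃]
  -- Part 1
  have h1 : S₂ = Submodule.span F {e 1 * e 2, e 2 * e 3, e 0 * e 2 - e 1 * e 3} := by
    apply le_antisymm
    · intro x hx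
      simp only [S₂, Submodule.mem_inf, LinearMap.mem_ker] at hx
      obtain ⟨⟨⟨h2, hk1⟩, hk2⟩, hk3⟩ := hx
      -- x lies in the span of the six basis products
      set g : Fin 6 → ExteriorAlgebra F U :=
        ![e 0 * e 1, e 0 * e 2, e 0 * e 3, e 1 * e 2, e 1 * e 3, e 2 * e 3] with hg
      have hx6 : x ∈ Submodule.span F (Set.range g) := by
        rw [← ιMulti_span_fixedDegree] at h2
        refine Submodule.span_le.2 ?_ h2
        rintro _ ⟨v, rfl⟩
        rw [aux_ιMulti_two, aux_expand u]
        refine (Submodule.mem_span_range_iff_exists_fun F).2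
          ⟨![u.coord 0 (v 0) * u.coord 1 (v 1) - u.coord 1 (v 0) * u.coord 0 (v 1),
             u.coord 0 (v 0) * u.coord 2 (v 1) - u.coord 2 (v 0) * u.coord 0 (v 1),
             u.coord 0 (v 0) * u.coord 3 (v 1) - u.coord 3 (v 0) * u.coord 0 (v 1),
             u.coord 1 (v 0) * u.coord 2 (v 1) - u.coord 2 (v 0) * u.coord 1 (v 1),
             u.coord 1 (v 0) * u.coord 3 (v 1) - u.coord 3 (v 0) * u.coord 1 (v 1),
             u.coord 2 (v 0) * u.coord 3 (v 1) - u.coord 3 (v 0) * u.coord 2 (v 1)], ?_⟩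
        rw [Fin.sum_univ_six]; rfl
      obtain ⟨d, hd⟩ := (Submodule.mem_span_range_iff_exists_fun F).1 hx6
      have hsum : x = d 0 • (e 0 * e 1) + d 1 • (e 0 * e 2) + d 2 • (e 0 * e 3) +
          d 3 • (e 1 * e 2) + d 4 • (e 1 * e 3) + d 5 • (e 2 * e 3) := by
        rw [← hd, Fin.sum_univ_six]; rfl
      have c1 : d 0 = 0 := by
        have := hk1
        rw [hsum] at this
        simpa [map_add, map_smul, hφ₁] using this
      have c3 : d 2 = 0 := by
        have := hk3
        rw [hsum] at this
        simpa [map_add, map_smul, hφ₃] using this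
      have c2 : d 4 = -(d 1) := by
        have := hk2
        rw [hsum] at this
        simp [map_add, map_smul, hφ₂] at this
        linear_combination this
      have hx' : x = d 3 • (e 1 * e 2) + d 5 • (e 2 * e 3) + d 1 • (e 0 * e 2 - e 1 * e 3) := by
        rw [hsum, c1, c2, c3]; module
      rw [hx']
      refine add_mem (add_mem (Submodule.smul_mem _ _ (Submodule.subset_span ?_))
        (Submodule.smul_mem _ _ (Submodule.subset_span ?_)))
        (Submodule.smul_mem _ _ (Submodule.subset_span ?_))
      · exact Set.mem_insert _ _
      · exact Set.mem_insert_of_mem _ (Set.mem_insert _ _)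
      · exact Set.mem_insert_of_mem _ (Set.mem_insert_of_mem _ rfl)
    · rw [Submodule.span_le]
      rintro x hx
      simp only [Set.mem_insert_iff, Set.mem_singleton_iff] at hx
      rcases hx with rfl | rfl | rfl
      exacts [hg1, hg2, hg3]
  have hpd : ∀ i j k l : Fin 4, pairDual F U 2 ![u.coord i, u.coord j] (e k * e l) =
      (if k = i then 1 else 0) * (if l = j then 1 else 0) -
      (if l = i then 1 else 0) * (if k = j then 1 else 0) := fun i j k l => aux_pd u i j k l
  have h2 : S₂dec = Submodule.span F {e 1 * e 2, e 2 * e 3} := by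
    apply le_antisymm
    · refine Submodule.span_le.2 ?_
      rintro x ⟨hxS, a, b, rfl⟩
      obtain ⟨⟨⟨-, hk1⟩, hk2⟩, hk3⟩ := hxS
      have hk1' : pairDual F U 2 ![u.coord 0, u.coord 1] (ι F a * ι F b) = 0 := hk1
      have hk3' : pairDual F U 2 ![u.coord 0, u.coord 3] (ι F a * ι F b) = 0 := hk3
      have hk2' : pairDual F U 2 ![u.coord 0, u.coord 2] (ι F a * ι F b) +
          pairDual F U 2 ![u.coord 1, u.coord 3] (ι F a * ι F b) = 0 := hk2
      rw [aux_pairDual_two] at hk1' hk3'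
      rw [aux_pairDual_two, aux_pairDual_two] at hk2'
      have h01 : u.coord 0 a * u.coord 1 b - u.coord 1 a * u.coord 0 b = 0 := by
        linear_combination hk1'
      have h03 : u.coord 0 a * u.coord 3 b - u.coord 3 a * u.coord 0 b = 0 := by
        linear_combination hk3'
      have h0213 : (u.coord 0 a * u.coord 2 b - u.coord 2 a * u.coord 0 b) +
          (u.coord 1 a * u.coord 3 b - u.coord 3 a * u.coord 1 b) = 0 := by
        linear_combination hk2'
      have hpl : (u.coord 0 a * u.coord 1 b - u.coord 1 a * u.coord 0 b) *
            (u.coord 2 a * u.coord 3 b - u.coord 3 a * u.coord 2 b) -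
          (u.coord 0 a * u.coord 2 b - u.coord 2 a * u.coord 0 b) *
            (u.coord 1 a * u.coord 3 b - u.coord 3 a * u.coord 1 b) +
          (u.coord 0 a * u.coord 3 b - u.coord 3 a * u.coord 0 b) *
            (u.coord 1 a * u.coord 2 b - u.coord 2 a * u.coord 1 b) = 0 := by ring
      have h02 : u.coord 0 a * u.coord 2 b - u.coord 2 a * u.coord 0 b = 0 := by
        have hsq : (u.coord 0 a * u.coord 2 b - u.coord 2 a * u.coord 0 b) *
            (u.coord 0 a * u.coord 2 b - u.coord 2 a * u.coord 0 b) = 0 := by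
          linear_combination (u.coord 0 a * u.coord 2 b - u.coord 2 a * u.coord 0 b) * h0213 +
            hpl - (u.coord 2 a * u.coord 3 b - u.coord 3 a * u.coord 2 b) * h01 -
            (u.coord 1 a * u.coord 2 b - u.coord 2 a * u.coord 1 b) * h03
        exact mul_self_eq_zero.1 hsq
      have h13 : u.coord 1 a * u.coord 3 b - u.coord 3 a * u.coord 1 b = 0 := by
        linear_combination h0213 - h02
      have hx : ι F a * ι F b =
          (u.coord 1 a * u.coord 2 b - u.coord 2 a * u.coord 1 b) • (e 1 * e 2) +
          (u.coord 2 a * u.coord 3 b - u.coord 3 a * u.coord 2 b) • (e 2 * e 3) := by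
        rw [aux_expand u a b, h01, h02, h03, h13]
        show (0:F) • _ + _ + _ + _ + (0:F) • _ + _ = _
        module
      rw [hx]
      exact add_mem (Submodule.smul_mem _ _ (Submodule.subset_span (Set.mem_insert _ _)))
        (Submodule.smul_mem _ _
          (Submodule.subset_span (Set.mem_insert_of_mem _ rfl)))
    · refine Submodule.span_le.2 ?_
      rintro x hx
      simp only [Set.mem_insert_iff, Set.mem_singleton_iff] at hx
      rcases hx with rfl | rfl
      · exact Submodule.subset_span ⟨hg1, u 1, u 2, rfl⟩
      · exact Submodule.subset_span ⟨hg2, u 2, u 3, rfl⟩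
  refine ⟨h1, h2, ?_⟩
  -- linear independence
  have li3 : LinearIndependent F ![e 1 * e 2, e 2 * e 3, e 0 * e 2 - e 1 * e 3] := by
    rw [Fintype.linearIndependent_iff]
    intro c hc
    have hc' : c 0 • (e 1 * e 2) + c 1 • (e 2 * e 3) + c 2 • (e 0 * e 2 - e 1 * e 3) = 0 := by
      rw [← hc, Fin.sum_univ_three]; rfl
    have d0 : c 0 = 0 := by
      have h := congrArg (pairDual F U 2 ![u.coord 1, u.coord 2]) hc'
      simpa [map_add, map_sub, map_smul, hpd] using h
    have d1 : c 1 = 0 := by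
      have h := congrArg (pairDual F U 2 ![u.coord 2, u.coord 3]) hc'
      simpa [map_add, map_sub, map_smul, hpd] using h
    have d2 : c 2 = 0 := by
      have h := congrArg (pairDual F U 2 ![u.coord 0, u.coord 2]) hc'
      simpa [map_add, map_sub, map_smul, hpd] using h
    intro i
    fin_cases i
    exacts [d0, d1, d2]
  have li2 : LinearIndependent F ![e 1 * e 2, e 2 * e 3] := by
    rw [Fintype.linearIndependent_iff]
    intro c hc
    have hc' : c 0 • (e 1 * e 2) + c 1 • (e 2 * e 3) = 0 := by
      rw [← hc, Fin.sum_univ_two]; rfl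
    have d0 : c 0 = 0 := by
      have h := congrArg (pairDual F U 2 ![u.coord 1, u.coord 2]) hc'
      simpa [map_add, map_sub, map_smul, hpd] using h
    have d1 : c 1 = 0 := by
      have h := congrArg (pairDual F U 2 ![u.coord 2, u.coord 3]) hc'
      simpa [map_add, map_sub, map_smul, hpd] using h
    intro i
    fin_cases i
    exacts [d0, d1]
  have hr3 : ({e 1 * e 2, e 2 * e 3, e 0 * e 2 - e 1 * e 3} : Set (ExteriorAlgebra F U)) =
      Set.range ![e 1 * e 2, e 2 * e 3, e 0 * e 2 - e 1 * e 3] := by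
    rw [Matrix.range_cons, Matrix.range_cons, Matrix.range_cons_empty]
    ext y; simp; tauto
  have hr2 : ({e 1 * e 2, e 2 * e 3} : Set (ExteriorAlgebra F U)) =
      Set.range ![e 1 * e 2, e 2 * e 3] := by
    rw [Matrix.range_cons, Matrix.range_cons_empty]
    ext y; simp; tauto
  rw [h1, h2, hr3, hr2, finrank_span_eq_card li3, finrank_span_eq_card li2]
  simp
end

section
/- Let p be an odd prime, let a, b ∈ F_p be such that X² + aX + b is irreducible over F_p, and let U be a 4-dimensional F_p-vector space with basis u₁,...,u₄. Let S² ⊆ Λ²U be the annihilator of span{f₁, f₂, f₃} where f₁ = u₁*∧u₂*, f₂ = u₁*∧u₃* + u₂*∧u₄*, f₃ = u₂*∧u₃* − b·u₁*∧u₄* − a·u₂*∧u₄*. Then S² = span{w₁, w₂, w₃} with w₁ = u₃∧u₄, w₂ = u₁∧u₃ − u₂∧u₄ − a·u₂∧u₃, w₃ = u₁∧u₄ + b·u₂∧u₃, and the span of decomposable elements of S² equals span{w₁}; hence S²_dec has codimension 2 in S². -/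
open ExteriorAlgebra

lemma detRow_eq' (F : Type*) [Field F] {n : ℕ} (M : Fin n → Fin n → F) :
    Matrix.detRowAlternating M = Matrix.det (Matrix.of M) := rfl

lemma pairDual_two' (F U : Type*) [Field F] [AddCommGroup U] [Module F U]
    (f : Fin 2 → Module.Dual F U) (x y : U) :
    pairDual F U 2 f (ι F x * ι F y) = f 0 x * f 1 y - f 1 x * f 0 y := by
  have h : ι F x * ι F y = ιMulti F 2 ![x, y] := by
    simp [ιMulti_apply, List.ofFn_succ]
  rw [h, pairDual, liftAlternating_apply_ιMulti, Pi.single_eq_same,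
    AlternatingMap.compLinearMap_apply, detRow_eq', Matrix.det_fin_two]
  simp

lemma pairDual_four' (F U : Type*) [Field F] [AddCommGroup U] [Module F U]
    (f : Fin 4 → Module.Dual F U) (v : Fin 4 → U) :
    pairDual F U 4 f (ι F (v 0) * (ι F (v 1) * (ι F (v 2) * ι F (v 3)))) =
      Matrix.det (Matrix.of fun i j => f j (v i)) := by
  have h : ι F (v 0) * (ι F (v 1) * (ι F (v 2) * ι F (v 3))) = ιMulti F 4 v := by
    simp [ιMulti_apply, List.ofFn_succ, mul_assoc, Matrix.vecTail, Function.comp]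
  rw [h, pairDual, liftAlternating_apply_ιMulti, Pi.single_eq_same]
  rfl

set_option maxHeartbeats 3200000 in
/-- Let `p` be odd, `a, b ∈ F_p` with `X² + aX + b` irreducible, `U` a 4-dimensional
`F_p`-vector space, and `S² ⊆ Λ²U` the annihilator of `span{f₁, f₂, f₃}` where
`f₁ = u₁*∧u₂*`, `f₂ = u₁*∧u₃* + u₂*∧u₄*`, `f₃ = u₂*∧u₃* − b·u₁*∧u₄* − a·u₂*∧u₄*`.
Then `S² = span{w₁, w₂, w₃}` with `w₁ = u₃∧u₄`, `w₂ = u₁∧u₃ − u₂∧u₄ − a·u₂∧u₃`,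
`w₃ = u₁∧u₄ + b·u₂∧u₃`, the span of the decomposable elements of `S²` equals
`span{w₁}`, and `S²_dec` has codimension 2 in `S²`. -/
theorem stmt_16 (p : ℕ) [Fact p.Prime] (hp2 : p ≠ 2) (a b : ZMod p)
    (hirr : Irreducible (Polynomial.X ^ 2 + Polynomial.C a * Polynomial.X
      + Polynomial.C b : Polynomial (ZMod p)))
    (U : Type*) [AddCommGroup U] [Module (ZMod p) U] (u : Module.Basis (Fin 4) (ZMod p) U) :
    let F := ZMod p
    let φ₁ := pairDual F U 2 ![u.coord 0, u.coord 1]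
    let φ₂ := pairDual F U 2 ![u.coord 0, u.coord 2] + pairDual F U 2 ![u.coord 1, u.coord 3]
    let φ₃ := pairDual F U 2 ![u.coord 1, u.coord 2] - b • pairDual F U 2 ![u.coord 0, u.coord 3]
      - a • pairDual F U 2 ![u.coord 1, u.coord 3]
    let S₂ : Submodule F (ExteriorAlgebra F U) :=
      ⋀[F]^2 U ⊓ LinearMap.ker φ₁ ⊓ LinearMap.ker φ₂ ⊓ LinearMap.ker φ₃
    let e : Fin 4 → ExteriorAlgebra F U := fun i => ι F (u i)
    let w₁ := e 2 * e 3
    let w₂ := e 0 * e 2 - e 1 * e 3 - a • (e 1 * e 2)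
    let w₃ := e 0 * e 3 + b • (e 1 * e 2)
    let S₂dec : Submodule F (ExteriorAlgebra F U) :=
      Submodule.span F {x | x ∈ S₂ ∧ ∃ x' y' : U, x = ι F x' * ι F y'}
    S₂ = Submodule.span F {w₁, w₂, w₃} ∧ S₂dec = Submodule.span F {w₁} ∧
      Module.finrank F S₂ = Module.finrank F S₂dec + 2 := by
  intro F φ₁ φ₂ φ₃ S₂ e w₁ w₂ w₃ S₂dec
  have hw₁ : w₁ = e 2 * e 3 := rfl
  have hw₂ : w₂ = e 0 * e 2 - e 1 * e 3 - a • (e 1 * e 2) := rfl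
  have hw₃ : w₃ = e 0 * e 3 + b • (e 1 * e 2) := rfl
  have hS₂ : S₂ = ⋀[F]^2 U ⊓ LinearMap.ker φ₁ ⊓ LinearMap.ker φ₂ ⊓ LinearMap.ker φ₃ := rfl
  have hval : ∀ k l i j : Fin 4, pairDual F U 2 ![u.coord k, u.coord l] (e i * e j) =
      (if i = k then 1 else 0) * (if j = l then 1 else 0)
        - (if i = l then 1 else 0) * (if j = k then 1 else 0) := by
    intro k l i j
    have h : e i * e j = ι F (u i) * ι F (u j) := rfl
    rw [h, pairDual_two']
    simp [Module.Basis.coord_apply, Module.Basis.repr_self_apply, Finsupp.single_apply]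
  have hsw : ∀ i j : Fin 4, e j * e i = -(e i * e j) := by
    intro i j
    exact eq_neg_of_add_eq_zero_left
      (show e j * e i + e i * e j = 0 from ι_add_mul_swap (u j) (u i))
  have hz : ∀ i : Fin 4, e i * e i = 0 := fun i => ι_sq_zero (u i)
  have he2 : ∀ i j : Fin 4, e i * e j ∈ ⋀[F]^2 U := by
    intro i j
    show e i * e j ∈ LinearMap.range (ι F) ^ 2
    rw [pow_two]
    exact Submodule.mul_mem_mul (LinearMap.mem_range_self _ _) (LinearMap.mem_range_self _ _)
  have h2F : (2 : F) ≠ 0 := by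
    have h : ((2 : ℕ) : ZMod p) ≠ 0 := by
      rw [Ne, ZMod.natCast_eq_zero_iff]
      exact fun hdvd => hp2 ((Nat.prime_dvd_prime_iff_eq Fact.out Nat.prime_two).mp hdvd)
    simpa using h
  -- the quadratic has no roots
  have hroots : ∀ β γ : F, β ^ 2 - a * β * γ + b * γ ^ 2 = 0 → β = 0 ∧ γ = 0 := by
    intro β γ h
    have hγ : γ = 0 := by
      by_contra hγ
      set t : F := -β / γ with ht
      have hroot : Polynomial.IsRoot
          (Polynomial.X ^ 2 + Polynomial.C a * Polynomial.X + Polynomial.C b : Polynomial F) t := by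
        show Polynomial.eval t _ = 0
        simp only [Polynomial.eval_add, Polynomial.eval_pow, Polynomial.eval_mul,
          Polynomial.eval_X, Polynomial.eval_C, ht]
        have hinv : γ * γ⁻¹ = 1 := mul_inv_cancel₀ hγ
        rw [div_eq_mul_inv]
        linear_combination (γ⁻¹) ^ 2 * h - b * (1 + γ * γ⁻¹) * hinv + a * β * γ⁻¹ * hinv
      obtain ⟨r, hr⟩ := Polynomial.dvd_iff_isRoot.mpr hroot
      rcases hirr.isUnit_or_isUnit hr with h1 | h2
      · exact Polynomial.not_isUnit_X_sub_C t h1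
      · have hdeg : (Polynomial.X ^ 2 + Polynomial.C a * Polynomial.X
            + Polynomial.C b : Polynomial F).natDegree = 2 := by compute_degree!
        obtain ⟨cu, hcu, hcr⟩ := Polynomial.isUnit_iff.mp h2
        rw [hr, ← hcr, Polynomial.natDegree_mul (Polynomial.X_sub_C_ne_zero t)
          (by simpa using hcu.ne_zero), Polynomial.natDegree_X_sub_C,
          Polynomial.natDegree_C] at hdeg
        exact absurd hdeg (by norm_num)
    refine ⟨?_, hγ⟩
    rw [hγ] at h
    have : β ^ 2 = 0 := by linear_combination h
    exact pow_eq_zero_iff (n := 2) (by norm_num) |>.mp this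
  -- evaluation of pair duals on sums of basis products
  have hsum : ∀ (k l : Fin 4), ∀ c : Fin 4 × Fin 4 → F,
      pairDual F U 2 ![u.coord k, u.coord l]
        (∑ ij : Fin 4 × Fin 4, c ij • (e ij.1 * e ij.2)) =
        ∑ ij : Fin 4 × Fin 4, c ij *
          ((if ij.1 = k then 1 else 0) * (if ij.2 = l then 1 else 0)
            - (if ij.1 = l then 1 else 0) * (if ij.2 = k then 1 else 0)) := by
    intro k l c
    rw [map_sum]
    simp only [map_smul, hval, smul_eq_mul]
  have hx2span : ∀ x, x ∈ (⋀[F]^2 U : Submodule F _) → x ∈ Submodule.span F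
      (Set.range fun ij : Fin 4 × Fin 4 => e ij.1 * e ij.2) := by
    intro x hx
    have hle : (⋀[F]^2 U : Submodule F _) ≤ Submodule.span F
        (Set.range fun ij : Fin 4 × Fin 4 => e ij.1 * e ij.2) := by
      rw [← ιMulti_span_fixedDegree]
      rw [Submodule.span_le, Set.range_subset_iff]
      intro v
      have h : ιMulti F 2 v = ι F (v 0) * ι F (v 1) := by
        simp [ιMulti_apply, List.ofFn_succ]
        rfl
      rw [h, ← u.sum_repr (v 0), ← u.sum_repr (v 1)]
      rw [map_sum, map_sum, Finset.sum_mul_sum]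
      refine Submodule.sum_mem _ fun i _ => Submodule.sum_mem _ fun j _ => ?_
      rw [map_smul, map_smul, smul_mul_assoc, mul_smul_comm, smul_smul]
      exact Submodule.smul_mem _ _ (Submodule.subset_span ⟨(i, j), rfl⟩)
    exact hle hx
  -- the key representation lemma
  have key : ∀ x ∈ S₂, ∃ α β γ : F, x = α • w₁ + β • w₂ + γ • w₃ := by
    rintro x ⟨⟨⟨hx2, hk1⟩, hk2⟩, hk3⟩
    obtain ⟨c, hc⟩ := (Submodule.mem_span_range_iff_exists_fun F).mp (hx2span x hx2)
    have eq1 : ∑ ij : Fin 4 × Fin 4, c ij *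
        ((if ij.1 = 0 then 1 else 0) * (if ij.2 = 1 then 1 else 0)
          - (if ij.1 = 1 then 1 else 0) * (if ij.2 = 0 then 1 else 0)) = 0 := by
      rw [← hsum 0 1 c, hc]; exact hk1
    have eq2 : (∑ ij : Fin 4 × Fin 4, c ij *
        ((if ij.1 = 0 then 1 else 0) * (if ij.2 = 2 then 1 else 0)
          - (if ij.1 = 2 then 1 else 0) * (if ij.2 = 0 then 1 else 0)))
        + (∑ ij : Fin 4 × Fin 4, c ij *
        ((if ij.1 = 1 then 1 else 0) * (if ij.2 = 3 then 1 else 0)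
          - (if ij.1 = 3 then 1 else 0) * (if ij.2 = 1 then 1 else 0))) = 0 := by
      rw [← hsum 0 2 c, ← hsum 1 3 c, hc]; exact hk2
    have eq3 : (∑ ij : Fin 4 × Fin 4, c ij *
        ((if ij.1 = 1 then 1 else 0) * (if ij.2 = 2 then 1 else 0)
          - (if ij.1 = 2 then 1 else 0) * (if ij.2 = 1 then 1 else 0)))
        - b * (∑ ij : Fin 4 × Fin 4, c ij *
        ((if ij.1 = 0 then 1 else 0) * (if ij.2 = 3 then 1 else 0)
          - (if ij.1 = 3 then 1 else 0) * (if ij.2 = 0 then 1 else 0)))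
        - a * (∑ ij : Fin 4 × Fin 4, c ij *
        ((if ij.1 = 1 then 1 else 0) * (if ij.2 = 3 then 1 else 0)
          - (if ij.1 = 3 then 1 else 0) * (if ij.2 = 1 then 1 else 0))) = 0 := by
      rw [← hsum 1 2 c, ← hsum 0 3 c, ← hsum 1 3 c, hc]; exact hk3
    simp only [Fintype.sum_prod_type, Fin.sum_univ_four] at eq1 eq2 eq3
    simp at eq1 eq2 eq3
    refine ⟨c (2,3) - c (3,2), c (0,2) - c (2,0), c (0,3) - c (3,0), ?_⟩
    rw [← hc, hw₁, hw₂, hw₃]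
    simp only [Fintype.sum_prod_type, Fin.sum_univ_four]
    rw [hz 0, hz 1, hz 2, hz 3, hsw 0 1, hsw 0 2, hsw 0 3, hsw 1 2, hsw 1 3, hsw 2 3]
    match_scalars
    · linear_combination eq1
    · ring
    · ring
    · linear_combination eq3 + a * eq2
    · linear_combination eq2
    · ring
  -- membership of the w's in S₂
  have hker : ∀ (k l : Fin 4) z, pairDual F U 2 ![u.coord k, u.coord l] z = 0 →
      z ∈ LinearMap.ker (pairDual F U 2 ![u.coord k, u.coord l]) := by
    intro k l z h; exact LinearMap.mem_ker.mpr h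
  have hw₁S : w₁ ∈ S₂ := by
    rw [hS₂]
    refine ⟨⟨⟨by rw [hw₁]; exact he2 2 3, ?_⟩, ?_⟩, ?_⟩
    · show pairDual F U 2 ![u.coord 0, u.coord 1] w₁ = 0
      rw [hw₁, hval]; simp
    · show pairDual F U 2 ![u.coord 0, u.coord 2] w₁
        + pairDual F U 2 ![u.coord 1, u.coord 3] w₁ = 0
      rw [hw₁, hval, hval]; simp
    · show pairDual F U 2 ![u.coord 1, u.coord 2] w₁
        - b * pairDual F U 2 ![u.coord 0, u.coord 3] w₁
        - a * pairDual F U 2 ![u.coord 1, u.coord 3] w₁ = 0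
      rw [hw₁, hval, hval, hval]; simp
  have hw₂S : w₂ ∈ S₂ := by
    rw [hS₂]
    refine ⟨⟨⟨?_, ?_⟩, ?_⟩, ?_⟩
    · rw [hw₂]
      exact Submodule.sub_mem _ (Submodule.sub_mem _ (he2 0 2) (he2 1 3))
        (Submodule.smul_mem _ _ (he2 1 2))
    · show pairDual F U 2 ![u.coord 0, u.coord 1] w₂ = 0
      rw [hw₂]
      simp only [map_sub, map_smul, hval, smul_eq_mul]
      simp
    · show pairDual F U 2 ![u.coord 0, u.coord 2] w₂
        + pairDual F U 2 ![u.coord 1, u.coord 3] w₂ = 0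
      rw [hw₂]
      simp only [map_sub, map_smul, hval, smul_eq_mul]
      simp
    · show pairDual F U 2 ![u.coord 1, u.coord 2] w₂
        - b * pairDual F U 2 ![u.coord 0, u.coord 3] w₂
        - a * pairDual F U 2 ![u.coord 1, u.coord 3] w₂ = 0
      rw [hw₂]
      simp only [map_sub, map_smul, hval, smul_eq_mul]
      simp
  have hw₃S : w₃ ∈ S₂ := by
    rw [hS₂]
    refine ⟨⟨⟨?_, ?_⟩, ?_⟩, ?_⟩
    · rw [hw₃]
      exact Submodule.add_mem _ (he2 0 3) (Submodule.smul_mem _ _ (he2 1 2))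
    · show pairDual F U 2 ![u.coord 0, u.coord 1] w₃ = 0
      rw [hw₃]
      simp only [map_add, map_smul, hval, smul_eq_mul]
      simp
    · show pairDual F U 2 ![u.coord 0, u.coord 2] w₃
        + pairDual F U 2 ![u.coord 1, u.coord 3] w₃ = 0
      rw [hw₃]
      simp only [map_add, map_smul, hval, smul_eq_mul]
      simp
    · show pairDual F U 2 ![u.coord 1, u.coord 2] w₃
        - b * pairDual F U 2 ![u.coord 0, u.coord 3] w₃
        - a * pairDual F U 2 ![u.coord 1, u.coord 3] w₃ = 0
      rw [hw₃]
      simp only [map_add, map_smul, hval, smul_eq_mul]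
      simp
  -- first claim
  have hS : S₂ = Submodule.span F {w₁, w₂, w₃} := by
    apply le_antisymm
    · intro x hx
      obtain ⟨α, β, γ, hxr⟩ := key x hx
      rw [hxr]
      refine Submodule.add_mem _ (Submodule.add_mem _ ?_ ?_) ?_ <;>
        exact Submodule.smul_mem _ _ (Submodule.subset_span (by simp))
    · rw [Submodule.span_le]
      rintro y hy
      simp only [Set.mem_insert_iff, Set.mem_singleton_iff] at hy
      rcases hy with rfl | rfl | rfl
      exacts [hw₁S, hw₂S, hw₃S]
  -- pairing against the top power
  have h4 : ∀ i j k l : Fin 4,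
      pairDual F U 4 ![u.coord 0, u.coord 1, u.coord 2, u.coord 3]
        (e i * (e j * (e k * e l))) =
      Matrix.det (Matrix.of fun r s =>
        (![u.coord 0, u.coord 1, u.coord 2, u.coord 3] s) ((![u i, u j, u k, u l]) r)) := by
    intro i j k l
    have h := pairDual_four' F U ![u.coord 0, u.coord 1, u.coord 2, u.coord 3]
      ![u i, u j, u k, u l]
    simpa using h
  have hxx : ∀ α β γ : F,
      pairDual F U 4 ![u.coord 0, u.coord 1, u.coord 2, u.coord 3]
        ((α • w₁ + β • w₂ + γ • w₃) * (α • w₁ + β • w₂ + γ • w₃))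
        = 2 * β ^ 2 - 2 * a * β * γ + 2 * b * γ ^ 2 := by
    intro α β γ
    rw [hw₁, hw₂, hw₃]
    simp only [mul_add, add_mul, sub_mul, mul_sub, smul_mul_assoc, mul_smul_comm,
      smul_sub, smul_add, smul_smul, mul_assoc, map_add, map_sub, map_smul, map_neg,
      smul_eq_mul, h4]
    simp [Matrix.det_succ_row_zero, Fin.sum_univ_succ, Matrix.submatrix_apply,
      Fin.succAbove, Module.Basis.coord_apply, Module.Basis.repr_self_apply]
    ring
  have hdecsq : ∀ x' y' : U, (ι F x' * ι F y') * (ι F x' * ι F y') = 0 := by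
    intro x' y'
    have hyx : ι F y' * ι F x' = -(ι F x' * ι F y') :=
      eq_neg_of_add_eq_zero_left (ι_add_mul_swap y' x')
    rw [mul_assoc (ι F x') (ι F y') (ι F x' * ι F y'),
      ← mul_assoc (ι F y') (ι F x') (ι F y'), hyx, neg_mul, mul_neg,
      mul_assoc (ι F x') (ι F y') (ι F y'), ι_sq_zero, mul_zero, mul_zero, neg_zero]
  -- second claim
  have hdec : S₂dec = Submodule.span F {w₁} := by
    apply le_antisymm
    · have hS₂dec : S₂dec
          = Submodule.span F {x | x ∈ S₂ ∧ ∃ x' y' : U, x = ι F x' * ι F y'} := rfl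
      rw [hS₂dec, Submodule.span_le]
      rintro x ⟨hxS, x', y', hxy⟩
      obtain ⟨α, β, γ, hxr⟩ := key x hxS
      have h0 : pairDual F U 4 ![u.coord 0, u.coord 1, u.coord 2, u.coord 3] (x * x) = 0 := by
        rw [show x * x = 0 from by rw [hxy]; exact hdecsq x' y']
        exact map_zero _
      rw [hxr, hxx α β γ] at h0
      have hq : β ^ 2 - a * β * γ + b * γ ^ 2 = 0 := by
        apply mul_left_cancel₀ h2F
        rw [mul_zero]
        linear_combination h0
      obtain ⟨hβ, hγ⟩ := hroots β γ hq
      rw [hxr, hβ, hγ]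
      simp only [zero_smul, add_zero]
      exact Submodule.smul_mem _ _ (Submodule.subset_span rfl)
    · rw [Submodule.span_le, Set.singleton_subset_iff]
      exact Submodule.subset_span ⟨hw₁S, u 2, u 3, by exact hw₁⟩
  -- ranks
  have hw1v : pairDual F U 2 ![u.coord 2, u.coord 3] w₁ = 1 := by
    rw [hw₁, hval]; simp
  have hw1ne : w₁ ≠ 0 := by
    intro h
    rw [h, map_zero] at hw1v
    exact one_ne_zero hw1v.symm
  have hli : LinearIndependent F ![w₁, w₂, w₃] := by
    rw [Fintype.linearIndependent_iff]
    intro g hg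
    have hg' : g 0 • w₁ + g 1 • w₂ + g 2 • w₃ = 0 := by
      simpa [Fin.sum_univ_three] using hg
    have t1 : g 0 = 0 := by
      have h := congrArg (pairDual F U 2 ![u.coord 2, u.coord 3]) hg'
      simp only [hw₁, hw₂, hw₃, map_add, map_sub, map_smul, map_zero, hval, smul_eq_mul] at h
      simpa using h
    have t2 : g 1 = 0 := by
      have h := congrArg (pairDual F U 2 ![u.coord 0, u.coord 2]) hg'
      simp only [hw₁, hw₂, hw₃, map_add, map_sub, map_smul, map_zero, hval, smul_eq_mul] at h
      simpa using h
    have t3 : g 2 = 0 := by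
      have h := congrArg (pairDual F U 2 ![u.coord 0, u.coord 3]) hg'
      simp only [hw₁, hw₂, hw₃, map_add, map_sub, map_smul, map_zero, hval, smul_eq_mul] at h
      simpa using h
    intro i
    fin_cases i
    exacts [t1, t2, t3]
  have hrange : Set.range ![w₁, w₂, w₃] = ({w₁, w₂, w₃} : Set (ExteriorAlgebra F U)) := by
    ext z
    constructor
    · rintro ⟨i, rfl⟩
      fin_cases i <;> simp
    · rintro h
      simp only [Set.mem_insert_iff, Set.mem_singleton_iff] at h
      rcases h with rfl | rfl | rfl
      exacts [⟨0, rfl⟩, ⟨1, rfl⟩, ⟨2, rfl⟩]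
  have hr3 : Module.finrank F (Submodule.span F ({w₁, w₂, w₃} : Set (ExteriorAlgebra F U))) = 3 := by
    rw [← hrange, finrank_span_eq_card hli]
    simp
  have hr1 : Module.finrank F (Submodule.span F ({w₁} : Set (ExteriorAlgebra F U))) = 1 :=
    finrank_span_singleton hw1ne
  refine ⟨hS, hdec, ?_⟩
  rw [hS, hdec, hr3, hr1]
end

section
/- Let U be a 4-dimensional F_p-vector space (p an odd prime) with basis u₁,...,u₄, and set f₁ = u₁*∧u₂*, f₂ = u₁*∧u₃* + u₂*∧u₄*, f₃ = u₁*∧u₄* in Λ²U*. Then span{fᵢ ∧ uⱼ* : 1 ≤ i ≤ 3, 1 ≤ j ≤ 4} = Λ³U*; equivalently, the annihilator S³ ⊆ Λ³U of this span is zero. -/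
open ExteriorAlgebra

section Helpers

variable {F M : Type*} [Field F] [AddCommGroup M] [Module F M]

theorem pairDual_ιMulti (f : Fin 3 → Module.Dual F M) (v : Fin 3 → M) :
    pairDual F M 3 f (ιMulti F 3 v) = Matrix.det (Matrix.of fun j i => f i (v j)) := by
  rw [pairDual, liftAlternating_apply_ιMulti, Pi.single_eq_same,
    AlternatingMap.compLinearMap_apply]
  rfl

theorem pairDual_zero_of_eq (f : Fin 3 → Module.Dual F M) (h : f 1 = f 2) :
    pairDual F M 3 f = 0 := by
  have hA : (Matrix.detRowAlternating.compLinearMap (LinearMap.pi f) :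
      M [⋀^Fin 3]→ₗ[F] F) = 0 := by
    ext v
    show Matrix.det (Matrix.of fun j i => f i (v j)) = 0
    rw [Matrix.det_fin_three]
    simp [h]
  rw [pairDual, hA, Pi.single_zero, map_zero]

theorem pairDual_swap (a b c : Module.Dual F M) :
    pairDual F M 3 ![a, b, c] = - pairDual F M 3 ![a, c, b] := by
  have hA : (Matrix.detRowAlternating.compLinearMap (LinearMap.pi ![a, b, c]) :
      M [⋀^Fin 3]→ₗ[F] F)
      = -(Matrix.detRowAlternating.compLinearMap (LinearMap.pi ![a, c, b])) := by
    ext v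
    show Matrix.det (Matrix.of fun j i => (![a,b,c] : Fin 3 → _) i (v j))
      = -Matrix.det (Matrix.of fun j i => (![a,c,b] : Fin 3 → _) i (v j))
    rw [Matrix.det_fin_three, Matrix.det_fin_three]
    simp
    ring
  rw [pairDual, pairDual, hA, Pi.single_neg, map_neg]

end Helpers

section Ext

variable {F M N : Type*} [Field F] [AddCommGroup M] [Module F M]
  [AddCommGroup N] [Module F N]

theorem ext_alt_strictMono {n m : ℕ} (b : Module.Basis (Fin m) F M)
    {f g : M [⋀^Fin n]→ₗ[F] N}
    (h : ∀ v : Fin n → Fin m, StrictMono v →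
      (f fun i => b (v i)) = g fun i => b (v i)) : f = g := by
  refine Module.Basis.ext_alternating b fun v hv => ?_
  set σ := Tuple.sort v with hσ
  have hmono : StrictMono (v ∘ σ) :=
    (Tuple.monotone_sort v).strictMono_of_injective (hv.comp σ.injective)
  have h1 := h (v ∘ σ) hmono
  have hf : (f fun i => b ((v ∘ σ) i)) = Equiv.Perm.sign σ • f fun i => b (v i) :=
    f.map_perm (fun i => b (v i)) σ
  have hg : (g fun i => b ((v ∘ σ) i)) = Equiv.Perm.sign σ • g fun i => b (v i) :=
    g.map_perm (fun i => b (v i)) σ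
  rw [hf, hg] at h1
  rcases Int.units_eq_one_or (Equiv.Perm.sign σ) with hs | hs <;> rw [hs] at h1
  · simpa using h1
  · simpa [Units.smul_def, neg_zsmul] using h1

end Ext

/-- The four increasing triples in `Fin 4`. -/
def trip : Fin 4 → Fin 3 → Fin 4 := ![![0,1,2], ![0,1,3], ![0,2,3], ![1,2,3]]

section Proj

variable {F M : Type*} [Field F] [AddCommGroup M] [Module F M]

theorem proj3 (b : Module.Basis (Fin 4) F M) (x : ExteriorAlgebra F M) (hx : x ∈ ⋀[F]^3 M) :
    x = ∑ k : Fin 4, pairDual F M 3 (fun i => b.coord (trip k i)) x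
      • ιMulti F 3 (fun i => b (trip k i)) := by
  set L : ExteriorAlgebra F M →ₗ[F] ExteriorAlgebra F M :=
    ∑ k : Fin 4, (pairDual F M 3 (fun i => b.coord (trip k i))).smulRight
      (ιMulti F 3 (fun i => b (trip k i))) with hL
  have key : L.compAlternatingMap (ιMulti F 3) = ιMulti F 3 := by
    refine ext_alt_strictMono b fun v hv => ?_
    have henum : ∀ w : Fin 3 → Fin 4, (∀ a b : Fin 3, a < b → w a < w b) →
        (w = trip 0 ∨ w = trip 1 ∨ w = trip 2 ∨ w = trip 3) := by decide
    have hv' : v = trip 0 ∨ v = trip 1 ∨ v = trip 2 ∨ v = trip 3 :=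
      henum v fun a b hab => hv hab
    have hval : ∀ k l : Fin 4,
        pairDual F M 3 (fun i => b.coord (trip k i))
          (ιMulti F 3 fun i => b (trip l i)) = if k = l then 1 else 0 := by
      intro k l
      rw [pairDual_ιMulti]
      fin_cases k <;> fin_cases l <;>
        simp [Matrix.det_fin_three, trip, Module.Basis.coord_apply, Module.Basis.repr_self,
          Finsupp.single_apply]
    rcases hv' with rfl | rfl | rfl | rfl <;>
      simp only [LinearMap.compAlternatingMap_apply, hL, LinearMap.sum_apply,
        LinearMap.add_apply, LinearMap.smulRight_apply, hval, Fin.sum_univ_four] <;>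
      simp
  have hLx : ∀ y ∈ ⋀[F]^3 M, L y = y := by
    intro y hy
    rw [← ιMulti_span_fixedDegree] at hy
    induction hy using Submodule.span_induction with
    | mem y hy =>
      obtain ⟨v, rfl⟩ := hy
      exact DFunLike.congr_fun key v
    | zero => simp
    | add a b _ _ ha hb => simp [map_add, ha, hb]
    | smul c a _ ha => simp [map_smul, ha]
  calc x = L x := (hLx x hx).symm
    _ = _ := by simp [hL, LinearMap.sum_apply, LinearMap.smulRight_apply]

end Proj

section More

variable {F M : Type*} [Field F] [AddCommGroup M] [Module F M]

theorem ιMulti_three (v : Fin 3 → M) :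
    ιMulti F 3 v = ι F (v 0) * ι F (v 1) * ι F (v 2) := by
  simp [ιMulti_apply, List.ofFn_succ, mul_assoc, Matrix.vecTail, Fin.succ_zero_eq_one]

theorem mem3 (a b c : M) : ι F a * ι F b * ι F c ∈ ⋀[F]^3 M := by
  have h : ι F a * ι F b * ι F c = ιMulti F 3 ![a, b, c] := by
    rw [ιMulti_three]; simp
  rw [h]
  exact ιMulti_range F 3 (Set.mem_range_self _)

end More

set_option maxHeartbeats 1000000 in
set_option synthInstance.maxHeartbeats 400000 in
/-- Let `U` be a 4-dimensional `F_p`-vector space (`p` odd) and set `f₁ = u₁*∧u₂*`,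
`f₂ = u₁*∧u₃* + u₂*∧u₄*`, `f₃ = u₁*∧u₄*` in `Λ²U*`.  Then
`span{fᵢ ∧ uⱼ* : 1 ≤ i ≤ 3, 1 ≤ j ≤ 4} = Λ³U*`; equivalently, the annihilator
`S³ ⊆ Λ³U` of this span is zero. -/
theorem stmt_17 (p : ℕ) [Fact p.Prime] (hp2 : p ≠ 2)
    (U : Type*) [AddCommGroup U] [Module (ZMod p) U] (u : Module.Basis (Fin 4) (ZMod p) U) :
    let F := ZMod p
    let ι' : Module.Dual F U → ExteriorAlgebra F (Module.Dual F U) := ι F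
    let f : Fin 3 → ExteriorAlgebra F (Module.Dual F U) :=
      ![ι' (u.coord 0) * ι' (u.coord 1),
        ι' (u.coord 0) * ι' (u.coord 2) + ι' (u.coord 1) * ι' (u.coord 3),
        ι' (u.coord 0) * ι' (u.coord 3)]
    let φ : Fin 3 → Fin 4 → (ExteriorAlgebra F U →ₗ[F] F) := fun i j =>
      ![pairDual F U 3 ![u.coord 0, u.coord 1, u.coord j],
        pairDual F U 3 ![u.coord 0, u.coord 2, u.coord j]
          + pairDual F U 3 ![u.coord 1, u.coord 3, u.coord j],
        pairDual F U 3 ![u.coord 0, u.coord 3, u.coord j]] i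
    Submodule.span F {x | ∃ i : Fin 3, ∃ j : Fin 4, x = f i * ι' (u.coord j)} =
        ⋀[F]^3 (Module.Dual F U) ∧
      ⋀[F]^3 U ⊓ (⨅ i : Fin 3, ⨅ j : Fin 4, LinearMap.ker (φ i j)) = ⊥ := by
  intro F ι' f φ
  constructor
  · -- span = third exterior power of the dual
    apply le_antisymm
    · rw [Submodule.span_le]
      rintro x ⟨i, j, rfl⟩
      fin_cases i
      · show (ι' (u.coord 0) * ι' (u.coord 1)) * ι' (u.coord j) ∈ _
        exact mem3 _ _ _
      · show (ι' (u.coord 0) * ι' (u.coord 2) + ι' (u.coord 1) * ι' (u.coord 3))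
            * ι' (u.coord j) ∈ _
        rw [add_mul]
        exact add_mem (mem3 _ _ _) (mem3 _ _ _)
      · show (ι' (u.coord 0) * ι' (u.coord 3)) * ι' (u.coord j) ∈ _
        exact mem3 _ _ _
    · intro x hx
      rw [proj3 u.dualBasis x hx]
      refine Submodule.sum_mem _ fun k _ => Submodule.smul_mem _ _ ?_
      have hdb : ∀ j : Fin 4, u.dualBasis j = u.coord j := fun j =>
        congrFun u.coe_dualBasis j
      fin_cases k <;> rw [ιMulti_three] <;>
        simp only [trip, show ((0:Fin 4):Fin 4) = 0 from rfl, Matrix.cons_val_zero,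
          Matrix.cons_val_one, Matrix.head_cons, Matrix.cons_val_two, Matrix.cons_val_three,
          Matrix.tail_cons, Matrix.cons_val_fin_one, Fin.isValue, hdb, Fin.mk_one] <;>
        norm_num [hdb]
      · exact Submodule.subset_span ⟨0, 2, rfl⟩
      · exact Submodule.subset_span ⟨0, 3, rfl⟩
      · -- u.coord 0 ∧ u.coord 2 ∧ u.coord 3 = f 1 * ι' (u.coord 3)
        have : f 1 * ι' (u.coord 3)
            = ι' (u.coord 0) * ι' (u.coord 2) * ι' (u.coord 3) := by
          show (ι' (u.coord 0) * ι' (u.coord 2) + ι' (u.coord 1) * ι' (u.coord 3))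
              * ι' (u.coord 3) = _
          rw [add_mul, mul_assoc (ι' (u.coord 1)), ι_sq_zero, mul_zero, add_zero]
        exact Submodule.subset_span ⟨1, 3, this.symm⟩
      · -- u.coord 1 ∧ u.coord 2 ∧ u.coord 3 = (-1) • (f 1 * ι' (u.coord 2))
        have hswap : ι' (u.coord 3) * ι' (u.coord 2)
            = -(ι' (u.coord 2) * ι' (u.coord 3)) :=
          eq_neg_of_add_eq_zero_right (ι_add_mul_swap _ _)
        have : ι' (u.coord 1) * ι' (u.coord 2) * ι' (u.coord 3)
            = (-1 : F) • (f 1 * ι' (u.coord 2)) := by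
          show _ = (-1 : F) • ((ι' (u.coord 0) * ι' (u.coord 2)
            + ι' (u.coord 1) * ι' (u.coord 3)) * ι' (u.coord 2))
          have hsq : ∀ g : Module.Dual F U, ι' g * ι' g = 0 := fun g => ι_sq_zero g
          simp [add_mul, mul_assoc, hsq, hswap, mul_neg]
        change ι' (u.coord 1) * ι' (u.coord 2) * ι' (u.coord 3) ∈ _
        rw [this]
        exact Submodule.smul_mem _ _ (Submodule.subset_span ⟨1, 2, rfl⟩)
  · -- the annihilator is trivial
    rw [eq_bot_iff]
    rintro x hx
    rw [Submodule.mem_inf] at hx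
    obtain ⟨hx1, hx2⟩ := hx
    simp only [Submodule.mem_iInf, LinearMap.mem_ker] at hx2
    have h02 : pairDual F U 3 ![u.coord 0, u.coord 1, u.coord 2] x = 0 := by
      have := hx2 0 2
      simpa [φ] using this
    have h03 : pairDual F U 3 ![u.coord 0, u.coord 1, u.coord 3] x = 0 := by
      have := hx2 0 3
      simpa [φ] using this
    have h13 : pairDual F U 3 ![u.coord 0, u.coord 2, u.coord 3] x = 0 := by
      have h := hx2 1 3
      simp only [φ, Matrix.cons_val_one, Matrix.head_cons, Matrix.cons_val_zero, LinearMap.add_apply] at h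
      rwa [pairDual_zero_of_eq ![u.coord 1, u.coord 3, u.coord 3] (by simp),
        LinearMap.zero_apply, add_zero] at h
    have h12 : pairDual F U 3 ![u.coord 1, u.coord 2, u.coord 3] x = 0 := by
      have h := hx2 1 2
      simp only [φ, Matrix.cons_val_one, Matrix.head_cons, Matrix.cons_val_zero, LinearMap.add_apply] at h
      rw [pairDual_zero_of_eq ![u.coord 0, u.coord 2, u.coord 2] (by simp),
        LinearMap.zero_apply, zero_add] at h
      rw [pairDual_swap, LinearMap.neg_apply, h, neg_zero]
    rw [Submodule.mem_bot]
    rw [proj3 u x hx1]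
    have e0 : (fun i => u.coord (trip 0 i)) = ![u.coord 0, u.coord 1, u.coord 2] := by
      funext i; fin_cases i <;> rfl
    have e1 : (fun i => u.coord (trip 1 i)) = ![u.coord 0, u.coord 1, u.coord 3] := by
      funext i; fin_cases i <;> rfl
    have e2 : (fun i => u.coord (trip 2 i)) = ![u.coord 0, u.coord 2, u.coord 3] := by
      funext i; fin_cases i <;> rfl
    have e3 : (fun i => u.coord (trip 3 i)) = ![u.coord 1, u.coord 2, u.coord 3] := by
      funext i; fin_cases i <;> rfl
    rw [Fin.sum_univ_four, e0, e1, e2, e3, h02, h03, h13, h12]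
    simp
end
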